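/- arXiv:2406.06771 — 7 statements merged into one kernel-verified Lean document; each statement's English description precedes it below -/
import Mathlib

section
/- If μ is a Borel probability measure on S¹ with μ({p}) = 0 for every point p ∈ S¹ (i.e. μ has no atoms), then P_μ(ℓ < 1) = 1/3. -/
open MeasureTheory Real
open scoped ENNReal

noncomputable section

/-- The Euclidean plane `ℝ²`. -/
abbrev Plane : Type := EuclideanSpace ℝ (Fin 2)

/-- The unit circle `S¹ ⊆ ℝ²`. -/
def unitCircle : Set Plane := Metric.sphere 0 1

/- The line through `x` and `y` if `x ≠ y`; the tangent line to the unit circle at `x`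
if `x = y` (for `x` on the unit circle, the tangent line is `{p | ⟪p, x⟫ = 1}`). -/
open Classical in
def chordLine (x y : Plane) : Set Plane :=
  if x = y then {p : Plane | inner ℝ p x = (1 : ℝ)}
  else (affineSpan ℝ ({x, y} : Set Plane) : Set Plane)

/-- `P_μ(ℓ < r)`: the `μ⊗μ⊗μ⊗μ`-measure of the set of quadruples `(x₁,x₂,x₃,x₄)` in `(S¹)⁴`
such that some point `p` with `‖p‖ < r` lies on both `aff(x₁,x₂)` and `aff(x₃,x₄)`. -/
def probLT (μ : Measure unitCircle) (r : ℝ) : ℝ≥0∞ :=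
  (μ.prod (μ.prod (μ.prod μ)))
    {q : unitCircle × unitCircle × unitCircle × unitCircle |
      ∃ p : Plane, ‖p‖ < r ∧ p ∈ chordLine (q.1 : Plane) (q.2.1 : Plane) ∧
        p ∈ chordLine (q.2.2.1 : Plane) (q.2.2.2 : Plane)}

/-! ### Auxiliary geometry -/

/-- Twice the signed area of the triangle `a b c`. -/
def Dt (a b c : Plane) : ℝ := (b 0 - a 0) * (c 1 - a 1) - (b 1 - a 1) * (c 0 - a 0)

lemma planeExt {u v : Plane} (h0 : u 0 = v 0) (h1 : u 1 = v 1) : u = v := by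
  ext i; fin_cases i <;> assumption

lemma norm_sq_plane (x : Plane) : ‖x‖ ^ 2 = x 0 ^ 2 + x 1 ^ 2 := by
  rw [EuclideanSpace.norm_eq, Real.sq_sqrt (by positivity)]
  simp [Fin.sum_univ_two, sq_abs]

lemma mem_line_iff {x y p : Plane} :
    p ∈ affineSpan ℝ ({x, y} : Set Plane) ↔ ∃ t : ℝ, p = x + t • (y - x) := by
  constructor
  · intro h
    have h2 : (p - x) +ᵥ x ∈ affineSpan ℝ ({x, y} : Set Plane) := by simpa using h
    rw [vadd_left_mem_affineSpan_pair] at h2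
    obtain ⟨r, hr⟩ := h2
    refine ⟨r, ?_⟩
    rw [show y -ᵥ x = y - x from rfl] at hr
    rw [hr]; abel
  · rintro ⟨t, rfl⟩
    have := AffineMap.lineMap_mem_affineSpan_pair (k := ℝ) t x y
    simpa [AffineMap.lineMap_apply, add_comm] using this

lemma combo_apply (x y : Plane) (t : ℝ) (i : Fin 2) :
    (x + t • (y - x)) i = x i + t * (y i - x i) := by simp

lemma norm_sq_combo {x y : Plane} (hx : ‖x‖ = 1) (hy : ‖y‖ = 1) (t : ℝ) :
    ‖x + t • (y - x)‖ ^ 2 = 1 + t * (t - 1) * ‖y - x‖ ^ 2 := by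
  have hx' : x 0 ^ 2 + x 1 ^ 2 = 1 := by rw [← norm_sq_plane, hx]; norm_num
  have hy' : y 0 ^ 2 + y 1 ^ 2 = 1 := by rw [← norm_sq_plane, hy]; norm_num
  rw [norm_sq_plane, norm_sq_plane]
  simp only [combo_apply, PiLp.sub_apply]
  linear_combination (1 - t) * hx' + t * hy'

lemma norm_lt_one_iff {x y : Plane} (hx : ‖x‖ = 1) (hy : ‖y‖ = 1) (hxy : x ≠ y) (t : ℝ) :
    ‖x + t • (y - x)‖ < 1 ↔ 0 < t ∧ t < 1 := by
  have hyx : 0 < ‖y - x‖ ^ 2 :=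
    pow_pos (norm_pos_iff.mpr (sub_ne_zero.mpr (Ne.symm hxy))) 2
  have key := norm_sq_combo hx hy t
  constructor
  · intro h
    have h2 : ‖x + t • (y - x)‖ ^ 2 < 1 := by nlinarith [norm_nonneg (x + t • (y - x))]
    rw [key] at h2
    have h4 : t * (t - 1) < 0 := by nlinarith
    constructor <;> nlinarith [sq_nonneg t, sq_nonneg (t - 1)]
  · rintro ⟨h1, h2⟩
    have h3 : ‖x + t • (y - x)‖ ^ 2 < 1 := by
      have h4 : t * (t - 1) < 0 := mul_neg_of_pos_of_neg h1 (by linarith)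
      rw [key]; nlinarith
    nlinarith [norm_nonneg (x + t • (y - x))]

lemma ends_of_norm_eq_one {x y : Plane} (hx : ‖x‖ = 1) (hy : ‖y‖ = 1) (hxy : x ≠ y) {t : ℝ}
    (h : ‖x + t • (y - x)‖ = 1) : t = 0 ∨ t = 1 := by
  have hyx : 0 < ‖y - x‖ ^ 2 :=
    pow_pos (norm_pos_iff.mpr (sub_ne_zero.mpr (Ne.symm hxy))) 2
  have key := norm_sq_combo hx hy t
  rw [h] at key
  have h5 : t * (t - 1) * ‖y - x‖ ^ 2 = 0 := by linarith
  have h2 : t * (t - 1) = 0 := by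
    rcases mul_eq_zero.mp h5 with h6 | h6
    · exact h6
    · exact absurd h6 (by linarith)
  rcases mul_eq_zero.mp h2 with h3 | h3
  · exact Or.inl h3
  · exact Or.inr (by linarith)

lemma Dt_combo (a b x y : Plane) (t : ℝ) :
    Dt a b (x + t • (y - x)) = Dt a b x + t * (Dt a b y - Dt a b x) := by
  simp only [Dt, combo_apply]; ring

lemma Dt_self_left (a b : Plane) : Dt a b a = 0 := by simp only [Dt]; ring

lemma Dt_self_right (a b : Plane) : Dt a b b = 0 := by simp only [Dt]; ring

lemma Dt_cyc (a b c : Plane) : Dt b c a = Dt a b c := by simp only [Dt]; ring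

lemma Dt_swap (a b c : Plane) : Dt a c b = - Dt a b c := by simp only [Dt]; ring

lemma Dt_cocycle (a b c d : Plane) : Dt a b c - Dt a b d + Dt a c d - Dt b c d = 0 := by
  simp only [Dt]; ring

lemma line_of_Dt_zero {a b w : Plane} (hab : a ≠ b) (h : Dt a b w = 0) :
    ∃ t : ℝ, w = a + t • (b - a) := by
  have hne : b 0 - a 0 ≠ 0 ∨ b 1 - a 1 ≠ 0 := by
    by_contra hc
    push_neg at hc
    exact hab (planeExt (by linarith [hc.1]) (by linarith [hc.2]))
  simp only [Dt] at h
  rcases hne with h0 | h1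
  · refine ⟨(w 0 - a 0) / (b 0 - a 0), planeExt ?_ ?_⟩ <;> rw [combo_apply]
    · field_simp
      ring
    · field_simp
      linear_combination h
  · refine ⟨(w 1 - a 1) / (b 1 - a 1), planeExt ?_ ?_⟩ <;> rw [combo_apply]
    · field_simp
      linear_combination -h
    · field_simp
      ring

lemma Dt_ne_zero {a b w : Plane} (ha : ‖a‖ = 1) (hb : ‖b‖ = 1) (hw : ‖w‖ = 1)
    (hab : a ≠ b) (hwa : w ≠ a) (hwb : w ≠ b) : Dt a b w ≠ 0 := by
  intro h
  obtain ⟨t, rfl⟩ := line_of_Dt_zero hab h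
  rcases ends_of_norm_eq_one ha hb hab hw with h3 | h3
  · exact hwa (by rw [h3]; simp)
  · refine hwb ?_
    rw [h3]
    have : a + (1 : ℝ) • (b - a) = b := by simp
    rw [this]

lemma interp_root {u v : ℝ} (h : u * v < 0) : ∃ t : ℝ, 0 < t ∧ t < 1 ∧ u + t * (v - u) = 0 := by
  have hu : u ≠ 0 := fun h0 => by rw [h0] at h; simp at h
  have hv : v ≠ 0 := fun h0 => by rw [h0] at h; simp at h
  have hd : u - v ≠ 0 := by
    rcases lt_or_gt_of_ne hu with h1 | h1
    · have : 0 < v := by nlinarith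
      intro hc; nlinarith
    · have : v < 0 := by nlinarith
      intro hc; nlinarith
  refine ⟨u / (u - v), ?_, ?_, by field_simp; ring⟩
  · rw [div_pos_iff]
    rcases lt_or_gt_of_ne hu with h1 | h1
    · right; constructor
      · exact h1
      · have : 0 < v := by nlinarith
        linarith
    · left; constructor
      · exact h1
      · have : v < 0 := by nlinarith
        linarith
  · rw [div_lt_one_iff]
    rcases lt_or_gt_of_ne hu with h1 | h1
    · right; right
      have : 0 < v := by nlinarith
      constructor <;> linarith
    · left
      have : v < 0 := by nlinarith
      constructor <;> linarith

/-- The central geometric equivalence: for four distinct points on the unit circle, the chords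
`ab` and `cd` meet inside the open unit disc iff `c` and `d` lie strictly on opposite sides of
the line `ab`. -/
lemma crossD_iff {a b c d : Plane} (ha : ‖a‖ = 1) (hb : ‖b‖ = 1) (hc : ‖c‖ = 1) (hd : ‖d‖ = 1)
    (hab : a ≠ b) (hcd : c ≠ d) (hca : c ≠ a) (hcb : c ≠ b) (hda : d ≠ a) (hdb : d ≠ b) :
    (∃ p : Plane, ‖p‖ < 1 ∧ p ∈ chordLine a b ∧ p ∈ chordLine c d) ↔
      Dt a b c * Dt a b d < 0 := by
  have hfc : Dt a b c ≠ 0 := Dt_ne_zero ha hb hc hab hca hcb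
  have hfd : Dt a b d ≠ 0 := Dt_ne_zero ha hb hd hab hda hdb
  constructor
  · rintro ⟨p, hp, h1, h2⟩
    rw [chordLine, if_neg hab] at h1
    rw [chordLine, if_neg hcd] at h2
    obtain ⟨s, hs⟩ := mem_line_iff.mp h1
    obtain ⟨t, ht⟩ := mem_line_iff.mp h2
    have hfp : Dt a b p = 0 := by
      rw [hs, Dt_combo, Dt_self_left, Dt_self_right]; ring
    have ht01 : 0 < t ∧ t < 1 := by
      rw [← norm_lt_one_iff hc hd hcd t, ← ht]; exact hp
    have heq : Dt a b c + t * (Dt a b d - Dt a b c) = 0 := by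
      rw [← Dt_combo, ← ht, hfp]
    have hfd2 : 0 < Dt a b d * Dt a b d := mul_self_pos.mpr hfd
    have key : (1 - t) * (Dt a b c * Dt a b d) = -(t * (Dt a b d * Dt a b d)) := by
      linear_combination Dt a b d * heq
    nlinarith [mul_pos ht01.1 hfd2]
  · intro hprod
    obtain ⟨t, ht0, ht1, hroot⟩ := interp_root hprod
    have hcd' : c ≠ d := hcd
    refine ⟨c + t • (d - c), ?_, ?_, ?_⟩
    · rw [norm_lt_one_iff hc hd hcd t]; exact ⟨ht0, ht1⟩
    · rw [chordLine, if_neg hab]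
      have hz : Dt a b (c + t • (d - c)) = 0 := by rw [Dt_combo]; exact hroot
      obtain ⟨u, hu⟩ := line_of_Dt_zero hab hz
      exact mem_line_iff.mpr ⟨u, hu⟩
    · rw [chordLine, if_neg hcd]
      exact mem_line_iff.mpr ⟨t, rfl⟩

/-- From a crossing of chords `ab` and `cd`, we also get the sign condition with the roles of the
pairs exchanged. -/
lemma cross_prods {a b c d : Plane} (ha : ‖a‖ = 1) (hb : ‖b‖ = 1) (hc : ‖c‖ = 1) (hd : ‖d‖ = 1)
    (hab : a ≠ b) (hcd : c ≠ d) (hca : c ≠ a) (hcb : c ≠ b) (hda : d ≠ a) (hdb : d ≠ b)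
    (h : Dt a b c * Dt a b d < 0) : Dt c d a * Dt c d b < 0 := by
  obtain ⟨p, hp, h1, h2⟩ := (crossD_iff ha hb hc hd hab hcd hca hcb hda hdb).mpr h
  exact (crossD_iff hc hd ha hb hcd hab hca.symm hda.symm hcb.symm hdb.symm).mp ⟨p, hp, h2, h1⟩

lemma sign_cancel {x y z : ℝ} (h1 : 0 < x * z) (h2 : z * y < 0) : x * y < 0 := by
  have hz : z ≠ 0 := by rintro rfl; simp at h1
  have h3 : 0 < z * z := mul_self_pos.mpr hz
  nlinarith [mul_pos h1 (neg_pos.mpr h2)]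

lemma sign_cancel' {x y z : ℝ} (h1 : 0 < x * z) (h2 : 0 < z * y) : 0 < x * y := by
  have hz : z ≠ 0 := by rintro rfl; simp at h1
  have h3 : 0 < z * z := mul_self_pos.mpr hz
  nlinarith [mul_pos h1 h2]

lemma sign_excl {a b c d : ℝ} (hab : a * b < 0) (had : a * d < 0) (hcb : c * b < 0)
    (hcd : c * d < 0) (hid : a - b + c - d = 0) : False := by
  have e : (a + c) * (a + c) = a * b + a * d + c * b + c * d := by
    linear_combination (a + c) * hid
  nlinarith [mul_self_nonneg (a + c)]

/-! ### Auxiliary measure theory -/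

abbrev Quad : Type := unitCircle × unitCircle × unitCircle × unitCircle

instance : BorelSpace Quad := Prod.borelSpace

def quadMeasure (μ : Measure unitCircle) : Measure Quad := μ.prod (μ.prod (μ.prod μ))

def c1 (q : Quad) : Plane := q.1
def c2 (q : Quad) : Plane := q.2.1
def c3 (q : Quad) : Plane := q.2.2.1
def c4 (q : Quad) : Plane := q.2.2.2

def goodQ : Set Quad :=
  {q | c1 q ≠ c2 q ∧ c1 q ≠ c3 q ∧ c1 q ≠ c4 q ∧ c2 q ≠ c3 q ∧ c2 q ≠ c4 q ∧ c3 q ≠ c4 q}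

def EA : Set Quad := {q | Dt (c1 q) (c2 q) (c3 q) * Dt (c1 q) (c2 q) (c4 q) < 0} ∩ goodQ
def EB : Set Quad := {q | Dt (c1 q) (c3 q) (c2 q) * Dt (c1 q) (c3 q) (c4 q) < 0} ∩ goodQ
def EC : Set Quad := {q | Dt (c1 q) (c4 q) (c3 q) * Dt (c1 q) (c4 q) (c2 q) < 0} ∩ goodQ

lemma cont_c1 : Continuous c1 := continuous_subtype_val.comp continuous_fst
lemma cont_c2 : Continuous c2 := continuous_subtype_val.comp (continuous_fst.comp continuous_snd)
lemma cont_c3 : Continuous c3 :=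
  continuous_subtype_val.comp (continuous_fst.comp (continuous_snd.comp continuous_snd))
lemma cont_c4 : Continuous c4 :=
  continuous_subtype_val.comp (continuous_snd.comp (continuous_snd.comp continuous_snd))

lemma cont_Dt {f g h : Quad → Plane} (hf : Continuous f) (hg : Continuous g)
    (hh : Continuous h) : Continuous fun q => Dt (f q) (g q) (h q) := by
  have p0 : Continuous fun x : Plane => x 0 := (EuclideanSpace.proj (0 : Fin 2)).continuous
  have p1 : Continuous fun x : Plane => x 1 := (EuclideanSpace.proj (1 : Fin 2)).continuous
  simp only [Dt]
  exact (((p0.comp hg).sub (p0.comp hf)).mul ((p1.comp hh).sub (p1.comp hf))).sub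
    (((p1.comp hg).sub (p1.comp hf)).mul ((p0.comp hh).sub (p0.comp hf)))

lemma measGood : MeasurableSet goodQ := by
  have h : ∀ f g : Quad → Plane, Continuous f → Continuous g →
      MeasurableSet {q : Quad | f q ≠ g q} := by
    intro f g hf hg
    have : {q : Quad | f q ≠ g q} = {q : Quad | f q = g q}ᶜ := rfl
    rw [this]
    exact ((isClosed_eq hf hg).measurableSet).compl
  have e : goodQ = {q | c1 q ≠ c2 q} ∩ ({q | c1 q ≠ c3 q} ∩ ({q | c1 q ≠ c4 q} ∩
      ({q | c2 q ≠ c3 q} ∩ ({q | c2 q ≠ c4 q} ∩ {q | c3 q ≠ c4 q})))) := by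
    ext q; simp [goodQ, Set.mem_setOf_eq, Set.mem_inter_iff, and_assoc]
  rw [e]
  exact (h _ _ cont_c1 cont_c2).inter ((h _ _ cont_c1 cont_c3).inter
    ((h _ _ cont_c1 cont_c4).inter ((h _ _ cont_c2 cont_c3).inter
    ((h _ _ cont_c2 cont_c4).inter (h _ _ cont_c3 cont_c4)))))

lemma measEA : MeasurableSet EA :=
  (measurableSet_lt ((cont_Dt cont_c1 cont_c2 cont_c3).mul
    (cont_Dt cont_c1 cont_c2 cont_c4)).measurable measurable_const).inter measGood

lemma measEB : MeasurableSet EB :=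
  (measurableSet_lt ((cont_Dt cont_c1 cont_c3 cont_c2).mul
    (cont_Dt cont_c1 cont_c3 cont_c4)).measurable measurable_const).inter measGood

lemma measEC : MeasurableSet EC :=
  (measurableSet_lt ((cont_Dt cont_c1 cont_c4 cont_c3).mul
    (cont_Dt cont_c1 cont_c4 cont_c2)).measurable measurable_const).inter measGood

/-! ### Main theorem -/

/-- **Continuous measures are extremisers.** If `μ` is a Borel probability measure on the unit
circle with no atoms, then `P_μ(ℓ < 1) = 1/3`. -/
theorem probLT_one_eq_third_of_no_atoms (μ : Measure unitCircle) [IsProbabilityMeasure μ]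
    (hμ : ∀ p : unitCircle, μ {p} = 0) :
    probLT μ 1 = 1 / 3 := by
  classical
  haveI sf3 : SFinite (μ.prod (μ.prod μ)) := Measure.prod.instSFinite
  haveI sf4 : SFinite (μ.prod (μ.prod (μ.prod μ))) := Measure.prod.instSFinite
  haveI p2 : IsProbabilityMeasure (μ.prod μ) := Measure.prod.instIsProbabilityMeasure μ μ
  haveI p3 : IsProbabilityMeasure (μ.prod (μ.prod μ)) :=
    Measure.prod.instIsProbabilityMeasure μ (μ.prod μ)
  have hnorm : ∀ u : unitCircle, ‖(u : Plane)‖ = 1 := fun u =>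
    mem_sphere_zero_iff_norm.mp u.2
  haveI hprobν : IsProbabilityMeasure (quadMeasure μ) :=
    Measure.prod.instIsProbabilityMeasure μ (μ.prod (μ.prod μ))
  -- `ν`-a.e., the four points are pairwise distinct.
  have hdiagMeas : MeasurableSet {p : unitCircle × unitCircle | p.1 = p.2} :=
    (isClosed_eq continuous_fst continuous_snd).measurableSet
  have hdiag : (μ.prod μ) {p : unitCircle × unitCircle | p.1 = p.2} = 0 := by
    rw [Measure.prod_apply hdiagMeas]
    have hpre : ∀ x : unitCircle,
        (Prod.mk x ⁻¹' {p : unitCircle × unitCircle | p.1 = p.2}) = {x} := by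
      intro x; ext y
      simp [eq_comm]
    simp only [hpre, hμ]
    simp
  have pairNull : ∀ prj : Quad → unitCircle × unitCircle,
      MeasurePreserving prj (quadMeasure μ) (μ.prod μ) →
      quadMeasure μ {q | (prj q).1 = (prj q).2} = 0 := by
    intro prj hprj
    have h1 : {q | (prj q).1 = (prj q).2} = prj ⁻¹' {p : unitCircle × unitCircle | p.1 = p.2} :=
      rfl
    rw [h1, hprj.measure_preimage hdiagMeas.nullMeasurableSet, hdiag]
  -- measure preserving projections
  have mpfst2 : MeasurePreserving (Prod.fst : unitCircle × unitCircle → unitCircle)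
      (μ.prod μ) μ := ⟨measurable_fst, by simp⟩
  have mpsnd2 : MeasurePreserving (Prod.snd : unitCircle × unitCircle → unitCircle)
      (μ.prod μ) μ := ⟨measurable_snd, by simp⟩
  have mpfst3 : MeasurePreserving
      (Prod.fst : unitCircle × unitCircle × unitCircle → unitCircle)
      (μ.prod (μ.prod μ)) μ := ⟨measurable_fst, by simp⟩
  have mpsnd3 : MeasurePreserving
      (Prod.snd : unitCircle × unitCircle × unitCircle → unitCircle × unitCircle)
      (μ.prod (μ.prod μ)) (μ.prod μ) := ⟨measurable_snd, by simp⟩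
  have mpsnd4 : MeasurePreserving (Prod.snd : Quad → unitCircle × unitCircle × unitCircle)
      (quadMeasure μ) (μ.prod (μ.prod μ)) := ⟨measurable_snd, by simp [quadMeasure]⟩
  have mp12 : MeasurePreserving (fun q : Quad => (q.1, q.2.1)) (quadMeasure μ) (μ.prod μ) :=
    (MeasurePreserving.id μ).prod mpfst3
  have mp13 : MeasurePreserving (fun q : Quad => (q.1, q.2.2.1)) (quadMeasure μ) (μ.prod μ) :=
    (MeasurePreserving.id μ).prod (mpfst2.comp mpsnd3)
  have mp14 : MeasurePreserving (fun q : Quad => (q.1, q.2.2.2)) (quadMeasure μ) (μ.prod μ) :=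
    (MeasurePreserving.id μ).prod (mpsnd2.comp mpsnd3)
  have mp23 : MeasurePreserving (fun q : Quad => (q.2.1, q.2.2.1)) (quadMeasure μ) (μ.prod μ) :=
    ((MeasurePreserving.id μ).prod mpfst2).comp mpsnd4
  have mp24 : MeasurePreserving (fun q : Quad => (q.2.1, q.2.2.2)) (quadMeasure μ) (μ.prod μ) :=
    ((MeasurePreserving.id μ).prod mpsnd2).comp mpsnd4
  have mp34 : MeasurePreserving (fun q : Quad => (q.2.2.1, q.2.2.2))
      (quadMeasure μ) (μ.prod μ) := mpsnd3.comp mpsnd4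
  have hgoodc : quadMeasure μ goodQᶜ = 0 := by
    have hsub : goodQᶜ ⊆ {q : Quad | q.1 = q.2.1} ∪ ({q : Quad | q.1 = q.2.2.1} ∪
        ({q : Quad | q.1 = q.2.2.2} ∪ ({q : Quad | q.2.1 = q.2.2.1} ∪
        ({q : Quad | q.2.1 = q.2.2.2} ∪ {q : Quad | q.2.2.1 = q.2.2.2})))) := by
      intro q hq
      simp only [goodQ, c1, c2, c3, c4, Set.mem_compl_iff, Set.mem_setOf_eq, not_and_or,
        not_not, not_ne_iff] at hq
      simp only [Set.mem_union, Set.mem_setOf_eq]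
      rcases hq with h | h | h | h | h | h
      · exact Or.inl (Subtype.coe_injective h)
      · exact Or.inr (Or.inl (Subtype.coe_injective h))
      · exact Or.inr (Or.inr (Or.inl (Subtype.coe_injective h)))
      · exact Or.inr (Or.inr (Or.inr (Or.inl (Subtype.coe_injective h))))
      · exact Or.inr (Or.inr (Or.inr (Or.inr (Or.inl (Subtype.coe_injective h)))))
      · exact Or.inr (Or.inr (Or.inr (Or.inr (Or.inr (Subtype.coe_injective h)))))
    refine measure_mono_null hsub ?_
    refine measure_union_null (pairNull _ mp12) (measure_union_null (pairNull _ mp13)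
      (measure_union_null (pairNull _ mp14) (measure_union_null (pairNull _ mp23)
      (measure_union_null (pairNull _ mp24) (pairNull _ mp34)))))
  -- the permutations
  have inner23 : MeasurePreserving
      (fun r : unitCircle × unitCircle × unitCircle => (r.2.1, (r.1, r.2.2)))
      (μ.prod (μ.prod μ)) (μ.prod (μ.prod μ)) := by
    have h1 := (MeasureTheory.measurePreserving_prodAssoc μ μ μ).symm MeasurableEquiv.prodAssoc
    have h2 : MeasurePreserving
        (Prod.map (Prod.swap : unitCircle × unitCircle → unitCircle × unitCircle)
          (id : unitCircle → unitCircle)) ((μ.prod μ).prod μ) ((μ.prod μ).prod μ) :=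
      MeasurePreserving.prod Measure.measurePreserving_swap (MeasurePreserving.id μ)
    exact (MeasureTheory.measurePreserving_prodAssoc μ μ μ).comp (h2.comp h1)
  have σ23 : MeasurePreserving (fun q : Quad => (q.1, (q.2.2.1, (q.2.1, q.2.2.2))))
      (quadMeasure μ) (quadMeasure μ) := (MeasurePreserving.id μ).prod inner23
  have innerswap : MeasurePreserving
      (fun r : unitCircle × unitCircle × unitCircle => (r.1, (r.2.2, r.2.1)))
      (μ.prod (μ.prod μ)) (μ.prod (μ.prod μ)) :=
    (MeasurePreserving.id μ).prod Measure.measurePreserving_swap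
  have inner24 : MeasurePreserving
      (fun r : unitCircle × unitCircle × unitCircle => (r.2.2, (r.2.1, r.1)))
      (μ.prod (μ.prod μ)) (μ.prod (μ.prod μ)) :=
    inner23.comp (innerswap.comp inner23)
  have σ24 : MeasurePreserving (fun q : Quad => (q.1, (q.2.2.2, (q.2.2.1, q.2.1))))
      (quadMeasure μ) (quadMeasure μ) := (MeasurePreserving.id μ).prod inner24
  -- equal measures
  have hBpre : EB = (fun q : Quad => (q.1, (q.2.2.1, (q.2.1, q.2.2.2)))) ⁻¹' EA := by
    ext q
    simp only [EA, EB, goodQ, Set.mem_inter_iff, Set.mem_setOf_eq, Set.mem_preimage,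
      c1, c2, c3, c4]
    constructor
    · rintro ⟨h, g1, g2, g3, g4, g5, g6⟩
      exact ⟨h, g2, g1, g3, g4.symm, g6, g5⟩
    · rintro ⟨h, g1, g2, g3, g4, g5, g6⟩
      exact ⟨h, g2, g1, g3, g4.symm, g6, g5⟩
  have hCpre : EC = (fun q : Quad => (q.1, (q.2.2.2, (q.2.2.1, q.2.1)))) ⁻¹' EA := by
    ext q
    simp only [EA, EC, goodQ, Set.mem_inter_iff, Set.mem_setOf_eq, Set.mem_preimage,
      c1, c2, c3, c4]
    constructor
    · rintro ⟨h, g1, g2, g3, g4, g5, g6⟩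
      exact ⟨h, g3, g2, g1, g6.symm, g5.symm, g4.symm⟩
    · rintro ⟨h, g1, g2, g3, g4, g5, g6⟩
      exact ⟨h, g3, g2, g1, g6.symm, g5.symm, g4.symm⟩
  have hνB : quadMeasure μ EB = quadMeasure μ EA := by
    rw [hBpre, σ23.measure_preimage measEA.nullMeasurableSet]
  have hνC : quadMeasure μ EC = quadMeasure μ EA := by
    rw [hCpre, σ24.measure_preimage measEA.nullMeasurableSet]
  -- cover
  have hcover : goodQ ⊆ EA ∪ EB ∪ EC := by
    rintro q ⟨g1, g2, g3, g4, g5, g6⟩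
    have hA : Dt (c1 q) (c2 q) (c3 q) ≠ 0 :=
      Dt_ne_zero (hnorm _) (hnorm _) (hnorm _) g1 g2.symm g4.symm
    have hB : Dt (c1 q) (c2 q) (c4 q) ≠ 0 :=
      Dt_ne_zero (hnorm _) (hnorm _) (hnorm _) g1 g3.symm g5.symm
    have hC : Dt (c1 q) (c3 q) (c4 q) ≠ 0 :=
      Dt_ne_zero (hnorm _) (hnorm _) (hnorm _) g2 g3.symm g6.symm
    set A := Dt (c1 q) (c2 q) (c3 q) with hAdef
    set B := Dt (c1 q) (c2 q) (c4 q) with hBdef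
    set C := Dt (c1 q) (c3 q) (c4 q) with hCdef
    by_cases h1 : A * B < 0
    · exact Or.inl (Or.inl ⟨h1, g1, g2, g3, g4, g5, g6⟩)
    by_cases h2 : B * C < 0
    · refine Or.inr ⟨?_, g1, g2, g3, g4, g5, g6⟩
      show Dt (c1 q) (c4 q) (c3 q) * Dt (c1 q) (c4 q) (c2 q) < 0
      have e1 : Dt (c1 q) (c4 q) (c3 q) = - C := by rw [hCdef, Dt_swap]
      have e2 : Dt (c1 q) (c4 q) (c2 q) = - B := by rw [hBdef, Dt_swap]
      rw [e1, e2, neg_mul_neg, mul_comm]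
      exact h2
    · refine Or.inl (Or.inr ⟨?_, g1, g2, g3, g4, g5, g6⟩)
      show Dt (c1 q) (c3 q) (c2 q) * Dt (c1 q) (c3 q) (c4 q) < 0
      have e1 : Dt (c1 q) (c3 q) (c2 q) = - A := by rw [hAdef, Dt_swap]
      have hAB : 0 < A * B := (lt_or_gt_of_ne (mul_ne_zero hA hB)).resolve_left h1
      have hBC : 0 < B * C := (lt_or_gt_of_ne (mul_ne_zero hB hC)).resolve_left h2
      have hAC : 0 < A * C := sign_cancel' (mul_comm B A ▸ hAB) hBC
      rw [e1, ← hCdef, neg_mul]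
      linarith
  -- the three events, together with full sign data from the geometry
  have geomA : ∀ q ∈ EA, Dt (c1 q) (c2 q) (c3 q) * Dt (c1 q) (c2 q) (c4 q) < 0 ∧
      Dt (c1 q) (c3 q) (c4 q) * Dt (c2 q) (c3 q) (c4 q) < 0 := by
    rintro q ⟨h, g1, g2, g3, g4, g5, g6⟩
    simp only [Set.mem_setOf_eq] at h
    refine ⟨h, ?_⟩
    have h2 := cross_prods (hnorm _) (hnorm _) (hnorm _) (hnorm _)
      g1 g6 g2.symm g4.symm g3.symm g5.symm h
    have e : Dt (c1 q) (c3 q) (c4 q) * Dt (c2 q) (c3 q) (c4 q)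
        = Dt (c3 q) (c4 q) (c1 q) * Dt (c3 q) (c4 q) (c2 q) := by simp only [Dt]; ring
    rw [e]; exact h2
  have geomB : ∀ q ∈ EB, 0 < Dt (c1 q) (c2 q) (c3 q) * Dt (c1 q) (c3 q) (c4 q) ∧
      0 < Dt (c1 q) (c2 q) (c4 q) * Dt (c2 q) (c3 q) (c4 q) := by
    rintro q ⟨h, g1, g2, g3, g4, g5, g6⟩
    simp only [Set.mem_setOf_eq] at h
    constructor
    · have e : Dt (c1 q) (c3 q) (c2 q) * Dt (c1 q) (c3 q) (c4 q)
          = -(Dt (c1 q) (c2 q) (c3 q) * Dt (c1 q) (c3 q) (c4 q)) := by simp only [Dt]; ring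
      rw [e] at h
      linarith
    · have h2 : Dt (c2 q) (c4 q) (c1 q) * Dt (c2 q) (c4 q) (c3 q) < 0 :=
        cross_prods (hnorm _) (hnorm _) (hnorm _) (hnorm _)
          g2 g5 g1.symm g4 g3.symm g6.symm h
      have e : Dt (c2 q) (c4 q) (c1 q) * Dt (c2 q) (c4 q) (c3 q)
          = -(Dt (c1 q) (c2 q) (c4 q) * Dt (c2 q) (c3 q) (c4 q)) := by simp only [Dt]; ring
      rw [e] at h2
      linarith
  have geomC : ∀ q ∈ EC, Dt (c1 q) (c2 q) (c4 q) * Dt (c1 q) (c3 q) (c4 q) < 0 ∧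
      Dt (c1 q) (c2 q) (c3 q) * Dt (c2 q) (c3 q) (c4 q) < 0 := by
    rintro q ⟨h, g1, g2, g3, g4, g5, g6⟩
    simp only [Set.mem_setOf_eq] at h
    constructor
    · have e : Dt (c1 q) (c4 q) (c3 q) * Dt (c1 q) (c4 q) (c2 q)
          = Dt (c1 q) (c2 q) (c4 q) * Dt (c1 q) (c3 q) (c4 q) := by simp only [Dt]; ring
      rw [e] at h
      exact h
    · have h2 : Dt (c3 q) (c2 q) (c1 q) * Dt (c3 q) (c2 q) (c4 q) < 0 :=
        cross_prods (hnorm _) (hnorm _) (hnorm _) (hnorm _)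
          g3 g4.symm g2.symm g6 g1.symm g5 h
      have e : Dt (c3 q) (c2 q) (c1 q) * Dt (c3 q) (c2 q) (c4 q)
          = Dt (c1 q) (c2 q) (c3 q) * Dt (c2 q) (c3 q) (c4 q) := by simp only [Dt]; ring
      rw [e] at h2
      exact h2
  -- pairwise disjointness
  have hAB : EA ∩ EB = ∅ := by
    rw [Set.eq_empty_iff_forall_notMem]
    rintro q ⟨hqa, hqb⟩
    obtain ⟨h1, h2⟩ := geomA q hqa
    obtain ⟨h3, h4⟩ := geomB q hqb
    set A := Dt (c1 q) (c2 q) (c3 q)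
    set B := Dt (c1 q) (c2 q) (c4 q)
    set C := Dt (c1 q) (c3 q) (c4 q)
    set D := Dt (c2 q) (c3 q) (c4 q)
    -- h1 : A*B<0, h2 : C*D<0, h3 : 0<A*C, h4 : 0<B*D
    have had : A * D < 0 := sign_cancel h3 h2
    have hcb : C * B < 0 := sign_cancel (mul_comm A C ▸ h3) h1
    exact sign_excl h1 had hcb h2 (Dt_cocycle (c1 q) (c2 q) (c3 q) (c4 q))
  have hAC : EA ∩ EC = ∅ := by
    rw [Set.eq_empty_iff_forall_notMem]
    rintro q ⟨hqa, hqc⟩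
    obtain ⟨h1, h2⟩ := geomA q hqa
    obtain ⟨h3, h4⟩ := geomC q hqc
    set A := Dt (c1 q) (c2 q) (c3 q)
    set B := Dt (c1 q) (c2 q) (c4 q)
    set C := Dt (c1 q) (c3 q) (c4 q)
    set D := Dt (c2 q) (c3 q) (c4 q)
    -- h1 : A*B<0, h2 : C*D<0, h3 : B*C<0, h4 : A*D<0
    exact sign_excl h1 h4 (mul_comm B C ▸ h3) h2 (Dt_cocycle (c1 q) (c2 q) (c3 q) (c4 q))
  have hBC : EB ∩ EC = ∅ := by
    rw [Set.eq_empty_iff_forall_notMem]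
    rintro q ⟨hqb, hqc⟩
    obtain ⟨h1, h2⟩ := geomB q hqb
    obtain ⟨h3, h4⟩ := geomC q hqc
    set A := Dt (c1 q) (c2 q) (c3 q)
    set B := Dt (c1 q) (c2 q) (c4 q)
    set C := Dt (c1 q) (c3 q) (c4 q)
    set D := Dt (c2 q) (c3 q) (c4 q)
    -- h1 : 0<A*C, h2 : 0<B*D, h3 : B*C<0, h4 : A*D<0
    have hab : A * B < 0 := sign_cancel h1 (mul_comm B C ▸ h3)
    have hcd : C * D < 0 := sign_cancel (mul_comm A C ▸ h1) h4
    have hcb : C * B < 0 := mul_comm B C ▸ h3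
    exact sign_excl hab h4 hcb hcd (Dt_cocycle (c1 q) (c2 q) (c3 q) (c4 q))
  -- measure of goodQ is 1
  have hgood1 : quadMeasure μ goodQ = 1 := by
    refine le_antisymm prob_le_one ?_
    calc (1 : ℝ≥0∞) = quadMeasure μ Set.univ := measure_univ.symm
      _ = quadMeasure μ (goodQ ∪ goodQᶜ) := by rw [Set.union_compl_self]
      _ ≤ quadMeasure μ goodQ + quadMeasure μ goodQᶜ := measure_union_le _ _
      _ = quadMeasure μ goodQ := by rw [hgoodc, add_zero]
  -- union of the three events is goodQ
  have hunion : EA ∪ EB ∪ EC = goodQ := by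
    apply Set.Subset.antisymm
    · refine Set.union_subset (Set.union_subset ?_ ?_) ?_ <;> exact Set.inter_subset_right
    · exact hcover
  have hsum : quadMeasure μ EA + quadMeasure μ EB + quadMeasure μ EC = 1 := by
    have d1 : Disjoint EA EB := Set.disjoint_iff_inter_eq_empty.mpr hAB
    have d2 : Disjoint (EA ∪ EB) EC := by
      rw [Set.disjoint_union_left]
      exact ⟨Set.disjoint_iff_inter_eq_empty.mpr hAC, Set.disjoint_iff_inter_eq_empty.mpr hBC⟩
    calc quadMeasure μ EA + quadMeasure μ EB + quadMeasure μ EC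
        = quadMeasure μ (EA ∪ EB) + quadMeasure μ EC := by rw [measure_union d1 measEB]
      _ = quadMeasure μ (EA ∪ EB ∪ EC) := (measure_union d2 measEC).symm
      _ = 1 := by rw [hunion, hgood1]
  -- identify probLT with the measure of EA
  have hprob : probLT μ 1 = quadMeasure μ EA := by
    have hS : probLT μ 1 = quadMeasure μ
        {q : Quad | ∃ p : Plane, ‖p‖ < 1 ∧ p ∈ chordLine (c1 q) (c2 q) ∧
          p ∈ chordLine (c3 q) (c4 q)} := rfl
    rw [hS]
    set S : Set Quad := {q : Quad | ∃ p : Plane, ‖p‖ < 1 ∧ p ∈ chordLine (c1 q) (c2 q) ∧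
      p ∈ chordLine (c3 q) (c4 q)} with hSdef
    have hSE : S ∩ goodQ = EA := by
      ext q
      constructor
      · rintro ⟨hs, g⟩
        obtain ⟨g1, g2, g3, g4, g5, g6⟩ := g
        refine ⟨?_, g1, g2, g3, g4, g5, g6⟩
        exact (crossD_iff (hnorm _) (hnorm _) (hnorm _) (hnorm _)
          g1 g6 g2.symm g4.symm g3.symm g5.symm).mp hs
      · rintro ⟨h, g1, g2, g3, g4, g5, g6⟩
        refine ⟨?_, g1, g2, g3, g4, g5, g6⟩
        exact (crossD_iff (hnorm _) (hnorm _) (hnorm _) (hnorm _)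
          g1 g6 g2.symm g4.symm g3.symm g5.symm).mpr h
    refine le_antisymm ?_ ?_
    · calc quadMeasure μ S ≤ quadMeasure μ ((S ∩ goodQ) ∪ goodQᶜ) := by
            refine measure_mono fun q hq => ?_
            by_cases h : q ∈ goodQ
            · exact Or.inl ⟨hq, h⟩
            · exact Or.inr h
        _ ≤ quadMeasure μ (S ∩ goodQ) + quadMeasure μ goodQᶜ := measure_union_le _ _
        _ = quadMeasure μ EA := by rw [hSE, hgoodc, add_zero]
    · rw [← hSE]
      exact measure_mono Set.inter_subset_left
  rw [hprob]
  rw [ENNReal.eq_div_iff (by norm_num : (3 : ℝ≥0∞) ≠ 0) (by norm_num : (3 : ℝ≥0∞) ≠ ⊤)]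
  calc (3 : ℝ≥0∞) * quadMeasure μ EA
      = quadMeasure μ EA + quadMeasure μ EB + quadMeasure μ EC := by rw [hνB, hνC]; ring
    _ = 1 := hsum

end
end

section
/- For every integer n ≥ 1 and all real numbers α₁, …, αₙ ∈ (0,1) with Σ_{i=1}^n αᵢ = 1, one has 2 Σᵢ αᵢ² − (8/3) Σᵢ αᵢ³ − 3 (Σᵢ αᵢ²)² + 4 Σᵢ αᵢ⁴ ≥ (1/100) · Σᵢ αᵢ². -/
private lemma simplex_keyA (t r2 : ℝ) (h0 : 0 < t) (h1 : t ≤ 2/3) (hr0 : 0 ≤ r2)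
    (hrt : r2 ≤ t*(1-t)) (hru : r2 ≤ (1-t)^2) :
    0 ≤ t^4 - 8/3*t^3 + 199/100*t^2 + r2*(139/90 - 6*t^2) - 3*r2^2 := by
  rcases le_total t (1/2) with h | h
  · nlinarith [mul_nonneg hr0 (sub_nonneg.mpr hrt), sq_nonneg (t - 1/2), sq_nonneg t,
      mul_nonneg (mul_nonneg hr0 hr0) h0.le, sq_nonneg (r2 - t*(1-t)), mul_nonneg hr0 h0.le]
  · nlinarith [mul_nonneg hr0 (sub_nonneg.mpr hru), sq_nonneg (t - 1/2), sq_nonneg t,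
      mul_nonneg (mul_nonneg hr0 hr0) h0.le, sq_nonneg (r2 - (1-t)^2), mul_nonneg hr0 h0.le]

private lemma simplex_e0 (t : ℝ) : 0 ≤ t^4 - 8/3*t^3 + 199/100*t^2 := by
  nlinarith [sq_nonneg (t*(t - 4/3)), sq_nonneg t]

private lemma simplex_e1 (t : ℝ) (h0 : (2:ℝ)/3 ≤ t) (h1 : t < 1) :
    0 ≤ t^4 - 8/3*t^3 + 199/100*t^2
      + (1-t)^2*(199/100 - 6*t^2 + 4*(1-t)^2 - 8/3*(1-t)) - 3*((1-t)^2)^2 := by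
  nlinarith [mul_nonneg (sub_nonneg.mpr h0) (sub_nonneg.mpr h1.le), sq_nonneg (t - 2/3),
    sq_nonneg (1-t),
    mul_nonneg (mul_nonneg (sub_nonneg.mpr h0) (sub_nonneg.mpr h1.le)) (sub_nonneg.mpr h1.le),
    sq_nonneg ((t-2/3)*(1-t)), mul_nonneg (sq_nonneg (1-t)) (sub_nonneg.mpr h0)]

private lemma simplex_keyB (t r2 : ℝ) (h0 : (2:ℝ)/3 ≤ t) (h1 : t < 1) (hr0 : 0 ≤ r2)
    (hru : r2 ≤ (1-t)^2) :
    0 ≤ t^4 - 8/3*t^3 + 199/100*t^2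
      + r2*(199/100 - 6*t^2 + 4*(1-t)^2 - 8/3*(1-t)) - 3*r2^2 := by
  have hu : (0:ℝ) < (1-t)^2 := by nlinarith
  nlinarith [mul_nonneg (sub_nonneg.mpr hru) (simplex_e0 t),
    mul_nonneg hr0 (simplex_e1 t h0 h1),
    mul_nonneg (mul_nonneg hr0 (sub_nonneg.mpr hru)) hu.le, hu]

private lemma simplex_key (t r2 r3 r4 : ℝ) (ht0 : 0 < t) (ht1 : t < 1)
    (hr0 : 0 ≤ r2) (hrt : r2 ≤ t*(1-t)) (hru : r2 ≤ (1-t)^2)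
    (h30 : 0 ≤ r3) (h3u : r3 ≤ (1-t)*r2) (h40 : 0 ≤ r4) (hc2 : r3^2 ≤ r2*r4) :
    2*(t^2+r2) - 8/3*(t^3+r3) - 3*(t^2+r2)^2 + 4*(t^4+r4) ≥ 1/100*(t^2+r2) := by
  rcases eq_or_lt_of_le hr0 with h | hr2pos
  · have h2 : r2 = 0 := h.symm
    subst h2
    have h3 : r3 = 0 := le_antisymm (by linarith) h30
    subst h3
    nlinarith [simplex_e0 t, h40]
  · rcases le_total t (2/3) with hc | hc
    · have hphi : 0 ≤ r2 * (4*r4 - 8/3*r3 + 4/9*r2) := by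
        nlinarith [hc2, sq_nonneg (2*r3 - 2/3*r2)]
      have hphi' : 0 ≤ 4*r4 - 8/3*r3 + 4/9*r2 :=
        nonneg_of_mul_nonneg_right hphi hr2pos
      nlinarith [simplex_keyA t r2 ht0 hc hr0 hrt hru, hphi']
    · have hphi : 0 ≤ r2 * (4*r4 - 8/3*r3 - (4*(1-t)^2 - 8/3*(1-t))*r2) := by
        nlinarith [hc2, mul_nonneg (sub_nonneg.mpr h3u)
          (by nlinarith : (0:ℝ) ≤ 8/3*r2 - 4*r3 - 4*(1-t)*r2)]
      have hphi' : 0 ≤ 4*r4 - 8/3*r3 - (4*(1-t)^2 - 8/3*(1-t))*r2 :=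
        nonneg_of_mul_nonneg_right hphi hr2pos
      nlinarith [simplex_keyB t r2 hc ht1 hr0 hru, hphi']

/-- **Improved lower bound (Lemma on the simplex).** For every `n ≥ 1` and all
`α₁, …, αₙ ∈ (0,1)` with `Σ αᵢ = 1`, one has
`2 Σ αᵢ² − (8/3) Σ αᵢ³ − 3 (Σ αᵢ²)² + 4 Σ αᵢ⁴ ≥ (1/100) Σ αᵢ²`. -/
theorem simplex_quartic_lower_bound (n : ℕ) (hn : 1 ≤ n)
    (α : Fin n → ℝ) (hα : ∀ i, 0 < α i ∧ α i < 1) (hsum : ∑ i, α i = 1) :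
    2 * ∑ i, α i ^ 2 - 8 / 3 * ∑ i, α i ^ 3 - 3 * (∑ i, α i ^ 2) ^ 2 + 4 * ∑ i, α i ^ 4 ≥
      1 / 100 * ∑ i, α i ^ 2 := by
  obtain ⟨i0, -, hmax⟩ := Finset.exists_max_image Finset.univ α ⟨⟨0, by omega⟩, Finset.mem_univ _⟩
  set t := α i0 with htdef
  set s : Finset (Fin n) := Finset.univ.erase i0 with hsdef
  have hsplit : ∀ f : Fin n → ℝ, ∑ i, f i = f i0 + ∑ j ∈ s, f j :=
    fun f => (Finset.add_sum_erase Finset.univ f (Finset.mem_univ i0)).symm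
  have htail : ∑ j ∈ s, α j = 1 - t := by
    have := hsplit α; rw [hsum] at this; linarith
  have hpos : ∀ j, 0 ≤ α j := fun j => (hα j).1.le
  have hjle : ∀ j ∈ s, α j ≤ 1 - t := by
    intro j hj
    rw [← htail]
    exact Finset.single_le_sum (fun i _ => hpos i) hj
  have hjt : ∀ j ∈ s, α j ≤ t := fun j _ => hmax j (Finset.mem_univ j)
  set r2 : ℝ := ∑ j ∈ s, α j ^ 2 with hr2def
  set r3 : ℝ := ∑ j ∈ s, α j ^ 3 with hr3def
  set r4 : ℝ := ∑ j ∈ s, α j ^ 4 with hr4def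
  have hr0 : 0 ≤ r2 := Finset.sum_nonneg fun j _ => pow_nonneg (hpos j) _
  have h30 : 0 ≤ r3 := Finset.sum_nonneg fun j _ => pow_nonneg (hpos j) _
  have h40 : 0 ≤ r4 := Finset.sum_nonneg fun j _ => pow_nonneg (hpos j) _
  have hrt : r2 ≤ t * (1 - t) := by
    rw [← htail, Finset.mul_sum]
    exact Finset.sum_le_sum fun j hj => by nlinarith [hjt j hj, hpos j]
  have hru : r2 ≤ (1 - t) ^ 2 := by
    have : r2 ≤ (1 - t) * (1 - t) := by
      calc r2 ≤ ∑ j ∈ s, (1 - t) * α j :=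
            Finset.sum_le_sum fun j hj => by nlinarith [hjle j hj, hpos j]
        _ = (1 - t) * (1 - t) := by rw [← Finset.mul_sum, htail]
    nlinarith
  have h3u : r3 ≤ (1 - t) * r2 := by
    rw [Finset.mul_sum]
    exact Finset.sum_le_sum fun j hj => by nlinarith [hjle j hj, hpos j, sq_nonneg (α j)]
  have hc2 : r3 ^ 2 ≤ r2 * r4 := by
    have h := Finset.sum_mul_sq_le_sq_mul_sq s (fun j => α j) (fun j => α j ^ 2)
    calc r3 ^ 2 = (∑ j ∈ s, α j * α j ^ 2) ^ 2 := by
          rw [hr3def]; congr 1; exact Finset.sum_congr rfl fun j _ => by ring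
      _ ≤ (∑ j ∈ s, α j ^ 2) * ∑ j ∈ s, (α j ^ 2) ^ 2 := h
      _ = r2 * r4 := by
          rw [hr2def, hr4def]; congr 1; exact Finset.sum_congr rfl fun j _ => by ring
  have e2 : ∑ i, α i ^ 2 = t ^ 2 + r2 := hsplit fun i => α i ^ 2
  have e3 : ∑ i, α i ^ 3 = t ^ 3 + r3 := hsplit fun i => α i ^ 3
  have e4 : ∑ i, α i ^ 4 = t ^ 4 + r4 := hsplit fun i => α i ^ 4
  rw [e2, e3, e4]
  exact simplex_key t r2 r3 r4 (hα i0).1 (hα i0).2 hr0 hrt hru h30 h3u h40 hc2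
end

section
/- For every r ∈ (0, 1/2), the supremum over all Borel probability measures μ on S¹ of ∫_{S¹} μ(I_r(x)) dμ(x) equals 1/2; in particular, ∫_{S¹} μ(I_r(x)) dμ(x) ≤ 1/2 for every μ, with equality when μ = (1/2)(δ_p + δ_{−p}) for any p ∈ S¹. -/
open MeasureTheory Real
open scoped ENNReal

noncomputable section

/-- The set of quadruples `(x₁,x₂,x₃,x₄) ∈ (S¹)⁴` for which some point `p` with `‖p‖ ≤ r`
lies on both `aff(x₁,x₂)` and `aff(x₃,x₄)`. -/
def quadSetLE (r : ℝ) : Set (unitCircle × unitCircle × unitCircle × unitCircle) :=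
  {q | ∃ p : Plane, ‖p‖ ≤ r ∧ p ∈ chordLine (q.1 : Plane) (q.2.1 : Plane) ∧
    p ∈ chordLine (q.2.2.1 : Plane) (q.2.2.2 : Plane)}

/-- `P_μ(ℓ ≤ r)`: the `μ⊗μ⊗μ⊗μ`-measure of `quadSetLE r`. -/
def probLE (μ : Measure unitCircle) (r : ℝ) : ℝ≥0∞ :=
  (μ.prod (μ.prod (μ.prod μ))) (quadSetLE r)

/-- `I_r(x)`: the set of `y ∈ S¹` such that the line `aff(x,y)` meets the closed disk of
radius `r` centred at the origin. -/
def arcSet (r : ℝ) (x : unitCircle) : Set unitCircle :=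
  {y | ∃ p : Plane, ‖p‖ ≤ r ∧ p ∈ chordLine (x : Plane) (y : Plane)}

namespace OneChordAux

lemma norm_coe (x : unitCircle) : ‖(x : Plane)‖ = 1 := by
  have := x.2
  simpa [unitCircle, mem_sphere_iff_norm] using this

lemma inner_le_one {x y : Plane} (hx : ‖x‖ = 1) (hy : ‖y‖ = 1) :
    (inner ℝ x y : ℝ) ≤ 1 := by
  have := real_inner_le_norm x y
  rw [hx, hy] at this; linarith

lemma expand_norm (x y : Plane) (hx : ‖x‖ = 1) (hy : ‖y‖ = 1) (t : ℝ) :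
    ‖t • (y - x) + x‖ ^ 2
      = 1 + 2 * t * ((inner ℝ x y : ℝ) - 1) + t ^ 2 * (2 - 2 * (inner ℝ x y : ℝ)) := by
  rw [← real_inner_self_eq_norm_sq]
  simp only [inner_add_left, inner_add_right, inner_sub_left, inner_sub_right,
    real_inner_smul_left, real_inner_smul_right]
  rw [real_inner_self_eq_norm_sq x, real_inner_self_eq_norm_sq y, hx, hy, real_inner_comm y x]
  ring

lemma mem_line_iff {x y : Plane} (p : Plane) :
    p ∈ (affineSpan ℝ ({x, y} : Set Plane) : Set Plane) ↔ ∃ t : ℝ, t • (y - x) + x = p := by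
  constructor
  · intro hp
    have h2 : (p - x) +ᵥ x ∈ line[ℝ, x, y] := by simpa using hp
    rcases (vadd_left_mem_affineSpan_pair).1 h2 with ⟨t, ht⟩
    exact ⟨t, by simp only [vsub_eq_sub] at ht; rw [ht]; abel⟩
  · rintro ⟨t, ht⟩
    have := AffineMap.lineMap_mem_affineSpan_pair t x y
    simp only [AffineMap.lineMap_apply, vsub_eq_sub, vadd_eq_add] at this
    rw [← ht]; exact this

/-- Key characterization of the chord condition. -/
lemma chord_iff {r : ℝ} (hr0 : 0 < r) (hr1 : r < 1) {x y : Plane}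
    (hx : ‖x‖ = 1) (hy : ‖y‖ = 1) :
    (∃ p : Plane, ‖p‖ ≤ r ∧ p ∈ chordLine x y) ↔ (inner ℝ x y : ℝ) ≤ 2 * r ^ 2 - 1 := by
  by_cases hxy : x = y
  · subst hxy
    simp only [chordLine, if_pos rfl]
    constructor
    · rintro ⟨p, hp, hmem⟩
      exfalso
      have h1 : (inner ℝ p x : ℝ) = 1 := hmem
      have h2 := real_inner_le_norm p x
      rw [hx, h1] at h2
      nlinarith [norm_nonneg p]
    · intro h
      exfalso
      have : (inner ℝ x x : ℝ) = 1 := by rw [real_inner_self_eq_norm_sq, hx]; ring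
      nlinarith
  · simp only [chordLine, if_neg hxy]
    constructor
    · rintro ⟨p, hp, hmem⟩
      rcases (mem_line_iff p).1 hmem with ⟨t, ht⟩
      have h1 : ‖p‖ ^ 2 = 1 + 2 * t * ((inner ℝ x y : ℝ) - 1)
          + t ^ 2 * (2 - 2 * (inner ℝ x y : ℝ)) := by
        rw [← ht]; exact expand_norm x y hx hy t
      have h2 : (inner ℝ x y : ℝ) ≤ 1 := inner_le_one hx hy
      have h3 : ‖p‖ ^ 2 ≤ r ^ 2 := by
        have := norm_nonneg p
        nlinarith
      nlinarith [sq_nonneg (t - 1/2), sq_nonneg (2 * t - 1)]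
    · intro h
      refine ⟨(1/2 : ℝ) • (y - x) + x, ?_, (mem_line_iff _).2 ⟨1/2, rfl⟩⟩
      have h1 := expand_norm x y hx hy (1/2)
      have h2 : ‖(1/2 : ℝ) • (y - x) + x‖ ^ 2 ≤ r ^ 2 := by nlinarith
      have := norm_nonneg ((1/2 : ℝ) • (y - x) + x)
      nlinarith

/-- `arcSet` as an inner-product sublevel set. -/
lemma arcSet_eq {r : ℝ} (hr0 : 0 < r) (hr1 : r < 1) (x : unitCircle) :
    arcSet r x = {y : unitCircle | (inner ℝ (x : Plane) (y : Plane) : ℝ) ≤ 2 * r ^ 2 - 1} := by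
  ext y
  exact chord_iff hr0 hr1 (norm_coe x) (norm_coe y)

/-- Purely numerical part of the triangle-freeness argument. -/
lemma tri_num (a b s w : ℝ) (hs : 1 / 2 < s) (ha : s ≤ a) (hb : s ≤ b)
    (ha1 : a ≤ 1) (hb1 : b ≤ 1)
    (hw : w ^ 2 ≤ (1 - a ^ 2) * (1 - b ^ 2)) (hcon : a * b + w ≤ -s) : False := by
  have h0 : 0 < s := by linarith
  have hab : s ^ 2 ≤ a * b := by nlinarith
  have hw0 : 0 ≤ s + a * b := by nlinarith
  have hle : s + a * b ≤ -w := by linarith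
  have hsq2 : (s + a * b) ^ 2 ≤ w ^ 2 := by nlinarith
  have hsq3 : (1 - a ^ 2) * (1 - b ^ 2) ≤ (1 - s ^ 2) ^ 2 := by nlinarith
  nlinarith

/-- Triangle-freeness: two unit vectors both close to `z` cannot be nearly opposite. -/
lemma triangle {x y z : Plane} (hx : ‖x‖ = 1) (hy : ‖y‖ = 1) (hz : ‖z‖ = 1)
    {s : ℝ} (hs : 1 / 2 < s) (h1 : s ≤ (inner ℝ x z : ℝ)) (h2 : s ≤ (inner ℝ y z : ℝ)) :
    -s < (inner ℝ x y : ℝ) := by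
  by_contra hcon
  push_neg at hcon
  have ha1 : (inner ℝ x z : ℝ) ≤ 1 := inner_le_one hx hz
  have hb1 : (inner ℝ y z : ℝ) ≤ 1 := inner_le_one hy hz
  have hw : (inner ℝ (x - (inner ℝ x z : ℝ) • z) (y - (inner ℝ y z : ℝ) • z) : ℝ)
      = (inner ℝ x y : ℝ) - (inner ℝ x z : ℝ) * (inner ℝ y z : ℝ) := by
    simp only [inner_sub_left, inner_sub_right, real_inner_smul_left, real_inner_smul_right]
    rw [real_inner_comm y z, real_inner_self_eq_norm_sq z, hz]
    ring
  have hnx : ‖x - (inner ℝ x z : ℝ) • z‖ ^ 2 = 1 - (inner ℝ x z : ℝ) ^ 2 := by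
    rw [← real_inner_self_eq_norm_sq]
    simp only [inner_sub_left, inner_sub_right, real_inner_smul_left, real_inner_smul_right]
    rw [real_inner_comm x z, real_inner_self_eq_norm_sq z, real_inner_self_eq_norm_sq x, hz, hx]
    ring
  have hny : ‖y - (inner ℝ y z : ℝ) • z‖ ^ 2 = 1 - (inner ℝ y z : ℝ) ^ 2 := by
    rw [← real_inner_self_eq_norm_sq]
    simp only [inner_sub_left, inner_sub_right, real_inner_smul_left, real_inner_smul_right]
    rw [real_inner_comm y z, real_inner_self_eq_norm_sq z, real_inner_self_eq_norm_sq y, hz, hy]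
    ring
  have hcs := abs_real_inner_le_norm (x - (inner ℝ x z : ℝ) • z) (y - (inner ℝ y z : ℝ) • z)
  rw [hw] at hcs
  have hsq : ((inner ℝ x y : ℝ) - (inner ℝ x z : ℝ) * (inner ℝ y z : ℝ)) ^ 2
      ≤ (1 - (inner ℝ x z : ℝ) ^ 2) * (1 - (inner ℝ y z : ℝ) ^ 2) := by
    nlinarith [sq_abs ((inner ℝ x y : ℝ) - (inner ℝ x z : ℝ) * (inner ℝ y z : ℝ)),
      norm_nonneg (x - (inner ℝ x z : ℝ) • z), norm_nonneg (y - (inner ℝ y z : ℝ) • z),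
      abs_nonneg ((inner ℝ x y : ℝ) - (inner ℝ x z : ℝ) * (inner ℝ y z : ℝ))]
  exact tri_num (inner ℝ x z) (inner ℝ y z) s ((inner ℝ x y : ℝ) - (inner ℝ x z : ℝ) * (inner ℝ y z : ℝ))
    hs h1 h2 ha1 hb1 hsq (by linarith)

end OneChordAux

open OneChordAux in
/-- **The one-chord problem for r < 1/2.** For every `r ∈ (0, 1/2)`, the supremum over all
Borel probability measures `μ` on the unit circle of `∫ μ(I_r(x)) dμ(x)` equals `1/2`; in
particular `∫ μ(I_r(x)) dμ(x) ≤ 1/2` for every such `μ`, with equality for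
`μ = (1/2)(δ_p + δ_{-p})`, `p ∈ S¹`. -/
theorem one_chord_sup_eq_half (r : ℝ) (hr0 : 0 < r) (hr1 : r < 1 / 2) :
    (⨆ (μ : Measure unitCircle) (_ : IsProbabilityMeasure μ),
        ∫⁻ x, μ (arcSet r x) ∂μ) = 1 / 2 ∧
    (∀ (μ : Measure unitCircle), IsProbabilityMeasure μ →
        (∫⁻ x, μ (arcSet r x) ∂μ) ≤ 1 / 2) ∧
    (∀ p q : unitCircle, (q : Plane) = -(p : Plane) →
        (∫⁻ x, ((2⁻¹ : ℝ≥0∞) • Measure.dirac p + (2⁻¹ : ℝ≥0∞) • Measure.dirac q) (arcSet r x)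
            ∂((2⁻¹ : ℝ≥0∞) • Measure.dirac p + (2⁻¹ : ℝ≥0∞) • Measure.dirac q)) = 1 / 2) := by
  have hr1' : r < 1 := by linarith
  set c : ℝ := 2 * r ^ 2 - 1 with hc
  have hclt : c < -(1/2 : ℝ) := by
    have : r ^ 2 < (1/2)^2 := by nlinarith
    rw [hc]; nlinarith
  have hcge : (-1 : ℝ) ≤ c := by nlinarith
  set E : Set (unitCircle × unitCircle) :=
    {z : unitCircle × unitCircle | (inner ℝ (z.1 : Plane) (z.2 : Plane) : ℝ) ≤ c} with hE
  have hEmeas : MeasurableSet E := by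
    apply measurableSet_le
    · exact (Continuous.inner (continuous_subtype_val.comp continuous_fst)
        (continuous_subtype_val.comp continuous_snd)).measurable
    · exact measurable_const
  have harc : ∀ x : unitCircle, arcSet r x = Prod.mk x ⁻¹' E := by
    intro x
    rw [arcSet_eq hr0 hr1' x]
    rfl
  have harcMeas : ∀ x : unitCircle, MeasurableSet (arcSet r x) := by
    intro x
    rw [harc x]
    exact hEmeas.preimage measurable_prodMk_left
  have hsymm : ∀ x y : unitCircle, (x, y) ∈ E → (y, x) ∈ E := by
    intro x y h
    have h' : (inner ℝ (x : Plane) (y : Plane) : ℝ) ≤ c := h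
    show (inner ℝ (y : Plane) (x : Plane) : ℝ) ≤ c
    rwa [real_inner_comm]
  have hdisj : ∀ x y : unitCircle, (x, y) ∈ E → Disjoint (arcSet r x) (arcSet r y) := by
    intro x y hxy
    rw [Set.disjoint_left]
    intro z hzx hzy
    rw [arcSet_eq hr0 hr1' x] at hzx
    rw [arcSet_eq hr0 hr1' y] at hzy
    have h1 : (inner ℝ (x : Plane) (z : Plane) : ℝ) ≤ c := hzx
    have h2 : (inner ℝ (y : Plane) (z : Plane) : ℝ) ≤ c := hzy
    have h3 : (inner ℝ (x : Plane) (y : Plane) : ℝ) ≤ c := hxy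
    have hs : 1/2 < -c := by linarith
    have hxz : -c ≤ (inner ℝ (x : Plane) (-(z : Plane)) : ℝ) := by
      rw [inner_neg_right]; linarith
    have hyz : -c ≤ (inner ℝ (y : Plane) (-(z : Plane)) : ℝ) := by
      rw [inner_neg_right]; linarith
    have := OneChordAux.triangle (norm_coe x) (norm_coe y)
      (by rw [norm_neg]; exact norm_coe z) hs hxz hyz
    rw [neg_neg] at this
    linarith
  -- Part 2: the upper bound
  have part2 : ∀ (μ : Measure unitCircle), IsProbabilityMeasure μ →
      (∫⁻ x, μ (arcSet r x) ∂μ) ≤ 1 / 2 := by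
    intro μ hμ
    set f : unitCircle → ℝ≥0∞ := fun x => μ (arcSet r x) with hfdef
    have hf : Measurable f := by
      have : f = fun x => μ (Prod.mk x ⁻¹' E) := by
        funext x; rw [hfdef]; simp only; rw [harc x]
      rw [this]
      exact measurable_measure_prodMk_left hEmeas
    have hfle : ∀ x, f x ≤ 1 := fun x => prob_le_one
    set t : ℝ≥0∞ := ∫⁻ x, f x ∂μ with ht
    have htle1 : t ≤ 1 := by
      rw [ht]
      calc ∫⁻ x, f x ∂μ ≤ ∫⁻ _, 1 ∂μ := lintegral_mono hfle
      _ = 1 := by simp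
    have htne : t ≠ ∞ := ne_top_of_le_ne_top (by norm_num) htle1
    have key1 : ∀ x y : unitCircle, (x, y) ∈ E → f x + f y ≤ 1 := by
      intro x y hxy
      have hd := hdisj x y hxy
      calc f x + f y = μ (arcSet r x ∪ arcSet r y) :=
            (measure_union hd (harcMeas y)).symm
      _ ≤ 1 := prob_le_one
    -- Tonelli swap for the cross term
    have hswap : ∫⁻ x, ∫⁻ y in arcSet r x, f y ∂μ ∂μ = ∫⁻ y, f y * f y ∂μ := by
      have hmeasF : AEMeasurable (Function.uncurry fun x y =>
          E.indicator (fun _ => (1 : ℝ≥0∞)) (x, y) * f y) (μ.prod μ) := by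
        apply Measurable.aemeasurable
        apply Measurable.mul
        · exact (measurable_one.indicator hEmeas).comp measurable_id
        · exact hf.comp measurable_snd
      have e1 : ∀ x : unitCircle, ∫⁻ y in arcSet r x, f y ∂μ
          = ∫⁻ y, E.indicator (fun _ => (1 : ℝ≥0∞)) (x, y) * f y ∂μ := by
        intro x
        rw [← lintegral_indicator (harcMeas x) (fun y => f y)]
        apply lintegral_congr
        intro y
        by_cases hy : y ∈ arcSet r x
        · have hy' : (x, y) ∈ E := by rw [harc x] at hy; exact hy
          simp [Set.indicator_of_mem, hy, hy']
        · have hy' : (x, y) ∉ E := by rw [harc x] at hy; exact hy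
          simp [Set.indicator_of_notMem, hy, hy']
      have hxind : ∀ y : unitCircle, (fun x => E.indicator (fun _ => (1 : ℝ≥0∞)) (x, y))
          = (arcSet r y).indicator (fun _ => (1 : ℝ≥0∞)) := by
        intro y
        funext x
        by_cases hx : (x, y) ∈ E
        · have hmm : x ∈ arcSet r y := by rw [harc y]; exact hsymm x y hx
          simp [Set.indicator_of_mem, hx, hmm]
        · have hmm : x ∉ arcSet r y := by
            rw [harc y]
            intro hmem
            exact hx (hsymm y x hmem)
          simp [Set.indicator_of_notMem, hx, hmm]
      have e2 : ∀ y : unitCircle, ∫⁻ x, E.indicator (fun _ => (1 : ℝ≥0∞)) (x, y) * f y ∂μ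
          = f y * f y := by
        intro y
        rw [lintegral_mul_const' (f y) _ ?hne]
        case hne => exact ne_top_of_le_ne_top (by norm_num) (hfle y)
        rw [show (fun x => E.indicator (fun _ => (1 : ℝ≥0∞)) (x, y))
            = (arcSet r y).indicator (fun _ => (1 : ℝ≥0∞)) from hxind y]
        rw [lintegral_indicator (harcMeas y)]
        rw [setLIntegral_const, one_mul, mul_comm]
      calc ∫⁻ x, ∫⁻ y in arcSet r x, f y ∂μ ∂μ
          = ∫⁻ x, ∫⁻ y, E.indicator (fun _ => (1:ℝ≥0∞)) (x, y) * f y ∂μ ∂μ :=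
            lintegral_congr e1
      _ = ∫⁻ y, ∫⁻ x, E.indicator (fun _ => (1:ℝ≥0∞)) (x, y) * f y ∂μ ∂μ :=
            lintegral_lintegral_swap hmeasF
      _ = ∫⁻ y, f y * f y ∂μ := lintegral_congr e2
    have hq : (∫⁻ x, f x * f x ∂μ) + (∫⁻ x, f x * f x ∂μ) ≤ t := by
      have step : ∀ x : unitCircle, f x * f x + (∫⁻ y in arcSet r x, f y ∂μ) ≤ f x := by
        intro x
        have h1 : f x * f x = ∫⁻ _ in arcSet r x, f x ∂μ := by
          rw [setLIntegral_const, mul_comm]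
        rw [h1, ← lintegral_add_left measurable_const]
        calc ∫⁻ y in arcSet r x, (f x + f y) ∂μ
            ≤ ∫⁻ _ in arcSet r x, 1 ∂μ := by
              apply setLIntegral_mono measurable_const
              intro y hy
              apply key1
              rw [harc x] at hy; exact hy
        _ = μ (arcSet r x) := by rw [setLIntegral_const, one_mul]
      calc (∫⁻ x, f x * f x ∂μ) + (∫⁻ x, f x * f x ∂μ)
          = (∫⁻ x, f x * f x ∂μ) + ∫⁻ x, ∫⁻ y in arcSet r x, f y ∂μ ∂μ := by rw [hswap]
      _ = ∫⁻ x, (f x * f x + ∫⁻ y in arcSet r x, f y ∂μ) ∂μ := by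
            rw [lintegral_add_left (f := fun x => f x * f x) (hf.mul hf)]
      _ ≤ ∫⁻ x, f x ∂μ := lintegral_mono step
      _ = t := rfl
    -- Cauchy–Schwarz
    have hcs : t * t ≤ ∫⁻ x, f x * f x ∂μ := by
      have h2 : (2 : ℝ).HolderConjugate 2 := Real.HolderConjugate.two_two
      have hh := ENNReal.lintegral_mul_le_Lp_mul_Lq μ h2 hf.aemeasurable
        (aemeasurable_const : AEMeasurable (fun _ => (1:ℝ≥0∞)) μ)
      simp only [Pi.mul_apply, mul_one, lintegral_const, measure_univ, one_mul,
        ENNReal.one_rpow] at hh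
      have h3 : t ^ (2:ℝ) ≤ ((∫⁻ a, f a ^ (2:ℝ) ∂μ) ^ (1/(2:ℝ))) ^ (2:ℝ) :=
        ENNReal.rpow_le_rpow hh (by norm_num)
      rw [← ENNReal.rpow_mul] at h3
      norm_num at h3
      calc t * t = t ^ (2:ℕ) := (pow_two t).symm
      _ ≤ ∫⁻ a, f a ^ (2:ℕ) ∂μ := h3
      _ = ∫⁻ x, f x * f x ∂μ := lintegral_congr fun x => pow_two (f x)
    have h2t : t * t + t * t ≤ t := le_trans (add_le_add hcs hcs) hq
    by_cases ht0 : t = 0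
    · rw [ht0]; norm_num
    · have he : t * t + t * t = (2 * t) * t := by ring
      rw [he, show t = 1 * t from (one_mul t).symm] at h2t
      rw [one_mul] at h2t
      have h2le : 2 * t ≤ 1 := by
        have := (ENNReal.mul_le_mul_iff_left ht0 htne).2 (le_refl t)
        exact (ENNReal.mul_le_mul_iff_left ht0 htne).1 (by simpa using h2t)
      rw [ENNReal.le_div_iff_mul_le (Or.inl (by norm_num)) (Or.inl (by norm_num))]
      rw [mul_comm]
      exact h2le
  -- Part 3: equality for symmetric two-point measures
  have part3 : ∀ p q : unitCircle, (q : Plane) = -(p : Plane) →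
      (∫⁻ x, ((2⁻¹ : ℝ≥0∞) • Measure.dirac p + (2⁻¹ : ℝ≥0∞) • Measure.dirac q) (arcSet r x)
          ∂((2⁻¹ : ℝ≥0∞) • Measure.dirac p + (2⁻¹ : ℝ≥0∞) • Measure.dirac q)) = 1 / 2 := by
    intro p q hpq
    set μ₀ : Measure unitCircle :=
      (2⁻¹ : ℝ≥0∞) • Measure.dirac p + (2⁻¹ : ℝ≥0∞) • Measure.dirac q with hμ₀
    have hipq : (inner ℝ (p : Plane) (q : Plane) : ℝ) = -1 := by
      rw [hpq, inner_neg_right, real_inner_self_eq_norm_sq, norm_coe p]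
      norm_num
    have hiqp : (inner ℝ (q : Plane) (p : Plane) : ℝ) = -1 := by
      rw [real_inner_comm]; exact hipq
    have hipp : (inner ℝ (p : Plane) (p : Plane) : ℝ) = 1 := by
      rw [real_inner_self_eq_norm_sq, norm_coe p]; norm_num
    have hiqq : (inner ℝ (q : Plane) (q : Plane) : ℝ) = 1 := by
      rw [real_inner_self_eq_norm_sq, norm_coe q]; norm_num
    have hqin : q ∈ arcSet r p := by
      rw [arcSet_eq hr0 hr1' p]
      show (inner ℝ (p : Plane) (q : Plane) : ℝ) ≤ 2 * r ^ 2 - 1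
      rw [hipq]; nlinarith
    have hpin : p ∈ arcSet r q := by
      rw [arcSet_eq hr0 hr1' q]
      show (inner ℝ (q : Plane) (p : Plane) : ℝ) ≤ 2 * r ^ 2 - 1
      rw [hiqp]; nlinarith
    have hpnin : p ∉ arcSet r p := by
      rw [arcSet_eq hr0 hr1' p]
      show ¬ ((inner ℝ (p : Plane) (p : Plane) : ℝ) ≤ 2 * r ^ 2 - 1)
      rw [hipp]; push_neg; nlinarith
    have hqnin : q ∉ arcSet r q := by
      rw [arcSet_eq hr0 hr1' q]
      show ¬ ((inner ℝ (q : Plane) (q : Plane) : ℝ) ≤ 2 * r ^ 2 - 1)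
      rw [hiqq]; push_neg; nlinarith
    have happ : μ₀ (arcSet r p) = 2⁻¹ := by
      rw [hμ₀]
      rw [Measure.add_apply, Measure.smul_apply, Measure.smul_apply, smul_eq_mul, smul_eq_mul,
        Measure.dirac_apply' p (harcMeas p), Measure.dirac_apply' q (harcMeas p),
        Set.indicator_of_notMem hpnin, Set.indicator_of_mem hqin]
      simp
    have haqq : μ₀ (arcSet r q) = 2⁻¹ := by
      rw [hμ₀]
      rw [Measure.add_apply, Measure.smul_apply, Measure.smul_apply, smul_eq_mul, smul_eq_mul,
        Measure.dirac_apply' p (harcMeas q), Measure.dirac_apply' q (harcMeas q),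
        Set.indicator_of_mem hpin, Set.indicator_of_notMem hqnin]
      simp
    have hmeasg : Measurable fun x : unitCircle => μ₀ (arcSet r x) := by
      have hg : (fun x : unitCircle => μ₀ (arcSet r x))
          = fun x => μ₀ (Prod.mk x ⁻¹' E) := by
        funext x; rw [harc x]
      rw [hg]
      exact measurable_measure_prodMk_left hEmeas
    rw [lintegral_add_measure, lintegral_smul_measure, lintegral_smul_measure,
      lintegral_dirac' p hmeasg, lintegral_dirac' q hmeasg, happ, haqq]
    rw [ENNReal.div_eq_inv_mul, smul_eq_mul]
    rw [show (2:ℝ≥0∞)⁻¹ * 2⁻¹ + 2⁻¹ * 2⁻¹ = 2⁻¹ * (2⁻¹ + 2⁻¹) from by ring,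
      ENNReal.inv_two_add_inv_two]
  refine ⟨?_, part2, part3⟩
  -- Part 1: the supremum
  apply le_antisymm
  · apply iSup_le
    intro μ
    apply iSup_le
    intro hμ
    exact part2 μ hμ
  · set e : Plane := EuclideanSpace.single (0 : Fin 2) (1:ℝ) with he
    have hne : ‖e‖ = 1 := by
      rw [he, EuclideanSpace.norm_single]
      norm_num
    have hme : e ∈ unitCircle := by
      rw [unitCircle, mem_sphere_iff_norm, sub_zero, hne]
    have hme' : -e ∈ unitCircle := by
      rw [unitCircle, mem_sphere_iff_norm, sub_zero, norm_neg, hne]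
    set p₀ : unitCircle := ⟨e, hme⟩ with hp₀
    set q₀ : unitCircle := ⟨-e, hme'⟩ with hq₀
    set μ₀ : Measure unitCircle :=
      (2⁻¹ : ℝ≥0∞) • Measure.dirac p₀ + (2⁻¹ : ℝ≥0∞) • Measure.dirac q₀ with hμ₀
    have hprob : IsProbabilityMeasure μ₀ := by
      constructor
      rw [hμ₀, Measure.add_apply, Measure.smul_apply, Measure.smul_apply,
        Measure.dirac_apply' _ MeasurableSet.univ, Measure.dirac_apply' _ MeasurableSet.univ]
      simp [ENNReal.inv_two_add_inv_two]
    have hval := part3 p₀ q₀ rfl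
    rw [← hμ₀] at hval
    calc (1 : ℝ≥0∞) / 2 = ∫⁻ x, μ₀ (arcSet r x) ∂μ₀ := hval.symm
    _ ≤ ⨆ (μ : Measure unitCircle) (_ : IsProbabilityMeasure μ), ∫⁻ x, μ (arcSet r x) ∂μ := by
        apply le_iSup_of_le μ₀
        apply le_iSup_of_le hprob
        exact le_refl _
end
end

section
/- For every r with 1/2 < r < sin(3π/14), the supremum over all Borel probability measures μ on S¹ of ∫_{S¹} μ(I_r(x)) dμ(x) equals 2/3. -/
open MeasureTheory Real
open scoped ENNReal

noncomputable section

/-! ### Auxiliary geometric lemmas -/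

lemma OneChord.mem_span_pair {p x y : Plane} :
    p ∈ affineSpan ℝ ({x, y} : Set Plane) ↔ ∃ s : ℝ, p = x + s • (y - x) := by
  constructor
  · intro hp
    have : (p - x) +ᵥ x ∈ affineSpan ℝ ({x, y} : Set Plane) := by simpa using hp
    obtain ⟨s, hs⟩ := vadd_left_mem_affineSpan_pair.1 this
    exact ⟨s, by simp only [vsub_eq_sub] at hs; rw [hs]; abel⟩
  · rintro ⟨s, rfl⟩
    have : s • (y -ᵥ x) +ᵥ x ∈ affineSpan ℝ ({x, y} : Set Plane) :=
      smul_vsub_vadd_mem_affineSpan_pair s x y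
    simpa [add_comm] using this

/-- Characterization of the chords meeting the closed disk of radius `r`. -/
lemma OneChord.chord_char {r : ℝ} (hr0 : 0 ≤ r) (hr1 : r < 1) {x y : Plane}
    (hx : ‖x‖ = 1) (hy : ‖y‖ = 1) :
    (∃ p : Plane, ‖p‖ ≤ r ∧ p ∈ chordLine x y) ↔ ‖x + y‖ ≤ 2 * r := by
  by_cases hxy : x = y
  · subst hxy
    rw [chordLine, if_pos rfl]
    constructor
    · rintro ⟨p, hp, hmem⟩
      exfalso
      have h1 : (1 : ℝ) ≤ ‖p‖ := by
        have := real_inner_le_norm p x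
        rw [hmem, hx, mul_one] at this
        exact this
      linarith
    · intro h
      exfalso
      have : ‖x + x‖ = 2 := by
        rw [← two_smul ℝ x, norm_smul, hx]; norm_num
      rw [this] at h; linarith
  · rw [chordLine, if_neg hxy]
    have ha : (inner ℝ x y : ℝ) ≤ 1 := by
      have := real_inner_le_norm x y
      rwa [hx, hy, mul_one] at this
    have hxy2 : ‖x + y‖ ^ 2 = 2 + 2 * (inner ℝ x y : ℝ) := by
      rw [@norm_add_sq_real, hx, hy]; ring
    constructor
    · rintro ⟨p, hp, hmem⟩
      obtain ⟨s, rfl⟩ := OneChord.mem_span_pair.1 hmem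
      have hexp : ‖x + s • (y - x)‖ ^ 2
          = 1 + 2 * s * ((inner ℝ x y : ℝ) - 1) + s ^ 2 * (2 - 2 * (inner ℝ x y : ℝ)) := by
        rw [@norm_add_sq_real, norm_smul, inner_smul_right, inner_sub_right,
          real_inner_self_eq_norm_sq, mul_pow, @norm_sub_sq_real, Real.norm_eq_abs, sq_abs,
          hx, hy, real_inner_comm y x]
        ring
      have h1 : ‖x + s • (y - x)‖ ^ 2 ≤ r ^ 2 := by nlinarith [norm_nonneg (x + s • (y - x))]
      have key : ‖x + y‖ ^ 2 ≤ (2 * r) ^ 2 := by nlinarith [sq_nonneg (2 * s - 1)]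
      nlinarith [norm_nonneg (x + y)]
    · intro h
      refine ⟨x + (1 / 2 : ℝ) • (y - x), ?_, OneChord.mem_span_pair.2 ⟨1 / 2, rfl⟩⟩
      have : x + (1 / 2 : ℝ) • (y - x) = (1 / 2 : ℝ) • (x + y) := by
        rw [smul_sub, smul_add]; module
      rw [this, norm_smul, Real.norm_eq_abs, abs_of_nonneg (by norm_num : (0:ℝ) ≤ 1 / 2)]
      linarith

lemma OneChord.r_facts {r : ℝ} (hr0 : 1 / 2 < r) (hr1 : r < Real.sin (3 * π / 14)) :
    0 ≤ r ∧ r < 1 ∧ r ^ 2 < 1 / 2 := by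
  have hpi : π < 3.15 := by
    calc π < 3.141593 := Real.pi_lt_d6
    _ < 3.15 := by norm_num
  have hpos : (0 : ℝ) < 3 * π / 14 := by positivity
  have hs : Real.sin (3 * π / 14) < 3 * π / 14 := Real.sin_lt hpos
  have hr : r < 0.675 := by nlinarith
  exact ⟨by linarith, by linarith, by nlinarith⟩

lemma OneChord.inner_coords (x y : Plane) : (inner ℝ x y : ℝ) = x 0 * y 0 + x 1 * y 1 := by
  rw [PiLp.inner_apply]
  simp [Fin.sum_univ_two, RCLike.inner_apply, conj_trivial]
  ring

lemma OneChord.norm_one_coords {x : Plane} (hx : ‖x‖ = 1) : x 0 ^ 2 + x 1 ^ 2 = 1 := by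
  have h := real_inner_self_eq_norm_sq x
  rw [hx, OneChord.inner_coords] at h
  nlinarith [h]

lemma OneChord.norm_eq_one_of {x : Plane} (h : x 0 ^ 2 + x 1 ^ 2 = 1) : ‖x‖ = 1 := by
  have h2 : ‖x‖ ^ 2 = 1 := by
    rw [← real_inner_self_eq_norm_sq, OneChord.inner_coords]; nlinarith
  nlinarith [norm_nonneg x]

/-- No four unit vectors in the plane have pairwise negative inner products. -/
lemma OneChord.no_four {x y z w : Plane} (hx : ‖x‖ = 1) (hy : ‖y‖ = 1) (hz : ‖z‖ = 1)
    (hw : ‖w‖ = 1)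
    (h1 : (inner ℝ x y : ℝ) < 0) (h2 : (inner ℝ x z : ℝ) < 0) (h3 : (inner ℝ x w : ℝ) < 0)
    (h4 : (inner ℝ y z : ℝ) < 0) (h5 : (inner ℝ y w : ℝ) < 0) (h6 : (inner ℝ z w : ℝ) < 0) :
    False := by
  rw [OneChord.inner_coords] at h1 h2 h3 h4 h5 h6
  have nx := OneChord.norm_one_coords hx
  have ny := OneChord.norm_one_coords hy
  have nz := OneChord.norm_one_coords hz
  have nw := OneChord.norm_one_coords hw
  set a := x 1 * w 0 - x 0 * w 1 with ha
  set b := y 1 * w 0 - y 0 * w 1 with hb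
  set c := z 1 * w 0 - z 0 * w 1 with hc
  have idab : a * b
      = (x 0 * y 0 + x 1 * y 1) - (x 0 * w 0 + x 1 * w 1) * (y 0 * w 0 + y 1 * w 1) := by
    rw [ha, hb]; linear_combination (x 0 * y 0 + x 1 * y 1) * nw
  have idac : a * c
      = (x 0 * z 0 + x 1 * z 1) - (x 0 * w 0 + x 1 * w 1) * (z 0 * w 0 + z 1 * w 1) := by
    rw [ha, hc]; linear_combination (x 0 * z 0 + x 1 * z 1) * nw
  have idbc : b * c
      = (y 0 * z 0 + y 1 * z 1) - (y 0 * w 0 + y 1 * w 1) * (z 0 * w 0 + z 1 * w 1) := by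
    rw [hb, hc]; linear_combination (y 0 * z 0 + y 1 * z 1) * nw
  have hab : a * b < 0 := by rw [idab]; linarith [mul_pos_of_neg_of_neg h3 h5]
  have hac : a * c < 0 := by rw [idac]; linarith [mul_pos_of_neg_of_neg h3 h6]
  have hbc : b * c < 0 := by rw [idbc]; linarith [mul_pos_of_neg_of_neg h5 h6]
  have hq : ((a * b) * (a * c)) * (b * c) < 0 :=
    mul_neg_of_pos_of_neg (mul_pos_of_neg_of_neg hab hac) hbc
  have he : ((a * b) * (a * c)) * (b * c) = (a * b * c) ^ 2 := by ring
  rw [he] at hq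
  linarith [sq_nonneg (a * b * c)]

lemma OneChord.inner_neg {r : ℝ} (hr2 : r ^ 2 < 1 / 2) (hr0 : 0 ≤ r) {p q : Plane}
    (hp : ‖p‖ = 1) (hq : ‖q‖ = 1) (h : ‖p + q‖ ≤ 2 * r) : (inner ℝ p q : ℝ) < 0 := by
  have hsq : ‖p + q‖ ^ 2 ≤ (2 * r) ^ 2 := by nlinarith [norm_nonneg (p + q)]
  have hexp : ‖p + q‖ ^ 2 = 2 + 2 * (inner ℝ p q : ℝ) := by
    rw [@norm_add_sq_real, hp, hq]; ring
  nlinarith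

/-! ### The Turán-type counting bound -/

section Turan
variable {α : Type*} [DecidableEq α] (R : α → α → Prop) [DecidableRel R]

lemma OneChord.swap_sum (hsym : ∀ a b, R a b → R b a) (S T : Finset α) :
    ∑ i ∈ T, (S.filter (R i)).card = ∑ i ∈ S, (T.filter (R i)).card := by
  simp only [Finset.card_filter]
  rw [Finset.sum_comm]
  refine Finset.sum_congr rfl fun j _ => Finset.sum_congr rfl fun i _ => ?_
  exact if_congr ⟨fun h => hsym _ _ h, fun h => hsym _ _ h⟩ rfl rfl

lemma OneChord.deg_split (S T : Finset α) (hd : Disjoint S T) (i : α) :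
    ((S ∪ T).filter (R i)).card = (S.filter (R i)).card + (T.filter (R i)).card := by
  rw [Finset.filter_union, Finset.card_union_of_disjoint (Finset.disjoint_filter_filter hd)]

/-- Turán-type bound: a graph with no `K₄` has ordered edge density at most `2/3`. -/
lemma OneChord.turan_bound (hsym : ∀ a b, R a b → R b a) (hirr : ∀ a, ¬ R a a)
    (hfree : ∀ a b c d, R a b → R a c → R a d → R b c → R b d → R c d → False)
    (V : Finset α) : 3 * ∑ i ∈ V, (V.filter (R i)).card ≤ 2 * V.card ^ 2 := by
  induction V using Finset.strongInduction with
  | _ V ih =>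
  by_cases hedge : ∃ a ∈ V, ∃ b ∈ V, R a b
  swap
  · push_neg at hedge
    have : ∑ i ∈ V, (V.filter (R i)).card = 0 := by
      refine Finset.sum_eq_zero fun i hi => ?_
      rw [Finset.card_eq_zero, Finset.filter_eq_empty_iff]
      exact fun j hj => hedge i hi j hj
    simp [this]
  by_cases htri : ∃ a ∈ V, ∃ b ∈ V, ∃ c ∈ V, R a b ∧ R a c ∧ R b c
  · obtain ⟨a, ha, b, hb, c, hc, hab, hac, hbc⟩ := htri
    have hne_ab : a ≠ b := fun h => hirr b (h ▸ hab)
    have hne_ac : a ≠ c := fun h => hirr c (h ▸ hac)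
    have hne_bc : b ≠ c := fun h => hirr c (h ▸ hbc)
    set T : Finset α := {a, b, c} with hT
    have hTV : T ⊆ V := by
      intro x hx
      simp only [hT, Finset.mem_insert, Finset.mem_singleton] at hx
      rcases hx with rfl | rfl | rfl <;> assumption
    have hcardT : T.card = 3 := by
      rw [hT, Finset.card_insert_of_notMem (by simp [hne_ab, hne_ac]),
        Finset.card_insert_of_notMem (by simp [hne_bc]), Finset.card_singleton]
    set W := V \ T with hW
    have hWT : Disjoint W T := Finset.sdiff_disjoint
    have hunion : V = W ∪ T := (Finset.sdiff_union_of_subset hTV).symm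
    have hm : W.card + 3 = V.card := by
      rw [← hcardT, hW]; exact Finset.card_sdiff_add_card_eq_card hTV
    have hdegT : ∀ i, (T.filter (R i)).card ≤ 2 := by
      intro i
      by_contra hgt
      push_neg at hgt
      have heq : T.filter (R i) = T :=
        Finset.eq_of_subset_of_card_le (Finset.filter_subset _ _) (by omega)
      have hra : R i a := (Finset.mem_filter.1 (heq ▸ (by simp [hT] : a ∈ T))).2
      have hrb : R i b := (Finset.mem_filter.1 (heq ▸ (by simp [hT] : b ∈ T))).2
      have hrc : R i c := (Finset.mem_filter.1 (heq ▸ (by simp [hT] : c ∈ T))).2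
      exact hfree i a b c hra hrb hrc hab hac hbc
    have hWV : W ⊂ V := Finset.sdiff_ssubset hTV ⟨a, by simp [hT]⟩
    have hIH := ih W hWV
    have h1 : ∑ i ∈ W, (T.filter (R i)).card ≤ W.card * 2 := by
      have := Finset.sum_le_card_nsmul W (fun i => (T.filter (R i)).card) 2 (fun i _ => hdegT i)
      simpa using this
    have h2 : ∑ i ∈ T, (W.filter (R i)).card ≤ W.card * 2 := by
      rw [OneChord.swap_sum R hsym]; exact h1
    have h3 : ∑ i ∈ T, (T.filter (R i)).card ≤ 6 := by
      have := Finset.sum_le_card_nsmul T (fun i => (T.filter (R i)).card) 2 (fun i _ => hdegT i)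
      rw [hcardT] at this; simpa using this
    have hsplit : ∑ i ∈ V, (V.filter (R i)).card =
        (∑ i ∈ W, (W.filter (R i)).card + ∑ i ∈ W, (T.filter (R i)).card)
        + (∑ i ∈ T, (W.filter (R i)).card + ∑ i ∈ T, (T.filter (R i)).card) := by
      conv_lhs => rw [hunion]
      rw [Finset.sum_union hWT]
      congr 1
      · rw [← Finset.sum_add_distrib]
        exact Finset.sum_congr rfl fun i _ => OneChord.deg_split R W T hWT i
      · rw [← Finset.sum_add_distrib]
        exact Finset.sum_congr rfl fun i _ => OneChord.deg_split R W T hWT i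
    rw [hsplit, ← hm]
    nlinarith [hIH, h1, h2, h3]
  · obtain ⟨a, ha, b, hb, hab⟩ := hedge
    have hne_ab : a ≠ b := fun h => hirr b (h ▸ hab)
    set T : Finset α := {a, b} with hT
    have hTV : T ⊆ V := by
      intro x hx
      simp only [hT, Finset.mem_insert, Finset.mem_singleton] at hx
      rcases hx with rfl | rfl <;> assumption
    have hcardT : T.card = 2 := by
      rw [hT, Finset.card_insert_of_notMem (by simp [hne_ab]), Finset.card_singleton]
    set W := V \ T with hW
    have hWT : Disjoint W T := Finset.sdiff_disjoint
    have hunion : V = W ∪ T := (Finset.sdiff_union_of_subset hTV).symm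
    have hm : W.card + 2 = V.card := by
      rw [← hcardT, hW]; exact Finset.card_sdiff_add_card_eq_card hTV
    have hdegT : ∀ i ∈ V, (T.filter (R i)).card ≤ 1 := by
      intro i hi
      by_contra hgt
      push_neg at hgt
      have heq : T.filter (R i) = T :=
        Finset.eq_of_subset_of_card_le (Finset.filter_subset _ _) (by omega)
      have hra : R i a := (Finset.mem_filter.1 (heq ▸ (by simp [hT] : a ∈ T))).2
      have hrb : R i b := (Finset.mem_filter.1 (heq ▸ (by simp [hT] : b ∈ T))).2
      exact htri ⟨i, hi, a, ha, b, hb, hra, hrb, hab⟩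
    have hWV : W ⊂ V := Finset.sdiff_ssubset hTV ⟨a, by simp [hT]⟩
    have hIH := ih W hWV
    have h1 : ∑ i ∈ W, (T.filter (R i)).card ≤ W.card * 1 := by
      have := Finset.sum_le_card_nsmul W (fun i => (T.filter (R i)).card) 1
        (fun i hi => hdegT i (Finset.mem_sdiff.1 hi).1)
      simpa using this
    have h2 : ∑ i ∈ T, (W.filter (R i)).card ≤ W.card * 1 := by
      rw [OneChord.swap_sum R hsym]; exact h1
    have h3 : ∑ i ∈ T, (T.filter (R i)).card ≤ 2 := by
      have := Finset.sum_le_card_nsmul T (fun i => (T.filter (R i)).card) 1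
        (fun i hi => hdegT i (hTV hi))
      rw [hcardT] at this; simpa using this
    have hsplit : ∑ i ∈ V, (V.filter (R i)).card =
        (∑ i ∈ W, (W.filter (R i)).card + ∑ i ∈ W, (T.filter (R i)).card)
        + (∑ i ∈ T, (W.filter (R i)).card + ∑ i ∈ T, (T.filter (R i)).card) := by
      conv_lhs => rw [hunion]
      rw [Finset.sum_union hWT]
      congr 1
      · rw [← Finset.sum_add_distrib]
        exact Finset.sum_congr rfl fun i _ => OneChord.deg_split R W T hWT i
      · rw [← Finset.sum_add_distrib]
        exact Finset.sum_congr rfl fun i _ => OneChord.deg_split R W T hWT i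
    rw [hsplit, ← hm]
    nlinarith [hIH, h1, h2, h3]

end Turan

/-! ### Measure theory -/

lemma OneChord.norm_um (x : unitCircle) : ‖(x : Plane)‖ = 1 :=
  mem_sphere_zero_iff_norm.mp x.2

lemma OneChord.map_pair {n : ℕ} (μ : Measure unitCircle) [IsProbabilityMeasure μ] {i j : Fin n}
    (hij : i ≠ j) :
    Measure.map (fun x : Fin n → unitCircle => (x i, x j)) (Measure.pi fun _ => μ) = μ.prod μ := by
  refine (Measure.prod_eq fun s t hs ht => ?_).symm
  rw [Measure.map_apply ((measurable_pi_apply i).prodMk (measurable_pi_apply j)) (hs.prod ht)]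
  have hpre : (fun x : Fin n → unitCircle => (x i, x j)) ⁻¹' (s ×ˢ t) =
      Set.pi Set.univ (fun k => if k = i then s else if k = j then t else Set.univ) := by
    ext x
    simp only [Set.mem_preimage, Set.mem_prod, Set.mem_pi, Set.mem_univ, true_implies]
    constructor
    · rintro ⟨h1, h2⟩ k
      by_cases hki : k = i
      · subst hki; simpa using h1
      · by_cases hkj : k = j
        · subst hkj; simp [if_neg hki, h2]
        · simp [if_neg hki, if_neg hkj]
    · intro h
      constructor
      · have := h i; simpa using this
      · have := h j; simpa [if_neg hij.symm] using this
  rw [hpre, Measure.pi_pi]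
  have : (fun k : Fin n => μ (if k = i then s else if k = j then t else Set.univ)) =
      fun k => (if k = i then μ s else 1) * (if k = j then μ t else 1) := by
    funext k
    by_cases hki : k = i
    · subst hki; simp [if_neg hij, measure_univ]
    · by_cases hkj : k = j
      · subst hkj; simp [if_neg hki]
      · simp [if_neg hki, if_neg hkj, measure_univ]
  rw [this, Finset.prod_mul_distrib, Finset.prod_ite_eq' Finset.univ i (fun _ => μ s),
    Finset.prod_ite_eq' Finset.univ j (fun _ => μ t)]
  simp

/-- The upper bound: for any probability measure, the integral is at most `2/3`. -/
lemma OneChord.upper_bound {r : ℝ} (hr0 : 0 ≤ r) (hr1 : r < 1) (hr2 : r ^ 2 < 1 / 2)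
    (μ : Measure unitCircle) [IsProbabilityMeasure μ] :
    ∫⁻ x, μ (arcSet r x) ∂μ ≤ 2 / 3 := by
  classical
  set E : Set (unitCircle × unitCircle) :=
    {q | ‖(q.1 : Plane) + (q.2 : Plane)‖ ≤ 2 * r} with hE
  have hEmeas : MeasurableSet E := by
    have : Measurable fun q : unitCircle × unitCircle => ‖(q.1 : Plane) + (q.2 : Plane)‖ :=
      ((measurable_subtype_coe.comp measurable_fst).add
        (measurable_subtype_coe.comp measurable_snd)).norm
    exact measurableSet_le this measurable_const
  have harc : ∀ x : unitCircle,
      arcSet r x = {y : unitCircle | ‖(x : Plane) + (y : Plane)‖ ≤ 2 * r} := by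
    intro x
    ext y
    exact OneChord.chord_char hr0 hr1 (OneChord.norm_um x) (OneChord.norm_um y)
  have hstep : ∫⁻ x, μ (arcSet r x) ∂μ = (μ.prod μ) E := by
    rw [Measure.prod_apply hEmeas]
    refine lintegral_congr fun x => ?_
    rw [harc x]
    rfl
  rw [hstep]
  set a := (μ.prod μ) E with haE
  -- Key inequality for every n
  have key : ∀ n : ℕ, 3 * (((n * n - n : ℕ) : ℝ≥0∞) * a) ≤ 2 * (n : ℝ≥0∞) ^ 2 := by
    intro n
    set π' : Measure (Fin n → unitCircle) := Measure.pi fun _ => μ with hπ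
    set N : (Fin n → unitCircle) → ℕ :=
      fun x => ∑ i : Fin n, ∑ j : Fin n, if (x i, x j) ∈ E then 1 else 0 with hN
    have hpt : ∀ x, 3 * N x ≤ 2 * n ^ 2 := by
      intro x
      have hNx : N x = ∑ i ∈ Finset.univ,
          ((Finset.univ.filter (fun j : Fin n => (x i, x j) ∈ E)).card) := by
        rw [hN]
        exact Finset.sum_congr rfl fun i _ => (Finset.card_filter _ _).symm
      have hb := OneChord.turan_bound (fun i j : Fin n => (x i, x j) ∈ E)
        (fun i j h => by
          simp only [hE, Set.mem_setOf_eq] at h ⊢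
          rwa [add_comm] at h)
        (fun i h => by
          simp only [hE, Set.mem_setOf_eq] at h
          have : ‖(x i : Plane) + (x i : Plane)‖ = 2 := by
            rw [← two_smul ℝ ((x i : Plane)), norm_smul, OneChord.norm_um]; norm_num
          rw [this] at h
          linarith)
        (fun i j k l h1 h2 h3 h4 h5 h6 => by
          simp only [hE, Set.mem_setOf_eq] at h1 h2 h3 h4 h5 h6
          exact OneChord.no_four (OneChord.norm_um (x i)) (OneChord.norm_um (x j))
            (OneChord.norm_um (x k)) (OneChord.norm_um (x l))
            (OneChord.inner_neg hr2 hr0 (OneChord.norm_um _) (OneChord.norm_um _) h1)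
            (OneChord.inner_neg hr2 hr0 (OneChord.norm_um _) (OneChord.norm_um _) h2)
            (OneChord.inner_neg hr2 hr0 (OneChord.norm_um _) (OneChord.norm_um _) h3)
            (OneChord.inner_neg hr2 hr0 (OneChord.norm_um _) (OneChord.norm_um _) h4)
            (OneChord.inner_neg hr2 hr0 (OneChord.norm_um _) (OneChord.norm_um _) h5)
            (OneChord.inner_neg hr2 hr0 (OneChord.norm_um _) (OneChord.norm_um _) h6))
        Finset.univ
      rw [← hNx] at hb
      simpa [Finset.card_univ] using hb
    have hpremeas : ∀ i j : Fin n,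
        MeasurableSet ((fun x : Fin n → unitCircle => (x i, x j)) ⁻¹' E) := fun i j =>
      ((measurable_pi_apply i).prodMk (measurable_pi_apply j)) hEmeas
    have hNmeas : Measurable fun x => (N x : ℝ≥0∞) := by
      refine measurable_from_top.comp ?_
      rw [hN]
      refine Finset.measurable_sum _ fun i _ => Finset.measurable_sum _ fun j _ => ?_
      exact Measurable.ite (hpremeas i j) measurable_const measurable_const
    have hcast : ∀ x, (N x : ℝ≥0∞) = ∑ i : Fin n, ∑ j : Fin n,
        Set.indicator ((fun y : Fin n → unitCircle => (y i, y j)) ⁻¹' E)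
          (fun _ => (1 : ℝ≥0∞)) x := by
      intro x
      rw [hN]
      push_cast
      refine Finset.sum_congr rfl fun i _ => Finset.sum_congr rfl fun j _ => ?_
      rw [Set.indicator_apply]
      simp [Set.mem_preimage]
    have hintN : ∫⁻ x, (N x : ℝ≥0∞) ∂π' = ∑ i : Fin n, ∑ j : Fin n,
        π' ((fun y : Fin n → unitCircle => (y i, y j)) ⁻¹' E) := by
      rw [lintegral_congr hcast]
      rw [lintegral_finset_sum _ (fun i _ => Finset.measurable_sum _ fun j _ =>
        measurable_const.indicator (hpremeas i j))]
      refine Finset.sum_congr rfl fun i _ => ?_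
      rw [lintegral_finset_sum _ (fun j _ => measurable_const.indicator (hpremeas i j))]
      exact Finset.sum_congr rfl fun j _ => lintegral_indicator_one (hpremeas i j)
    have hoff : ∀ i j : Fin n, i ≠ j →
        π' ((fun y : Fin n → unitCircle => (y i, y j)) ⁻¹' E) = a := by
      intro i j hij
      rw [haE, ← OneChord.map_pair μ hij,
        Measure.map_apply ((measurable_pi_apply i).prodMk (measurable_pi_apply j)) hEmeas]
    have hlow : ((n * n - n : ℕ) : ℝ≥0∞) * a ≤ ∫⁻ x, (N x : ℝ≥0∞) ∂π' := by
      rw [hintN, ← Finset.sum_product']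
      have hsub : (Finset.univ : Finset (Fin n)).offDiag ⊆ Finset.univ ×ˢ Finset.univ := by
        intro p _; simp
      have hsum := Finset.sum_le_sum_of_subset (f := fun p : Fin n × Fin n =>
        π' ((fun y : Fin n → unitCircle => (y p.1, y p.2)) ⁻¹' E)) hsub
      have heq : ∑ p ∈ (Finset.univ : Finset (Fin n)).offDiag,
          π' ((fun y : Fin n → unitCircle => (y p.1, y p.2)) ⁻¹' E)
          = ((n * n - n : ℕ) : ℝ≥0∞) * a := by
        rw [Finset.sum_congr rfl (fun p hp => hoff p.1 p.2 (Finset.mem_offDiag.1 hp).2.2)]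
        rw [Finset.sum_const, Finset.offDiag_card, Finset.card_univ, Fintype.card_fin,
          nsmul_eq_mul]
      rw [← heq]
      exact hsum
    have hup : 3 * ∫⁻ x, (N x : ℝ≥0∞) ∂π' ≤ 2 * (n : ℝ≥0∞) ^ 2 := by
      rw [← lintegral_const_mul 3 hNmeas]
      calc ∫⁻ x, 3 * (N x : ℝ≥0∞) ∂π'
          ≤ ∫⁻ _, (2 * (n : ℝ≥0∞) ^ 2) ∂π' := by
            refine lintegral_mono fun x => ?_
            have := hpt x
            calc 3 * (N x : ℝ≥0∞) = ((3 * N x : ℕ) : ℝ≥0∞) := by push_cast; ring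
            _ ≤ ((2 * n ^ 2 : ℕ) : ℝ≥0∞) := by exact_mod_cast Nat.cast_le.mpr this
            _ = 2 * (n : ℝ≥0∞) ^ 2 := by push_cast; ring
        _ = 2 * (n : ℝ≥0∞) ^ 2 := by simp [lintegral_const, measure_univ]
    calc 3 * (((n * n - n : ℕ) : ℝ≥0∞) * a) ≤ 3 * ∫⁻ x, (N x : ℝ≥0∞) ∂π' := by
          exact mul_le_mul_right hlow 3
      _ ≤ 2 * (n : ℝ≥0∞) ^ 2 := hup
  -- Pass to the limit
  have ha1 : a ≤ 1 := prob_le_one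
  have hane : a ≠ ⊤ := (lt_of_le_of_lt ha1 ENNReal.one_lt_top).ne
  set α := a.toReal with hα
  have hα0 : 0 ≤ α := ENNReal.toReal_nonneg
  have hreal : ∀ n : ℕ, 1 ≤ n → 3 * (((n : ℝ) * n - n) * α) ≤ 2 * (n : ℝ) ^ 2 := by
    intro n hn
    have h := key n
    have hrhs : (2 * (n : ℝ≥0∞) ^ 2) ≠ ⊤ := by
      refine ENNReal.mul_ne_top (by simp) ?_
      exact ENNReal.pow_ne_top (ENNReal.natCast_ne_top n)
    have := ENNReal.toReal_mono hrhs h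
    rw [ENNReal.toReal_mul, ENNReal.toReal_mul, ENNReal.toReal_mul] at this
    simp only [ENNReal.toReal_ofNat, ENNReal.toReal_natCast, ENNReal.toReal_pow] at this
    rw [← hα] at this
    have hcast : ((n * n - n : ℕ) : ℝ) = (n : ℝ) * n - n := by
      have : n ≤ n * n := Nat.le_mul_of_pos_left n (by omega)
      push_cast [Nat.cast_sub this]
      ring
    rw [hcast] at this
    linarith
  have hαle : α ≤ 2 / 3 := by
    by_contra hgt
    push_neg at hgt
    have hε : 0 < 3 * α - 2 := by linarith
    obtain ⟨n, hn⟩ := exists_nat_gt (3 * α / (3 * α - 2))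
    have hdivpos : 0 < 3 * α / (3 * α - 2) := div_pos (by linarith) hε
    have hn1 : 1 ≤ n := by
      by_contra hn0
      push_neg at hn0
      interval_cases n
      · simp at hn; linarith
    have h := hreal n hn1
    have hnpos : (0 : ℝ) < n := by exact_mod_cast hn1
    rw [div_lt_iff₀ hε] at hn
    nlinarith [mul_lt_mul_of_pos_left hn hnpos]
  have h23 : ((2 : ℝ≥0∞) / 3).toReal = 2 / 3 := by
    rw [ENNReal.toReal_div]
    norm_num
  rw [← ENNReal.toReal_le_toReal hane ((ENNReal.div_lt_top (by norm_num) (by norm_num)).ne : (2 : ℝ≥0∞) / 3 ≠ ⊤), h23]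
  exact hαle

/-! ### The extremal measure: the equilateral triangle -/

namespace OneChord

def pA : Plane := !₂[1, 0]
def pB : Plane := !₂[-(1/2), Real.sqrt 3 / 2]
def pC : Plane := !₂[-(1/2), -(Real.sqrt 3 / 2)]

lemma sqrt3_sq : Real.sqrt 3 ^ 2 = 3 := Real.sq_sqrt (by norm_num)

lemma normA : ‖pA‖ = 1 := norm_eq_one_of (by simp [pA])
lemma normB : ‖pB‖ = 1 := norm_eq_one_of (by simp [pB]; nlinarith [sqrt3_sq])
lemma normC : ‖pC‖ = 1 := norm_eq_one_of (by simp [pC]; nlinarith [sqrt3_sq])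
lemma normAB : ‖pA + pB‖ = 1 := by
  have h0 : (pA + pB) 0 = 1 / 2 := by simp [pA, pB]; norm_num
  have h1 : (pA + pB) 1 = Real.sqrt 3 / 2 := by simp [pA, pB]
  exact norm_eq_one_of (by rw [h0, h1]; nlinarith [sqrt3_sq])
lemma normAC : ‖pA + pC‖ = 1 := by
  have h0 : (pA + pC) 0 = 1 / 2 := by simp [pA, pC]; norm_num
  have h1 : (pA + pC) 1 = -(Real.sqrt 3 / 2) := by simp [pA, pC]
  exact norm_eq_one_of (by rw [h0, h1]; nlinarith [sqrt3_sq])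
lemma normBC : ‖pB + pC‖ = 1 := by
  have h0 : (pB + pC) 0 = -1 := by simp [pB, pC]; norm_num
  have h1 : (pB + pC) 1 = 0 := by simp [pB, pC]
  exact norm_eq_one_of (by rw [h0, h1]; norm_num)

lemma sqrt3_pos : 0 < Real.sqrt 3 := Real.sqrt_pos.2 (by norm_num)

lemma pA_ne_pB : pA ≠ pB := by
  intro h
  have : pA 0 = pB 0 := by rw [h]
  simp [pA, pB] at this
  norm_num at this
lemma pA_ne_pC : pA ≠ pC := by
  intro h
  have : pA 0 = pC 0 := by rw [h]
  simp [pA, pC] at this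
  norm_num at this
lemma pB_ne_pC : pB ≠ pC := by
  intro h
  have : pB 1 = pC 1 := by rw [h]
  simp [pB, pC] at this
  nlinarith [sqrt3_pos, this]

def uA : unitCircle := ⟨pA, by show pA ∈ Metric.sphere (0:Plane) 1; exact mem_sphere_zero_iff_norm.2 normA⟩
def uB : unitCircle := ⟨pB, by show pB ∈ Metric.sphere (0:Plane) 1; exact mem_sphere_zero_iff_norm.2 normB⟩
def uC : unitCircle := ⟨pC, by show pC ∈ Metric.sphere (0:Plane) 1; exact mem_sphere_zero_iff_norm.2 normC⟩

lemma uA_ne_uB : uA ≠ uB := fun h => pA_ne_pB (congrArg Subtype.val h)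
lemma uA_ne_uC : uA ≠ uC := fun h => pA_ne_pC (congrArg Subtype.val h)
lemma uB_ne_uC : uB ≠ uC := fun h => pB_ne_pC (congrArg Subtype.val h)

lemma lower_bound {r : ℝ} (hr0 : 1 / 2 < r) (hrA : 0 ≤ r) (hrB : r < 1) :
    ∃ μ : Measure unitCircle, IsProbabilityMeasure μ ∧
      2 / 3 ≤ ∫⁻ x, μ (arcSet r x) ∂μ := by
  classical
  set μ : Measure unitCircle :=
    (3 : ℝ≥0∞)⁻¹ • (Measure.dirac uA + Measure.dirac uB + Measure.dirac uC) with hμ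
  have harc : ∀ x : unitCircle,
      arcSet r x = {y : unitCircle | ‖(x : Plane) + (y : Plane)‖ ≤ 2 * r} := by
    intro x
    ext y
    exact chord_char hrA hrB (mem_sphere_zero_iff_norm.mp x.2) (mem_sphere_zero_iff_norm.mp y.2)
  have h31 : (3 : ℝ≥0∞) ≠ 0 := by norm_num
  have h32 : (3 : ℝ≥0∞) ≠ ⊤ := by norm_num
  have hprob : IsProbabilityMeasure μ := by
    constructor
    rw [hμ]
    simp only [Measure.smul_apply, Measure.add_apply, measure_univ, smul_eq_mul]
    rw [show (1 + 1 + 1 : ℝ≥0∞) = 3 by norm_num]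
    exact ENNReal.inv_mul_cancel h31 h32
  refine ⟨μ, hprob, ?_⟩
  -- lower bounds for the three point masses
  have hfA : 3⁻¹ * 2 ≤ μ (arcSet r uA) := by
    have hsub : ({uB, uC} : Set unitCircle) ⊆ arcSet r uA := by
      intro y hy
      rw [harc]
      rcases hy with rfl | rfl
      · show ‖pA + pB‖ ≤ 2 * r
        rw [normAB]; linarith
      · show ‖pA + pC‖ ≤ 2 * r
        rw [normAC]; linarith
    refine le_trans (le_of_eq ?_) (measure_mono hsub)
    rw [hμ]
    simp only [Measure.smul_apply, Measure.add_apply, smul_eq_mul]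
    rw [Measure.dirac_apply, Measure.dirac_apply, Measure.dirac_apply]
    simp only [Set.indicator_apply, Set.mem_insert_iff, Set.mem_singleton_iff, uA_ne_uB,
      uA_ne_uC, false_or, or_false, if_true, if_false, Pi.one_apply]
    norm_num
  have hfB : 3⁻¹ * 2 ≤ μ (arcSet r uB) := by
    have hsub : ({uA, uC} : Set unitCircle) ⊆ arcSet r uB := by
      intro y hy
      rw [harc]
      rcases hy with rfl | rfl
      · show ‖pB + pA‖ ≤ 2 * r
        rw [add_comm, normAB]; linarith
      · show ‖pB + pC‖ ≤ 2 * r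
        rw [normBC]; linarith
    refine le_trans (le_of_eq ?_) (measure_mono hsub)
    rw [hμ]
    simp only [Measure.smul_apply, Measure.add_apply, smul_eq_mul]
    rw [Measure.dirac_apply, Measure.dirac_apply, Measure.dirac_apply]
    simp only [Set.indicator_apply, Set.mem_insert_iff, Set.mem_singleton_iff,
      Ne.symm uA_ne_uB, uB_ne_uC, false_or, or_false, if_true, if_false, Pi.one_apply]
    norm_num
  have hfC : 3⁻¹ * 2 ≤ μ (arcSet r uC) := by
    have hsub : ({uA, uB} : Set unitCircle) ⊆ arcSet r uC := by
      intro y hy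
      rw [harc]
      rcases hy with rfl | rfl
      · show ‖pC + pA‖ ≤ 2 * r
        rw [add_comm, normAC]; linarith
      · show ‖pC + pB‖ ≤ 2 * r
        rw [add_comm, normBC]; linarith
    refine le_trans (le_of_eq ?_) (measure_mono hsub)
    rw [hμ]
    simp only [Measure.smul_apply, Measure.add_apply, smul_eq_mul]
    rw [Measure.dirac_apply, Measure.dirac_apply, Measure.dirac_apply]
    simp only [Set.indicator_apply, Set.mem_insert_iff, Set.mem_singleton_iff,
      Ne.symm uA_ne_uC, Ne.symm uB_ne_uC, false_or, or_false, if_true, if_false, Pi.one_apply]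
    norm_num
  have hlint : ∀ f : unitCircle → ℝ≥0∞, ∫⁻ x, f x ∂μ = 3⁻¹ * (f uA + f uB + f uC) := by
    intro f
    rw [hμ, lintegral_smul_measure, lintegral_add_measure, lintegral_add_measure,
      lintegral_dirac, lintegral_dirac, lintegral_dirac, smul_eq_mul]
  calc (2 : ℝ≥0∞) / 3 = 3⁻¹ * ((3⁻¹ * 2) + (3⁻¹ * 2) + (3⁻¹ * 2)) := by
        rw [show ((3:ℝ≥0∞)⁻¹ * 2) + (3⁻¹ * 2) + (3⁻¹ * 2) = 3 * (3⁻¹ * 2) by ring,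
          ← mul_assoc, ENNReal.inv_mul_cancel h31 h32, one_mul, ENNReal.div_eq_inv_mul]
    _ ≤ 3⁻¹ * (μ (arcSet r uA) + μ (arcSet r uB) + μ (arcSet r uC)) :=
        mul_le_mul_right (add_le_add (add_le_add hfA hfB) hfC) _
    _ = ∫⁻ x, μ (arcSet r x) ∂μ := (hlint (fun x => μ (arcSet r x))).symm
end OneChord

/-- **The one-chord problem just above 1/2.** For every `r` with `1/2 < r < sin(3π/14)`, the
supremum over all Borel probability measures `μ` on the unit circle of `∫ μ(I_r(x)) dμ(x)`
equals `2/3`. -/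
theorem one_chord_sup_eq_two_thirds (r : ℝ) (hr0 : 1 / 2 < r)
    (hr1 : r < Real.sin (3 * π / 14)) :
    (⨆ (μ : Measure unitCircle) (_ : IsProbabilityMeasure μ),
        ∫⁻ x, μ (arcSet r x) ∂μ) = 2 / 3 := by
  obtain ⟨hA, hB, hC⟩ := OneChord.r_facts hr0 hr1
  apply le_antisymm
  · refine iSup_le fun μ => iSup_le fun hμ => ?_
    haveI := hμ
    exact OneChord.upper_bound hA hB hC μ
  · obtain ⟨μ, hμ, hge⟩ := OneChord.lower_bound hr0 hA hB
    exact le_iSup₂_of_le μ hμ hge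

end
end

section
/- For every r ∈ [0,1] there exists a Borel probability measure ν_r on S¹ such that P_{ν_r}(ℓ ≤ r) = sup_μ P_μ(ℓ ≤ r), the supremum taken over all Borel probability measures μ on S¹. -/
open MeasureTheory Real
open scoped ENNReal

noncomputable section

namespace Chord

open Set Filter
open scoped Topology

instance : BorelSpace (↥unitCircle × ↥unitCircle × ↥unitCircle × ↥unitCircle) := Prod.borelSpace

def cross (a b : Plane) : ℝ := a 0 * b 1 - a 1 * b 0

lemma inner_eq (a b : Plane) : (inner ℝ a b : ℝ) = a 0 * b 0 + a 1 * b 1 := by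
  simp [PiLp.inner_apply, Fin.sum_univ_two, mul_comm]

lemma norm_sq (x : Plane) (hx : ‖x‖ = 1) : x 0 ^ 2 + x 1 ^ 2 = 1 := by
  have h : (inner ℝ x x : ℝ) = 1 := by
    rw [real_inner_self_eq_norm_sq, hx]; norm_num
  rw [inner_eq] at h; nlinarith

lemma mem_chordLine_iff {x y : Plane} (hx : ‖x‖ = 1) (hy : ‖y‖ = 1) (p : Plane) :
    p ∈ chordLine x y ↔
      cross (p - x) (p - y) = 0 ∧ (inner ℝ p (x + y) : ℝ) = 1 + inner ℝ x y := by
  classical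
  by_cases h : x = y
  · subst h
    simp only [chordLine, eq_self_iff_true, if_true, Set.mem_setOf_eq]
    constructor
    · intro hp
      refine ⟨by simp only [cross]; ring, ?_⟩
      rw [inner_add_right, hp, real_inner_self_eq_norm_sq, hx]; norm_num
    · rintro ⟨-, h2⟩
      rw [inner_add_right, real_inner_self_eq_norm_sq, hx] at h2
      rw [inner_eq] at h2 ⊢
      linarith
  · simp only [chordLine, if_neg h, SetLike.mem_coe]
    constructor
    · intro hp
      have := hp  -- p ∈ affineSpan
      have hmem : (p - x) +ᵥ x ∈ affineSpan ℝ ({x, y} : Set Plane) := by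
        simpa using hp
      rw [vadd_left_mem_affineSpan_pair] at hmem
      obtain ⟨t, ht⟩ := hmem
      have hpx : p - x = t • (y - x) := by simpa [vsub_eq_sub] using ht.symm
      have hp0 : p 0 = x 0 + t * (y 0 - x 0) := by
        have := congrFun (congrArg (fun z : Plane => (z : Fin 2 → ℝ)) hpx) 0
        simp [PiLp.sub_apply, PiLp.smul_apply, smul_eq_mul] at this
        linarith
      have hp1 : p 1 = x 1 + t * (y 1 - x 1) := by
        have := congrFun (congrArg (fun z : Plane => (z : Fin 2 → ℝ)) hpx) 1
        simp [PiLp.sub_apply, PiLp.smul_apply, smul_eq_mul] at this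
        linarith
      have hxs := norm_sq x hx
      have hys := norm_sq y hy
      constructor
      · simp only [cross, PiLp.sub_apply]
        rw [hp0, hp1]; ring
      · simp only [inner_add_right, inner_eq]
        rw [hp0, hp1]
        linear_combination hxs + t * hys - t * hxs
    · rintro ⟨h1, -⟩
      -- from cross = 0 deduce p - x = t • (y - x)
      have hyx : y - x ≠ 0 := sub_ne_zero.mpr (Ne.symm h)
      have hc : (p 0 - x 0) * (y 1 - x 1) = (p 1 - x 1) * (y 0 - x 0) := by
        have h1' : (p 0 - x 0) * (p 1 - y 1) - (p 1 - x 1) * (p 0 - y 0) = 0 := by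
          simpa [cross, PiLp.sub_apply] using h1
        nlinarith [h1']
      have hex : ∃ t : ℝ, p - x = t • (y - x) := by
        by_cases h0 : y 0 - x 0 ≠ 0
        · refine ⟨(p 0 - x 0) / (y 0 - x 0), ?_⟩
          ext i
          fin_cases i <;>
            simp only [PiLp.sub_apply, PiLp.smul_apply, smul_eq_mul, Fin.zero_eta, Fin.mk_one] <;>
            field_simp <;> nlinarith [hc]
        · push_neg at h0
          have h0' : y 0 - x 0 = 0 := h0
          have h1ne : y 1 - x 1 ≠ 0 := by
            intro hcc
            apply hyx
            ext i; fin_cases i <;> simp [PiLp.sub_apply] <;> linarith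
          refine ⟨(p 1 - x 1) / (y 1 - x 1), ?_⟩
          ext i
          fin_cases i <;>
            simp only [PiLp.sub_apply, PiLp.smul_apply, smul_eq_mul, Fin.zero_eta, Fin.mk_one] <;>
            field_simp <;> nlinarith [hc, h0']
      obtain ⟨t, ht⟩ := hex
      have : (p - x) +ᵥ x ∈ affineSpan ℝ ({x, y} : Set Plane) := by
        rw [vadd_left_mem_affineSpan_pair]
        exact ⟨t, by simpa [vsub_eq_sub] using ht.symm⟩
      simpa using this


instance : CompactSpace ↥unitCircle :=
  isCompact_iff_compactSpace.mp (isCompact_sphere 0 1)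

lemma norm_coe (x : unitCircle) : ‖(x : Plane)‖ = 1 :=
  mem_sphere_zero_iff_norm.mp x.2

abbrev Quad := (↥unitCircle × ↥unitCircle × ↥unitCircle × ↥unitCircle)

lemma continuous_cross {α : Type*} [TopologicalSpace α] {f g : α → Plane}
    (hf : Continuous f) (hg : Continuous g) : Continuous (fun a => cross (f a) (g a)) := by
  unfold cross
  exact (((PiLp.continuous_apply 2 (fun _ : Fin 2 => ℝ) 0).comp hf).mul ((PiLp.continuous_apply 2 (fun _ : Fin 2 => ℝ) 1).comp hg)).sub
    (((PiLp.continuous_apply 2 (fun _ : Fin 2 => ℝ) 1).comp hf).mul ((PiLp.continuous_apply 2 (fun _ : Fin 2 => ℝ) 0).comp hg))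

lemma isClosed_quadSetLE (r : ℝ) : IsClosed (quadSetLE r) := by
  classical
  set C : Set (Quad × Plane) :=
    {z | ‖z.2‖ ≤ r ∧
      (cross (z.2 - (z.1.1 : Plane)) (z.2 - (z.1.2.1 : Plane)) = 0 ∧
        (inner ℝ z.2 ((z.1.1 : Plane) + (z.1.2.1 : Plane)) : ℝ)
          = 1 + inner ℝ (z.1.1 : Plane) (z.1.2.1 : Plane)) ∧
      (cross (z.2 - (z.1.2.2.1 : Plane)) (z.2 - (z.1.2.2.2 : Plane)) = 0 ∧
        (inner ℝ z.2 ((z.1.2.2.1 : Plane) + (z.1.2.2.2 : Plane)) : ℝ)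
          = 1 + inner ℝ (z.1.2.2.1 : Plane) (z.1.2.2.2 : Plane))} with hC
  have hx1 : Continuous (fun z : Quad × Plane => (z.1.1 : Plane)) :=
    continuous_subtype_val.comp (continuous_fst.comp continuous_fst)
  have hx2 : Continuous (fun z : Quad × Plane => (z.1.2.1 : Plane)) :=
    continuous_subtype_val.comp (continuous_fst.comp (continuous_snd.comp continuous_fst))
  have hx3 : Continuous (fun z : Quad × Plane => (z.1.2.2.1 : Plane)) :=
    continuous_subtype_val.comp
      (continuous_fst.comp (continuous_snd.comp (continuous_snd.comp continuous_fst)))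
  have hx4 : Continuous (fun z : Quad × Plane => (z.1.2.2.2 : Plane)) :=
    continuous_subtype_val.comp
      (continuous_snd.comp (continuous_snd.comp (continuous_snd.comp continuous_fst)))
  have hp : Continuous (fun z : Quad × Plane => z.2) := continuous_snd
  have hCc : IsClosed C := by
    refine IsClosed.inter ?_ (IsClosed.inter (IsClosed.inter ?_ ?_) (IsClosed.inter ?_ ?_))
    · exact isClosed_le (continuous_norm.comp hp) continuous_const
    · exact isClosed_eq (continuous_cross (hp.sub hx1) (hp.sub hx2)) continuous_const
    · exact isClosed_eq (hp.inner (hx1.add hx2)) (continuous_const.add (hx1.inner hx2))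
    · exact isClosed_eq (continuous_cross (hp.sub hx3) (hp.sub hx4)) continuous_const
    · exact isClosed_eq (hp.inner (hx3.add hx4)) (continuous_const.add (hx3.inner hx4))
  have hCsub : C ⊆ (Set.univ : Set Quad) ×ˢ Metric.closedBall (0 : Plane) r := by
    rintro ⟨q, p⟩ hz
    exact ⟨trivial, by simpa [Metric.mem_closedBall, dist_zero_right] using hz.1⟩
  have hCcomp : IsCompact C :=
    IsCompact.of_isClosed_subset (isCompact_univ.prod (isCompact_closedBall _ _)) hCc hCsub
  have himg : quadSetLE r = Prod.fst '' C := by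
    ext q
    constructor
    · rintro ⟨p, hpr, h1, h2⟩
      refine ⟨(q, p), ⟨hpr, ?_, ?_⟩, rfl⟩
      · exact (mem_chordLine_iff (norm_coe _) (norm_coe _) p).mp h1
      · exact (mem_chordLine_iff (norm_coe _) (norm_coe _) p).mp h2
    · rintro ⟨⟨q', p⟩, ⟨hpr, h1, h2⟩, rfl⟩
      exact ⟨p, hpr, (mem_chordLine_iff (norm_coe _) (norm_coe _) p).mpr h1,
        (mem_chordLine_iff (norm_coe _) (norm_coe _) p).mpr h2⟩
  rw [himg]
  exact (hCcomp.image continuous_fst).isClosed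


/-- The point (cos t, sin t) of the unit circle. -/
def pt (t : ℝ) : Plane := (WithLp.equiv 2 (Fin 2 → ℝ)).symm ![Real.cos t, Real.sin t]

@[simp] lemma pt_zero (t : ℝ) : pt t 0 = Real.cos t := rfl
@[simp] lemma pt_one (t : ℝ) : pt t 1 = Real.sin t := rfl

lemma pt_mem (t : ℝ) : pt t ∈ unitCircle := by
  rw [unitCircle, mem_sphere_zero_iff_norm, EuclideanSpace.norm_eq]
  simp only [Fin.sum_univ_two, pt]
  rw [show ‖((WithLp.equiv 2 (Fin 2 → ℝ)).symm ![Real.cos t, Real.sin t]) 0‖ ^ 2 +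
      ‖((WithLp.equiv 2 (Fin 2 → ℝ)).symm ![Real.cos t, Real.sin t]) 1‖ ^ 2 = 1 from by
    simp only [Real.norm_eq_abs, sq_abs]
    show Real.cos t ^ 2 + Real.sin t ^ 2 = 1
    simpa [add_comm] using Real.sin_sq_add_cos_sq t]
  exact Real.sqrt_one

/-- Parametrization ℝ → S¹. -/
def toCircle (t : ℝ) : ↥unitCircle := ⟨pt t, pt_mem t⟩

lemma continuous_toCircle : Continuous toCircle := by
  refine Continuous.subtype_mk ?_ _
  refine (PiLp.continuous_toLp 2 _).comp (continuous_pi ?_)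
  intro i
  fin_cases i
  · simpa using Real.continuous_cos
  · simpa using Real.continuous_sin

/-- The angle of a point on the circle, in [0, 2π). -/
def angle (x : ↥unitCircle) : ℝ :=
  if (x : Plane) 1 < 0 then 2 * π - Real.arccos ((x : Plane) 0)
  else Real.arccos ((x : Plane) 0)

lemma coord_sq (x : ↥unitCircle) : ((x:Plane) 0) ^ 2 + ((x:Plane) 1) ^ 2 = 1 := by
  have h : ‖(x : Plane)‖ = 1 := norm_coe x
  rw [EuclideanSpace.norm_eq] at h
  have := congrArg (fun s => s ^ 2) h
  simp only [Fin.sum_univ_two] at this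
  rw [Real.sq_sqrt (by positivity), one_pow] at this
  simpa [Real.norm_eq_abs, sq_abs] using this

lemma coord0_mem (x : ↥unitCircle) : (x:Plane) 0 ∈ Set.Icc (-1:ℝ) 1 := by
  have := coord_sq x
  constructor <;> nlinarith

lemma angle_mem (x : ↥unitCircle) : angle x ∈ Set.Icc 0 (2 * π) := by
  unfold angle
  have h1 := Real.arccos_nonneg ((x:Plane) 0)
  have h2 := Real.arccos_le_pi ((x:Plane) 0)
  have hπ := Real.pi_pos
  split <;> constructor <;> linarith

lemma toCircle_angle (x : ↥unitCircle) : toCircle (angle x) = x := by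
  have hsq := coord_sq x
  have h0 := coord0_mem x
  have hcos : Real.cos (Real.arccos ((x:Plane) 0)) = (x:Plane) 0 :=
    Real.cos_arccos h0.1 h0.2
  have hsin : Real.sin (Real.arccos ((x:Plane) 0)) = Real.sqrt (1 - ((x:Plane) 0) ^ 2) :=
    Real.sin_arccos _
  have habs : Real.sqrt (1 - ((x:Plane) 0) ^ 2) = |(x:Plane) 1| := by
    rw [show (1 : ℝ) - ((x:Plane) 0) ^ 2 = ((x:Plane) 1) ^ 2 by linarith]
    exact Real.sqrt_sq_eq_abs _
  apply Subtype.ext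
  ext i
  fin_cases i
  · show pt (angle x) 0 = (x:Plane) 0
    rw [pt_zero]
    unfold angle
    split
    · rw [Real.cos_sub]; simp [hcos]
    · exact hcos
  · show pt (angle x) 1 = (x:Plane) 1
    rw [pt_one]
    unfold angle
    split
    · next hneg =>
      rw [Real.sin_sub]
      simp [hsin, habs, abs_of_neg hneg]
    · next hpos =>
      push_neg at hpos
      rw [hsin, habs, abs_of_nonneg hpos]

lemma measurable_angle : Measurable angle := by
  have hc0 : Continuous (fun x : ↥unitCircle => (x : Plane) 0) :=
    (PiLp.continuous_apply 2 (fun _ : Fin 2 => ℝ) 0).comp continuous_subtype_val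
  have hc1 : Continuous (fun x : ↥unitCircle => (x : Plane) 1) :=
    (PiLp.continuous_apply 2 (fun _ : Fin 2 => ℝ) 1).comp continuous_subtype_val
  have h1 : Measurable (fun x : ↥unitCircle => 2 * π - Real.arccos ((x:Plane) 0)) :=
    (continuous_const.sub (Real.continuous_arccos.comp hc0)).measurable
  have h2 : Measurable (fun x : ↥unitCircle => Real.arccos ((x:Plane) 0)) :=
    (Real.continuous_arccos.comp hc0).measurable
  exact Measurable.ite (measurableSet_lt hc1.measurable measurable_const) h1 h2


/-- 4-fold product measure. -/
def p4 (m : Measure ℝ) : Measure (ℝ × ℝ × ℝ × ℝ) := m.prod (m.prod (m.prod m))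

instance p4_prob (m : Measure ℝ) [IsProbabilityMeasure m] : IsProbabilityMeasure (p4 m) :=
  inferInstanceAs (IsProbabilityMeasure (m.prod (m.prod (m.prod m))))

lemma p4_box (m : Measure ℝ) [SFinite m] (s1 s2 s3 s4 : Set ℝ) :
    p4 m (s1 ×ˢ s2 ×ˢ s3 ×ˢ s4) = m s1 * (m s2 * (m s3 * m s4)) := by
  rw [p4, Measure.prod_prod, Measure.prod_prod, Measure.prod_prod]

lemma iUnion_Ioc_range (c : ℕ → ℝ) (hc : Monotone c) (M : ℕ) :
    ⋃ k ∈ Finset.range M, Ioc (c k) (c (k + 1)) = Ioc (c 0) (c M) := by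
  induction M with
  | zero => simp
  | succ M ih =>
    rw [Finset.range_add_one]
    rw [show (⋃ k ∈ insert M (Finset.range M), Ioc (c k) (c (k+1)))
        = (⋃ k ∈ Finset.range M, Ioc (c k) (c (k+1))) ∪ Ioc (c M) (c (M+1)) by
      simp [Set.union_comm]]
    rw [ih, Ioc_union_Ioc_eq_Ioc (hc (Nat.zero_le M)) (hc (Nat.le_succ M))]

theorem key_limit (mseq : ℕ → Measure ℝ) (hprob : ∀ n, IsProbabilityMeasure (mseq n))
    (hsupp : ∀ n, mseq n (Icc (0:ℝ) (2*π))ᶜ = 0)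
    {A : Set (ℝ × ℝ × ℝ × ℝ)} (hA : IsClosed A) {S : ℝ≥0∞}
    (hS : ∀ n, S ≤ p4 (mseq n) A + (n : ℝ≥0∞)⁻¹) :
    ∃ m : Measure ℝ, IsProbabilityMeasure m ∧ S ≤ p4 m A := by
  classical
  haveI := hprob
  -- the ultrafilter
  set 𝒰 : Ultrafilter ℕ := Ultrafilter.of atTop with h𝒰def
  have h𝒰 : (𝒰 : Filter ℕ) ≤ atTop := Ultrafilter.of_le _
  -- CDFs
  set F : ℕ → ℝ → ℝ := fun n t => ((mseq n) (Iic t)).toReal with hFdef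
  have hF01 : ∀ n t, F n t ∈ Icc (0:ℝ) 1 := by
    intro n t
    refine ⟨ENNReal.toReal_nonneg, ?_⟩
    have h := prob_le_one (μ := mseq n) (s := Iic t)
    simpa using ENNReal.toReal_mono (by simp) h
  have hFmono : ∀ n, Monotone (F n) := by
    intro n s t hst
    exact ENNReal.toReal_mono (measure_ne_top _ _) (measure_mono (Iic_subset_Iic.mpr hst))
  -- ultrafilter limits of the CDFs
  have hLex : ∀ t : ℝ, ∃ l ∈ Icc (0:ℝ) 1, Tendsto (fun n => F n t) (𝒰 : Filter ℕ) (𝓝 l) := by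
    intro t
    obtain ⟨l, hl, hconv⟩ := isCompact_Icc.ultrafilter_le_nhds (𝒰.map (fun n => F n t))
      (by rw [Ultrafilter.coe_map, le_principal_iff, mem_map]
          exact univ_mem' (fun n => hF01 n t))
    exact ⟨l, hl, by rwa [Ultrafilter.coe_map] at hconv⟩
  choose L hL01 hLtend using hLex
  have hLmono : Monotone L := fun s t hst =>
    le_of_tendsto_of_tendsto' (hLtend s) (hLtend t) (fun n => hFmono n hst)
  have hFlow : ∀ n, ∀ t : ℝ, t < 0 → F n t = 0 := by
    intro n t ht
    have : mseq n (Iic t) = 0 := by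
      refine measure_mono_null ?_ (hsupp n)
      intro x hx
      simp only [mem_compl_iff, mem_Icc, not_and_or, not_le]
      exact Or.inl (lt_of_le_of_lt hx ht)
    simp [hFdef, this]
  have hFhigh : ∀ n, ∀ t : ℝ, 2*π ≤ t → F n t = 1 := by
    intro n t ht
    have hIoi : mseq n (Ioi t) = 0 := by
      refine measure_mono_null ?_ (hsupp n)
      intro x hx
      simp only [mem_Ioi] at hx
      simp only [mem_compl_iff, mem_Icc, not_and_or, not_le]
      exact Or.inr (by linarith)
    have h1 : (1 : ℝ≥0∞) ≤ mseq n (Iic t) := by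
      have := measure_union_le (μ := mseq n) (Iic t) (Ioi t)
      rw [Iic_union_Ioi, measure_univ, hIoi, add_zero] at this
      exact this
    have : mseq n (Iic t) = 1 := le_antisymm prob_le_one h1
    simp [hFdef, this]
  have hLlow : ∀ t : ℝ, t < 0 → L t = 0 := by
    intro t ht
    refine tendsto_nhds_unique (hLtend t) ?_
    have : (fun n => F n t) = fun _ => (0:ℝ) := funext fun n => hFlow n t ht
    rw [this]; exact tendsto_const_nhds
  have hLhigh : ∀ t : ℝ, 2*π ≤ t → L t = 1 := by
    intro t ht
    refine tendsto_nhds_unique (hLtend t) ?_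
    have : (fun n => F n t) = fun _ => (1:ℝ) := funext fun n => hFhigh n t ht
    rw [this]; exact tendsto_const_nhds
  -- the Stieltjes function and its measure
  set G : StieltjesFunction ℝ := hLmono.stieltjesFunction with hGdef
  have hGeq : ∀ t, G t = Function.rightLim L t := fun t => hLmono.stieltjesFunction_eq t
  have hGlow : ∀ t : ℝ, t < 0 → G t = 0 := by
    intro t ht
    refine le_antisymm ?_ ?_
    · rw [hGeq]
      have := hLmono.rightLim_le (show t < t/2 by linarith)
      rw [hLlow (t/2) (by linarith)] at this
      exact this
    · rw [hGeq]
      have := hLmono.le_rightLim (le_refl t)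
      rw [hLlow t ht] at this
      exact this
  have hGhigh : ∀ t : ℝ, 2*π ≤ t → G t = 1 := by
    intro t ht
    refine le_antisymm ?_ ?_
    · rw [hGeq]
      have := hLmono.rightLim_le (show t < t + 1 by linarith)
      rw [hLhigh (t+1) (by linarith)] at this
      exact this
    · rw [hGeq]
      have := hLmono.le_rightLim (le_refl t)
      rw [hLhigh t ht] at this
      exact this
  set m : Measure ℝ := G.measure with hmdef
  have hmuniv : m univ = 1 := by
    have hbot : Tendsto (G : ℝ → ℝ) atBot (𝓝 0) := by
      refine Tendsto.congr' ?_ (tendsto_const_nhds (α := ℝ))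
      filter_upwards [eventually_le_atBot (-1 : ℝ)] with t ht
      exact (hGlow t (by linarith)).symm
    have htop : Tendsto (G : ℝ → ℝ) atTop (𝓝 1) := by
      refine Tendsto.congr' ?_ (tendsto_const_nhds (α := ℝ))
      filter_upwards [eventually_ge_atTop (2*π : ℝ)] with t ht
      exact (hGhigh t ht).symm
    rw [hmdef, G.measure_univ hbot htop]
    norm_num
  haveI hmprob : IsProbabilityMeasure m := ⟨hmuniv⟩
  -- continuity points
  set D : Set ℝ := {t | ¬ContinuousAt L t} with hDdef
  have hDcount : D.Countable := hLmono.countable_not_continuousAt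
  have hGL : ∀ t ∉ D, G t = L t := by
    intro t ht
    rw [hGeq]
    have hct : ContinuousAt L t := not_not.mp (fun h => ht h)
    exact hLmono.continuousWithinAt_Ioi_iff_rightLim_eq.mp hct.continuousWithinAt
  -- convergence on good intervals
  have hbox : ∀ a b : ℝ, a ∉ D → b ∉ D → a ≤ b →
      Tendsto (fun n => mseq n (Ioc a b)) (𝒰 : Filter ℕ) (𝓝 (m (Ioc a b))) := by
    intro a b ha hb hab
    have hm_ab : m (Ioc a b) = ENNReal.ofReal (L b - L a) := by
      rw [hmdef, G.measure_Ioc, hGL a ha, hGL b hb]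
    have hn_ab : ∀ n, mseq n (Ioc a b) = ENNReal.ofReal (F n b - F n a) := by
      intro n
      have hsub : Iic b \ Iic a = Ioc a b := Iic_sdiff_Iic
      have hle : Iic a ⊆ Iic b := Iic_subset_Iic.mpr hab
      rw [← hsub, measure_diff hle nullMeasurableSet_Iic (measure_ne_top _ _)]
      rw [hFdef]
      simp only
      rw [← ENNReal.toReal_sub_of_le (measure_mono hle) (measure_ne_top _ _)]
      exact (ENNReal.ofReal_toReal (by
        exact ne_top_of_le_ne_top (measure_ne_top _ _) (tsub_le_self))).symm
    rw [hm_ab]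
    simp_rw [hn_ab]
    exact (ENNReal.continuous_ofReal.tendsto _).comp ((hLtend b).sub (hLtend a))
  -- the compact core
  set Box : Set (ℝ × ℝ × ℝ × ℝ) :=
      (Icc (0:ℝ) (2*π)) ×ˢ (Icc (0:ℝ) (2*π)) ×ˢ (Icc (0:ℝ) (2*π)) ×ˢ (Icc (0:ℝ) (2*π))
      with hBoxdef
  set K : Set (ℝ × ℝ × ℝ × ℝ) := A ∩ Box with hKdef
  have hKclosed : IsClosed K :=
    hA.inter (isClosed_Icc.prod (isClosed_Icc.prod (isClosed_Icc.prod isClosed_Icc)))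
  have hKcompact : IsCompact K :=
    IsCompact.of_isClosed_subset
      (isCompact_Icc.prod (isCompact_Icc.prod (isCompact_Icc.prod isCompact_Icc)))
      hKclosed inter_subset_right
  -- the sequence measures see only the box
  have hp4A : ∀ n, p4 (mseq n) A = p4 (mseq n) K := by
    intro n
    have hBoxc : p4 (mseq n) Boxᶜ = 0 := by
      have hsub : Boxᶜ ⊆
          ((Icc (0:ℝ) (2*π))ᶜ ×ˢ (univ : Set (ℝ×ℝ×ℝ)))
          ∪ ((univ : Set ℝ) ×ˢ ((Icc (0:ℝ) (2*π))ᶜ ×ˢ (univ : Set (ℝ×ℝ))))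
          ∪ ((univ : Set ℝ) ×ˢ ((univ : Set ℝ) ×ˢ ((Icc (0:ℝ) (2*π))ᶜ ×ˢ (univ : Set ℝ))))
          ∪ ((univ : Set ℝ) ×ˢ ((univ : Set ℝ) ×ˢ ((univ : Set ℝ) ×ˢ (Icc (0:ℝ) (2*π))ᶜ))) := by
        rintro ⟨t1, t2, t3, t4⟩ ht
        simp only [hBoxdef, mem_prod, mem_compl_iff, not_and_or] at ht
        simp only [mem_union, mem_prod, mem_univ, mem_compl_iff, true_and, and_true]
        tauto
      refine measure_mono_null hsub ?_
      have e1 : p4 (mseq n) ((Icc (0:ℝ) (2*π))ᶜ ×ˢ (univ : Set (ℝ×ℝ×ℝ))) = 0 := by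
        rw [p4, Measure.prod_prod, hsupp n, zero_mul]
      have e2 : p4 (mseq n) ((univ : Set ℝ) ×ˢ ((Icc (0:ℝ) (2*π))ᶜ ×ˢ (univ : Set (ℝ×ℝ)))) = 0 := by
        rw [p4, Measure.prod_prod, Measure.prod_prod, hsupp n, zero_mul, mul_zero]
      have e3 : p4 (mseq n) ((univ : Set ℝ) ×ˢ ((univ : Set ℝ) ×ˢ ((Icc (0:ℝ) (2*π))ᶜ ×ˢ (univ : Set ℝ)))) = 0 := by
        rw [p4, Measure.prod_prod, Measure.prod_prod, Measure.prod_prod, hsupp n]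
        ring
      have e4 : p4 (mseq n) ((univ : Set ℝ) ×ˢ ((univ : Set ℝ) ×ˢ ((univ : Set ℝ) ×ˢ (Icc (0:ℝ) (2*π))ᶜ))) = 0 := by
        rw [p4, Measure.prod_prod, Measure.prod_prod, Measure.prod_prod, hsupp n]
        ring
      refine le_antisymm ?_ zero_le
      calc p4 (mseq n) _ ≤ _ + _ := measure_union_le _ _
        _ ≤ (_ + _) + _ := add_le_add_left (measure_union_le _ _) _
        _ ≤ ((_ + _) + _) + _ := add_le_add_left (add_le_add_left (measure_union_le _ _) _) _
        _ = 0 := by rw [e1, e2, e3, e4]; simp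
    refine le_antisymm ?_ (measure_mono inter_subset_left)
    calc p4 (mseq n) A ≤ p4 (mseq n) (K ∪ Boxᶜ) := by
          refine measure_mono ?_
          intro t ht
          by_cases hbx : t ∈ Box
          · exact Or.inl ⟨ht, hbx⟩
          · exact Or.inr hbx
      _ ≤ p4 (mseq n) K + p4 (mseq n) Boxᶜ := measure_union_le _ _
      _ = p4 (mseq n) K := by rw [hBoxc, add_zero]
  -- main estimate : S ≤ p4 m K
  have hmain : S ≤ p4 m K := by
    haveI : (p4 m).OuterRegular :=
      inferInstanceAs ((m.prod (m.prod (m.prod m))).OuterRegular)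
    haveI : IsFiniteMeasure (p4 m) :=
      inferInstanceAs (IsFiniteMeasure (m.prod (m.prod (m.prod m))))
    refine ENNReal.le_of_forall_pos_le_add ?_
    intro ε hε _
    -- outer regularity
    obtain ⟨U, hKU, hUopen, hU⟩ := Set.exists_isOpen_lt_add (μ := p4 m) (ε := (ε : ℝ≥0∞)) K
      (measure_ne_top _ _) (by exact_mod_cast hε.ne')
    obtain ⟨δ, hδpos, hthick⟩ := hKcompact.exists_thickening_subset_open hUopen hKU
    -- grid of good points
    set η : ℝ := min (δ/4) 1 with hηdef
    have hηpos : 0 < η := lt_min (by linarith) one_pos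
    have hη1 : η ≤ 1 := min_le_right _ _
    have hηδ : η ≤ δ/4 := min_le_left _ _
    have hDdense : Dense Dᶜ := hDcount.dense_compl ℝ
    have hcex : ∀ k : ℕ, ∃ t : ℝ, t ∈ Dᶜ ∧
        t ∈ Ioo (-1 + k * η - η/4) (-1 + k * η + η/4) := by
      intro k
      have hlt : (-1 + (k:ℝ) * η - η/4) < (-1 + (k:ℝ) * η + η/4) := by linarith
      obtain ⟨t, ht1, ht2⟩ := hDdense.exists_mem_open isOpen_Ioo (nonempty_Ioo.mpr hlt)
      exact ⟨t, ht1, ht2⟩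
    choose c hcD hcIoo using hcex
    have hcmono : ∀ k, c k < c (k+1) := by
      intro k
      have h1 := (hcIoo k).2
      have h2 := (hcIoo (k+1)).1
      push_cast at h1 h2 ⊢
      nlinarith
    have hcMono : Monotone c := monotone_nat_of_le_succ (fun k => (hcmono k).le)
    have hcgap : ∀ k, c (k+1) - c k < δ := by
      intro k
      have h1 := (hcIoo k).1
      have h2 := (hcIoo (k+1)).2
      push_cast at h1 h2
      nlinarith
    have hc0 : c 0 < 0 := by
      have := (hcIoo 0).2
      push_cast at this
      nlinarith
    set M : ℕ := ⌈(2*π + 3)/η⌉₊ with hMdef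
    have hcM : 2*π < c M := by
      have h1 := (hcIoo M).1
      have hM : (2*π + 3)/η ≤ (M : ℝ) := Nat.le_ceil _
      have hM2 : 2*π + 3 ≤ (M:ℝ) * η := by
        rw [div_le_iff₀ hηpos] at hM
        linarith
      nlinarith
    -- the cells
    set cell : ℕ × ℕ × ℕ × ℕ → Set (ℝ × ℝ × ℝ × ℝ) := fun j =>
      Ioc (c j.1) (c (j.1+1)) ×ˢ Ioc (c j.2.1) (c (j.2.1+1)) ×ˢ
        Ioc (c j.2.2.1) (c (j.2.2.1+1)) ×ˢ Ioc (c j.2.2.2) (c (j.2.2.2+1)) with hcelldef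
    set J : Finset (ℕ × ℕ × ℕ × ℕ) :=
      (((Finset.range M) ×ˢ ((Finset.range M) ×ˢ ((Finset.range M) ×ˢ (Finset.range M)))).filter
        (fun j => (cell j ∩ K).Nonempty)) with hJdef
    -- K covered by cells in J
    have hcover : K ⊆ ⋃ j ∈ J, cell j := by
      intro t ht
      have htB : t ∈ Box := ht.2
      have hcoord : ∀ s : ℝ, s ∈ Icc (0:ℝ) (2*π) → ∃ k < M, s ∈ Ioc (c k) (c (k+1)) := by
        intro s hs
        have : s ∈ Ioc (c 0) (c M) := ⟨lt_of_lt_of_le hc0 hs.1, hs.2.trans hcM.le⟩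
        rw [← iUnion_Ioc_range c hcMono M] at this
        simp only [mem_iUnion, Finset.mem_range, exists_prop] at this
        exact this
      obtain ⟨ht1, ht2, ht3, ht4⟩ := htB
      obtain ⟨k1, hk1, hm1⟩ := hcoord _ ht1
      obtain ⟨k2, hk2, hm2⟩ := hcoord _ ht2
      obtain ⟨k3, hk3, hm3⟩ := hcoord _ ht3
      obtain ⟨k4, hk4, hm4⟩ := hcoord _ ht4
      have hjmem : (k1, k2, k3, k4) ∈ J := by
        rw [hJdef, Finset.mem_filter]
        constructor
        · simp only [Finset.mem_product, Finset.mem_range]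
          exact ⟨hk1, hk2, hk3, hk4⟩
        · exact ⟨t, ⟨hm1, hm2, hm3, hm4⟩, ht⟩
      exact mem_biUnion hjmem ⟨hm1, hm2, hm3, hm4⟩
    -- each cell in J is inside U
    have hcellU : ∀ j ∈ J, cell j ⊆ U := by
      intro j hj
      rw [hJdef, Finset.mem_filter] at hj
      obtain ⟨z, hzc, hzK⟩ := hj.2
      intro w hw
      refine hthick ?_
      rw [Metric.mem_thickening_iff]
      refine ⟨z, hzK, ?_⟩
      have hd : ∀ k : ℕ, ∀ u v : ℝ, u ∈ Ioc (c k) (c (k+1)) → v ∈ Ioc (c k) (c (k+1)) →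
          dist u v < δ := by
        intro k u v hu hv
        rw [Real.dist_eq, abs_lt]
        have := hcgap k
        constructor <;> [nlinarith [hu.1, hu.2, hv.1, hv.2]; nlinarith [hu.1, hu.2, hv.1, hv.2]]
      obtain ⟨hw1, hw2, hw3, hw4⟩ := hw
      obtain ⟨hz1, hz2, hz3, hz4⟩ := hzc
      rw [Prod.dist_eq, Prod.dist_eq, Prod.dist_eq]
      have d1 := hd _ _ _ hw1 hz1
      have d2 := hd _ _ _ hw2 hz2
      have d3 := hd _ _ _ hw3 hz3
      have d4 := hd _ _ _ hw4 hz4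
      simp only [max_lt_iff]
      exact ⟨d1, d2, d3, d4⟩
    -- cells are pairwise disjoint
    have hIoc_disj : ∀ k k' : ℕ, k ≠ k' → ∀ s : ℝ,
        s ∈ Ioc (c k) (c (k+1)) → s ∈ Ioc (c k') (c (k'+1)) → False := by
      intro k k' hkk' s hs hs'
      rcases lt_or_gt_of_ne hkk' with h | h
      · have : c (k+1) ≤ c k' := hcMono h
        exact absurd (hs.2.trans this) (not_le.mpr hs'.1)
      · have : c (k'+1) ≤ c k := hcMono h
        exact absurd (hs'.2.trans this) (not_le.mpr hs.1)
    have hdisj : (J : Set (ℕ × ℕ × ℕ × ℕ)).PairwiseDisjoint cell := by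
      intro j hj j' hj' hne
      rw [Function.onFun, Set.disjoint_left]
      rintro ⟨t1, t2, t3, t4⟩ ht ht'
      obtain ⟨h1, h2, h3, h4⟩ := ht
      obtain ⟨h1', h2', h3', h4'⟩ := ht'
      have : j.1 = j'.1 := by
        by_contra hc'
        exact hIoc_disj _ _ hc' _ h1 h1'
      have e2 : j.2.1 = j'.2.1 := by
        by_contra hc'
        exact hIoc_disj _ _ hc' _ h2 h2'
      have e3 : j.2.2.1 = j'.2.2.1 := by
        by_contra hc'
        exact hIoc_disj _ _ hc' _ h3 h3'
      have e4 : j.2.2.2 = j'.2.2.2 := by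
        by_contra hc'
        exact hIoc_disj _ _ hc' _ h4 h4'
      exact hne (Prod.ext this (Prod.ext e2 (Prod.ext e3 e4)))
    have hcellmeas : ∀ j : ℕ × ℕ × ℕ × ℕ, MeasurableSet (cell j) := by
      intro j
      exact (measurableSet_Ioc.prod (measurableSet_Ioc.prod
        (measurableSet_Ioc.prod measurableSet_Ioc)))
    -- sum over cells converges
    have hcell_tendsto : ∀ j : ℕ × ℕ × ℕ × ℕ, (∀ i ∈ [j.1, j.2.1, j.2.2.1, j.2.2.2], True) →
        True := fun _ _ => trivial
    have hgood : ∀ k : ℕ, c k ∉ D := fun k => hcD k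
    have htendsto_cell : ∀ j : ℕ × ℕ × ℕ × ℕ,
        Tendsto (fun n => p4 (mseq n) (cell j)) (𝒰 : Filter ℕ) (𝓝 (p4 m (cell j))) := by
      intro j
      have hb1 := hbox _ _ (hgood j.1) (hgood (j.1+1)) (hcmono j.1).le
      have hb2 := hbox _ _ (hgood j.2.1) (hgood (j.2.1+1)) (hcmono j.2.1).le
      have hb3 := hbox _ _ (hgood j.2.2.1) (hgood (j.2.2.1+1)) (hcmono j.2.2.1).le
      have hb4 := hbox _ _ (hgood j.2.2.2) (hgood (j.2.2.2+1)) (hcmono j.2.2.2).le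
      have hrw : ∀ n, p4 (mseq n) (cell j) =
          mseq n (Ioc (c j.1) (c (j.1+1))) * (mseq n (Ioc (c j.2.1) (c (j.2.1+1))) *
            (mseq n (Ioc (c j.2.2.1) (c (j.2.2.1+1))) * mseq n (Ioc (c j.2.2.2) (c (j.2.2.2+1))))) :=
        fun n => p4_box _ _ _ _ _
      have hrwm : p4 m (cell j) =
          m (Ioc (c j.1) (c (j.1+1))) * (m (Ioc (c j.2.1) (c (j.2.1+1))) *
            (m (Ioc (c j.2.2.1) (c (j.2.2.1+1))) * m (Ioc (c j.2.2.2) (c (j.2.2.2+1))))) :=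
        p4_box _ _ _ _ _
      rw [hrwm]
      simp_rw [hrw]
      have h34 := ENNReal.Tendsto.mul hb3 (Or.inr (measure_ne_top _ _)) hb4
        (Or.inr (measure_ne_top _ _))
      have h234 := ENNReal.Tendsto.mul hb2 (Or.inr (ne_top_of_le_ne_top (by simp)
        (mul_le_one' prob_le_one prob_le_one))) h34 (Or.inr (measure_ne_top _ _))
      exact ENNReal.Tendsto.mul hb1 (Or.inr (ne_top_of_le_ne_top (by simp)
        (mul_le_one' prob_le_one (mul_le_one' prob_le_one prob_le_one)))) h234
        (Or.inr (measure_ne_top _ _))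
    have hsum_tendsto :
        Tendsto (fun n => ∑ j ∈ J, p4 (mseq n) (cell j)) (𝒰 : Filter ℕ)
          (𝓝 (∑ j ∈ J, p4 m (cell j))) :=
      tendsto_finset_sum _ (fun j _ => htendsto_cell j)
    -- the inequality chain
    have hchain : ∀ n, S ≤ (∑ j ∈ J, p4 (mseq n) (cell j)) + (n : ℝ≥0∞)⁻¹ := by
      intro n
      refine (hS n).trans (add_le_add_left ?_ _)
      rw [hp4A n]
      calc p4 (mseq n) K ≤ p4 (mseq n) (⋃ j ∈ J, cell j) := measure_mono hcover
        _ ≤ ∑ j ∈ J, p4 (mseq n) (cell j) := measure_biUnion_finset_le _ _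
    have hrhs_tendsto :
        Tendsto (fun n => (∑ j ∈ J, p4 (mseq n) (cell j)) + (n : ℝ≥0∞)⁻¹) (𝒰 : Filter ℕ)
          (𝓝 ((∑ j ∈ J, p4 m (cell j)) + 0)) := by
      exact Tendsto.add hsum_tendsto (ENNReal.tendsto_inv_nat_nhds_zero.mono_left h𝒰)
    have hle : S ≤ (∑ j ∈ J, p4 m (cell j)) + 0 :=
      ge_of_tendsto' hrhs_tendsto hchain |>.trans (le_refl _) |> (fun h => h)
    rw [add_zero] at hle
    have hsum_eq : ∑ j ∈ J, p4 m (cell j) = p4 m (⋃ j ∈ J, cell j) :=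
      (measure_biUnion_finset hdisj (fun j _ => hcellmeas j)).symm
    have hUnion_le : p4 m (⋃ j ∈ J, cell j) ≤ p4 m U := by
      refine measure_mono ?_
      intro t ht
      rw [mem_iUnion₂] at ht
      obtain ⟨j, hj, htj⟩ := ht
      exact hcellU j hj htj
    calc S ≤ ∑ j ∈ J, p4 m (cell j) := hle
      _ = p4 m (⋃ j ∈ J, cell j) := hsum_eq
      _ ≤ p4 m U := hUnion_le
      _ ≤ p4 m K + ε := hU.le
  exact ⟨m, hmprob, hmain.trans (measure_mono inter_subset_left)⟩


/-- The quadruple parametrization map. -/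
def qmap : ℝ × ℝ × ℝ × ℝ → Quad :=
  Prod.map toCircle (Prod.map toCircle (Prod.map toCircle toCircle))

lemma measurable_qmap : Measurable qmap :=
  (continuous_toCircle.measurable).prodMap
    ((continuous_toCircle.measurable).prodMap
      ((continuous_toCircle.measurable).prodMap continuous_toCircle.measurable))

lemma continuous_qmap : Continuous qmap :=
  (continuous_toCircle.prodMap
    (continuous_toCircle.prodMap (continuous_toCircle.prodMap continuous_toCircle)))

lemma p4_map (m : Measure ℝ) [IsProbabilityMeasure m] :
    ((m.map toCircle).prod ((m.map toCircle).prod ((m.map toCircle).prod (m.map toCircle))))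
      = (p4 m).map qmap := by
  have hm : Measurable toCircle := continuous_toCircle.measurable
  rw [p4, qmap]
  rw [Measure.map_prod_map _ _ hm hm]
  rw [Measure.map_prod_map _ _ hm ((hm.prodMap hm))]
  rw [Measure.map_prod_map _ _ hm ((hm.prodMap (hm.prodMap hm)))]

lemma probLE_map (m : Measure ℝ) [IsProbabilityMeasure m] (r : ℝ) :
    probLE (m.map toCircle) r = p4 m (qmap ⁻¹' quadSetLE r) := by
  rw [probLE, p4_map m, Measure.map_apply measurable_qmap (isClosed_quadSetLE r).measurableSet]

theorem exists_maximiser (r : ℝ) :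
    ∃ νr : Measure unitCircle, IsProbabilityMeasure νr ∧
      probLE νr r = ⨆ (μ : Measure unitCircle) (_ : IsProbabilityMeasure μ), probLE μ r := by
  classical
  set S : ℝ≥0∞ := ⨆ (μ : Measure unitCircle) (_ : IsProbabilityMeasure μ), probLE μ r with hSdef
  -- a default probability measure
  have hSle1 : S ≤ 1 := by
    rw [hSdef]
    refine iSup₂_le fun μ hμ => ?_
    haveI := hμ
    exact prob_le_one
  -- approximate maximisers
  have happrox : ∀ n : ℕ, ∃ μ : Measure unitCircle,
      IsProbabilityMeasure μ ∧ S ≤ probLE μ r + (n : ℝ≥0∞)⁻¹ := by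
    intro n
    have hεne : ((n : ℝ≥0∞))⁻¹ ≠ 0 := ENNReal.inv_ne_zero.mpr (ENNReal.natCast_ne_top n)
    by_cases hcase : S ≤ (n : ℝ≥0∞)⁻¹
    · refine ⟨Measure.dirac (toCircle 0), inferInstance, ?_⟩
      exact hcase.trans le_add_self
    · push_neg at hcase
      have hSne0 : S ≠ 0 := by
        intro h; rw [h] at hcase; exact (not_lt.mpr zero_le) hcase
      have hSneTop : S ≠ ⊤ := ne_top_of_le_ne_top (by simp) hSle1
      have hsub : S - (n : ℝ≥0∞)⁻¹ < S :=
        ENNReal.sub_lt_self hSneTop hSne0 hεne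
      rw [hSdef] at hsub
      rw [lt_iSup_iff] at hsub
      obtain ⟨μ, hμ⟩ := hsub
      rw [lt_iSup_iff] at hμ
      obtain ⟨hμprob, hlt⟩ := hμ
      refine ⟨μ, hμprob, ?_⟩
      calc S ≤ (S - (n : ℝ≥0∞)⁻¹) + (n : ℝ≥0∞)⁻¹ := le_tsub_add
        _ ≤ probLE μ r + (n : ℝ≥0∞)⁻¹ := add_le_add_left hlt.le _
  choose μseq hμprob hμle using happrox
  haveI := hμprob
  -- push to the real line
  set mseq : ℕ → Measure ℝ := fun n => (μseq n).map angle with hmseqdef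
  have hmprob : ∀ n, IsProbabilityMeasure (mseq n) :=
    fun n => Measure.isProbabilityMeasure_map measurable_angle.aemeasurable
  have hmsupp : ∀ n, mseq n (Icc (0:ℝ) (2*π))ᶜ = 0 := by
    intro n
    rw [hmseqdef]
    rw [Measure.map_apply measurable_angle measurableSet_Icc.compl]
    have : angle ⁻¹' (Icc (0:ℝ) (2*π))ᶜ = ∅ := by
      ext x
      simp only [mem_preimage, mem_compl_iff, mem_empty_iff_false, iff_false, not_not]
      exact angle_mem x
    rw [this, measure_empty]
  have hback : ∀ n, (mseq n).map toCircle = μseq n := by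
    intro n
    rw [hmseqdef]
    rw [Measure.map_map continuous_toCircle.measurable measurable_angle]
    have : toCircle ∘ angle = id := funext toCircle_angle
    rw [this, Measure.map_id]
  set A : Set (ℝ × ℝ × ℝ × ℝ) := qmap ⁻¹' quadSetLE r with hAdef
  have hAclosed : IsClosed A := (isClosed_quadSetLE r).preimage continuous_qmap
  have hSbound : ∀ n, S ≤ p4 (mseq n) A + (n : ℝ≥0∞)⁻¹ := by
    intro n
    have := probLE_map (mseq n) r
    rw [hback n] at this
    rw [hAdef, ← this]
    exact hμle n
  obtain ⟨m, hm, hSm⟩ := key_limit mseq hmprob hmsupp hAclosed hSbound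
  haveI := hm
  refine ⟨m.map toCircle, Measure.isProbabilityMeasure_map continuous_toCircle.measurable.aemeasurable, ?_⟩
  refine le_antisymm ?_ ?_
  · exact le_iSup₂ (f := fun (μ : Measure unitCircle) (_ : IsProbabilityMeasure μ) => probLE μ r)
      (m.map toCircle) (Measure.isProbabilityMeasure_map continuous_toCircle.measurable.aemeasurable)
  · rw [probLE_map m r]
    exact hSm


end Chord

/-- **Existence of extremisers for the closed problem.** For every `r ∈ [0,1]` there is a
Borel probability measure `ν_r` on the unit circle with
`P_{ν_r}(ℓ ≤ r) = sup_μ P_μ(ℓ ≤ r)`. -/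
theorem exists_maximiser_probLE (r : ℝ) (hr0 : 0 ≤ r) (hr1 : r ≤ 1) :
    ∃ νr : Measure unitCircle, IsProbabilityMeasure νr ∧
      probLE νr r = ⨆ (μ : Measure unitCircle) (_ : IsProbabilityMeasure μ), probLE μ r := by
  exact Chord.exists_maximiser r

end
end

section
/- Fix r ∈ [0,1] and let F_r ⊆ (S¹)⁴ be the set of quadruples (x₁,x₂,x₃,x₄) for which there exists p ∈ ℝ² with ‖p‖₂ ≤ r lying on both aff(x₁,x₂) and aff(x₃,x₄), and write G_r(λ) = (λ⊗λ⊗λ⊗λ)(F_r). Suppose the Borel probability measure μ on S¹ is a local maximum of G_r, in the sense that there exists ε₀ > 0 such that for every ε ∈ (0, ε₀) and every Borel probability measure ν on S¹, G_r((1−ε)μ + εν) ≤ G_r(μ). Then for every Borel probability measure ν on S¹, (ν⊗μ⊗μ⊗μ)(F_r) ≤ G_r(μ). -/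
open MeasureTheory Real
open scoped ENNReal

noncomputable section

/-! ### Auxiliary lemmas -/

section Helpers
variable {α β γ : Type*} [MeasurableSpace α] [MeasurableSpace β] [MeasurableSpace γ]

lemma finSmul (c : ℝ≥0∞) (hc : c ≠ ∞) (μ : Measure α) [IsFiniteMeasure μ] :
    IsFiniteMeasure (c • μ) :=
  ⟨by simpa [lt_top_iff_ne_top] using ENNReal.mul_ne_top hc (measure_ne_top μ _)⟩

lemma smulProd (c : ℝ≥0∞) (hc : c ≠ ∞) (μ : Measure α) (ν : Measure β)
    [IsFiniteMeasure μ] [IsFiniteMeasure ν] : (c • μ).prod ν = c • μ.prod ν := by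
  haveI := finSmul c hc μ
  refine Measure.prod_eq fun s t hs ht => ?_
  simp [Measure.prod_prod, mul_assoc]

lemma prodSmul (c : ℝ≥0∞) (hc : c ≠ ∞) (μ : Measure α) (ν : Measure β)
    [IsFiniteMeasure μ] [IsFiniteMeasure ν] : μ.prod (c • ν) = c • μ.prod ν := by
  haveI := finSmul c hc ν
  refine Measure.prod_eq fun s t hs ht => ?_
  simp [Measure.prod_prod, mul_left_comm]

lemma mixProd {a b : ℝ≥0∞} (ha : a ≠ ∞) (hb : b ≠ ∞) (μ ν : Measure α) (ρ : Measure β)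
    [IsFiniteMeasure μ] [IsFiniteMeasure ν] [IsFiniteMeasure ρ] :
    (a • μ + b • ν).prod ρ = a • μ.prod ρ + b • ν.prod ρ := by
  rw [Measure.add_prod, smulProd a ha, smulProd b hb]

lemma prodMix {a b : ℝ≥0∞} (ha : a ≠ ∞) (hb : b ≠ ∞) (ρ : Measure α) (μ ν : Measure β)
    [IsFiniteMeasure μ] [IsFiniteMeasure ν] [IsFiniteMeasure ρ] :
    ρ.prod (a • μ + b • ν) = a • ρ.prod μ + b • ρ.prod ν := by
  rw [Measure.prod_add, prodSmul a ha, prodSmul b hb]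

lemma prodMonoRight (ρ : Measure α) [SFinite ρ] {κ κ' : Measure β}
    [IsFiniteMeasure κ] [IsFiniteMeasure κ'] (h : κ ≤ κ') : ρ.prod κ ≤ ρ.prod κ' := by
  haveI : IsFiniteMeasure (κ' - κ) :=
    ⟨lt_of_le_of_lt (Measure.le_iff'.mp Measure.sub_le Set.univ) (measure_lt_top κ' _)⟩
  calc ρ.prod κ ≤ ρ.prod κ + ρ.prod (κ' - κ) := Measure.le_add_right le_rfl
    _ = ρ.prod (κ + (κ' - κ)) := (Measure.prod_add _).symm
    _ = ρ.prod κ' := by rw [add_comm, Measure.sub_add_cancel_of_le h]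

lemma prodMonoLeft (ρ : Measure β) [SFinite ρ] {κ κ' : Measure α}
    [IsFiniteMeasure κ] [IsFiniteMeasure κ'] (h : κ ≤ κ') : κ.prod ρ ≤ κ'.prod ρ := by
  haveI : IsFiniteMeasure (κ' - κ) :=
    ⟨lt_of_le_of_lt (Measure.le_iff'.mp Measure.sub_le Set.univ) (measure_lt_top κ' _)⟩
  calc κ.prod ρ ≤ κ.prod ρ + (κ' - κ).prod ρ := Measure.le_add_right le_rfl
    _ = (κ + (κ' - κ)).prod ρ := (Measure.add_prod _).symm
    _ = κ'.prod ρ := by rw [add_comm, Measure.sub_add_cancel_of_le h]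

/-- swap of the first two coordinates in `α × α × β`. -/
def swap12E (α β : Type*) [MeasurableSpace α] [MeasurableSpace β] :
    α × α × β ≃ᵐ α × α × β :=
  MeasurableEquiv.prodAssoc.symm.trans
    ((MeasurableEquiv.prodComm.prodCongr (MeasurableEquiv.refl β)).trans
      MeasurableEquiv.prodAssoc)

lemma swap12E_apply (x y : α) (z : β) : swap12E α β (x, y, z) = (y, x, z) := rfl

lemma swap12_measurePreserving (μ1 μ2 : Measure α) (ρ : Measure β)
    [SFinite μ1] [SFinite μ2] [SFinite ρ] :
    MeasurePreserving (swap12E α β) (μ1.prod (μ2.prod ρ)) (μ2.prod (μ1.prod ρ)) := by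
  have h1 : MeasurePreserving (MeasurableEquiv.prodAssoc.symm)
      (μ1.prod (μ2.prod ρ)) ((μ1.prod μ2).prod ρ) :=
    (measurePreserving_prodAssoc μ1 μ2 ρ).symm _
  have h2 : MeasurePreserving (MeasurableEquiv.prodComm.prodCongr (MeasurableEquiv.refl β))
      ((μ1.prod μ2).prod ρ) ((μ2.prod μ1).prod ρ) := by
    have : MeasurePreserving (Prod.map Prod.swap (id : β → β))
        ((μ1.prod μ2).prod ρ) ((μ2.prod μ1).prod ρ) :=
      (Measure.measurePreserving_swap).prod (MeasurePreserving.id ρ)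
    exact this
  have h3 : MeasurePreserving (MeasurableEquiv.prodAssoc)
      ((μ2.prod μ1).prod ρ) (μ2.prod (μ1.prod ρ)) :=
    measurePreserving_prodAssoc μ2 μ1 ρ
  exact (h3.comp (h2.comp h1) : _)

/-- swap of the two pairs in `α × α × α × α`. -/
def pairSwapE (α : Type*) [MeasurableSpace α] :
    α × α × α × α ≃ᵐ α × α × α × α :=
  MeasurableEquiv.prodAssoc.symm.trans
    (MeasurableEquiv.prodComm.trans MeasurableEquiv.prodAssoc)

lemma pairSwapE_apply (a b c d : α) : pairSwapE α (a, b, c, d) = (c, d, a, b) := rfl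

lemma pairSwap_measurePreserving (μ1 μ2 μ3 μ4 : Measure α)
    [SFinite μ1] [SFinite μ2] [SFinite μ3] [SFinite μ4] :
    MeasurePreserving (pairSwapE α) (μ1.prod (μ2.prod (μ3.prod μ4)))
      (μ3.prod (μ4.prod (μ1.prod μ2))) := by
  have h1 : MeasurePreserving (MeasurableEquiv.prodAssoc.symm)
      (μ1.prod (μ2.prod (μ3.prod μ4))) ((μ1.prod μ2).prod (μ3.prod μ4)) :=
    (measurePreserving_prodAssoc _ _ _).symm _
  have h2 : MeasurePreserving (MeasurableEquiv.prodComm (α := α × α) (β := α × α))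
      ((μ1.prod μ2).prod (μ3.prod μ4)) ((μ3.prod μ4).prod (μ1.prod μ2)) :=
    Measure.measurePreserving_swap
  have h3 : MeasurePreserving (MeasurableEquiv.prodAssoc)
      ((μ3.prod μ4).prod (μ1.prod μ2)) (μ3.prod (μ4.prod (μ1.prod μ2))) :=
    measurePreserving_prodAssoc _ _ _
  exact (h3.comp (h2.comp h1) : _)

/-- swap of the last two coordinates in `α × α × α × α`. -/
def swap34E (α : Type*) [MeasurableSpace α] :
    α × α × α × α ≃ᵐ α × α × α × α :=
  (MeasurableEquiv.refl α).prodCongr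
    ((MeasurableEquiv.refl α).prodCongr MeasurableEquiv.prodComm)

lemma swap34E_apply (a b c d : α) : swap34E α (a, b, c, d) = (a, b, d, c) := rfl

lemma swap34_measurePreserving (μ1 μ2 μ3 μ4 : Measure α)
    [SFinite μ1] [SFinite μ2] [SFinite μ3] [SFinite μ4] :
    MeasurePreserving (swap34E α) (μ1.prod (μ2.prod (μ3.prod μ4)))
      (μ1.prod (μ2.prod (μ4.prod μ3))) :=
  ((MeasurePreserving.id μ1).prod
    ((MeasurePreserving.id μ2).prod Measure.measurePreserving_swap) : _)

lemma key_ineq (μ ν : Measure α) [IsProbabilityMeasure μ] [IsProbabilityMeasure ν]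
    (F : Set (α × α × α × α)) {a b : ℝ≥0∞} (ha : a ≠ ∞) (hb : b ≠ ∞) :
    a^4 * ((μ.prod (μ.prod (μ.prod μ))) F)
      + a^3 * b * ((μ.prod (μ.prod (μ.prod ν))) F)
      + a^3 * b * ((μ.prod (μ.prod (ν.prod μ))) F)
      + a^3 * b * ((μ.prod (ν.prod (μ.prod μ))) F)
      + a^3 * b * ((ν.prod (μ.prod (μ.prod μ))) F)
      ≤ ((a • μ + b • ν).prod
          ((a • μ + b • ν).prod ((a • μ + b • ν).prod (a • μ + b • ν)))) F := by
  haveI := finSmul a ha μ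
  haveI := finSmul b hb ν
  set S : Measure α := a • μ + b • ν with hS
  haveI : IsFiniteMeasure S := by
    constructor
    rw [hS]
    simp only [Measure.add_apply, Measure.smul_apply, smul_eq_mul, measure_univ, mul_one]
    exact ENNReal.add_lt_top.mpr ⟨ha.lt_top, hb.lt_top⟩
  haveI := finSmul (a*a) (ENNReal.mul_ne_top ha ha) (μ.prod μ)
  haveI := finSmul (a*(a*a)) (ENNReal.mul_ne_top ha (ENNReal.mul_ne_top ha ha)) (μ.prod (μ.prod μ))
  -- basic lower bounds
  have hSμ : a • μ ≤ S := Measure.le_add_right le_rfl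
  have hT2 : (a*a) • (μ.prod μ) ≤ S.prod S := by
    have e1 : (a • μ).prod (a • μ) = (a*a) • (μ.prod μ) := by
      rw [smulProd a ha, prodSmul a ha, smul_smul]
    calc (a*a) • (μ.prod μ) = (a • μ).prod (a • μ) := e1.symm
      _ ≤ (a • μ).prod S := prodMonoRight _ hSμ
      _ ≤ S.prod S := prodMonoLeft _ hSμ
  have hT3 : (a*(a*a)) • (μ.prod (μ.prod μ)) ≤ S.prod (S.prod S) := by
    have e1 : (a • μ).prod ((a*a) • (μ.prod μ)) = (a*(a*a)) • (μ.prod (μ.prod μ)) := by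
      rw [smulProd a ha, prodSmul (a*a) (ENNReal.mul_ne_top ha ha), smul_smul]
    calc (a*(a*a)) • (μ.prod (μ.prod μ)) = (a • μ).prod ((a*a) • (μ.prod μ)) := e1.symm
      _ ≤ (a • μ).prod (S.prod S) := prodMonoRight _ hT2
      _ ≤ S.prod (S.prod S) := prodMonoLeft _ hSμ
  -- top-level split
  have top : (S.prod (S.prod (S.prod S))) F
      = a * ((μ.prod (S.prod (S.prod S))) F) + b * ((ν.prod (S.prod (S.prod S))) F) := by
    rw [hS, mixProd ha hb μ ν (((a • μ + b • ν)).prod ((a • μ + b • ν).prod (a • μ + b • ν)))]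
    simp [Measure.add_apply, Measure.smul_apply, smul_eq_mul]
  -- branch with ν in first slot
  have bν : (a*(a*a)) * ((ν.prod (μ.prod (μ.prod μ))) F) ≤ (ν.prod (S.prod (S.prod S))) F := by
    have h := prodMonoRight ν hT3
    calc (a*(a*a)) * ((ν.prod (μ.prod (μ.prod μ))) F)
        = (ν.prod ((a*(a*a)) • (μ.prod (μ.prod μ)))) F := by
          rw [prodSmul (a*(a*(a))) (by exact ENNReal.mul_ne_top ha (ENNReal.mul_ne_top ha ha))]
          simp [Measure.smul_apply, smul_eq_mul]
      _ ≤ (ν.prod (S.prod (S.prod S))) F := Measure.le_iff'.mp h F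
  -- branch with μ in first slot: split second slot
  have split2 : (μ.prod (S.prod (S.prod S))) F
      = a * ((μ.prod (μ.prod (S.prod S))) F) + b * ((μ.prod (ν.prod (S.prod S))) F) := by
    conv_lhs => rw [hS]
    rw [mixProd ha hb μ ν ((a • μ + b • ν).prod (a • μ + b • ν)), prodMix ha hb]
    rw [← hS]
    simp [Measure.add_apply, Measure.smul_apply, smul_eq_mul]
  have bν2 : (a*a) * ((μ.prod (ν.prod (μ.prod μ))) F) ≤ (μ.prod (ν.prod (S.prod S))) F := by
    have h1 : ν.prod ((a*a) • (μ.prod μ)) ≤ ν.prod (S.prod S) := prodMonoRight _ hT2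
    have h2 : μ.prod (ν.prod ((a*a) • (μ.prod μ))) ≤ μ.prod (ν.prod (S.prod S)) :=
      prodMonoRight _ h1
    calc (a*a) * ((μ.prod (ν.prod (μ.prod μ))) F)
        = (μ.prod (ν.prod ((a*a) • (μ.prod μ)))) F := by
          rw [prodSmul (a*a) (ENNReal.mul_ne_top ha ha),
            prodSmul (a*a) (ENNReal.mul_ne_top ha ha)]
          simp [Measure.smul_apply, smul_eq_mul]
      _ ≤ (μ.prod (ν.prod (S.prod S))) F := Measure.le_iff'.mp h2 F
  -- third slot split
  have split3 : (μ.prod (μ.prod (S.prod S))) F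
      = a * ((μ.prod (μ.prod (μ.prod S))) F) + b * ((μ.prod (μ.prod (ν.prod S))) F) := by
    conv_lhs => rw [hS]
    rw [show ((a•μ+b•ν).prod (a•μ+b•ν)) = a • (μ.prod (a•μ+b•ν)) + b • (ν.prod (a•μ+b•ν))
        from mixProd ha hb μ ν _,
      prodMix ha hb, prodMix ha hb]
    rw [← hS]
    simp [Measure.add_apply, Measure.smul_apply, smul_eq_mul]
  have bν3 : a * ((μ.prod (μ.prod (ν.prod μ))) F) ≤ (μ.prod (μ.prod (ν.prod S))) F := by
    have h1 : ν.prod (a • μ) ≤ ν.prod S := prodMonoRight _ hSμ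
    have h2 : μ.prod (μ.prod (ν.prod (a • μ))) ≤ μ.prod (μ.prod (ν.prod S)) :=
      prodMonoRight _ (prodMonoRight _ h1)
    calc a * ((μ.prod (μ.prod (ν.prod μ))) F)
        = (μ.prod (μ.prod (ν.prod (a • μ)))) F := by
          rw [prodSmul a ha, prodSmul a ha, prodSmul a ha]
          simp [Measure.smul_apply, smul_eq_mul]
      _ ≤ (μ.prod (μ.prod (ν.prod S))) F := Measure.le_iff'.mp h2 F
  -- innermost split
  have split4 : (μ.prod (μ.prod (μ.prod S))) F
      = a * ((μ.prod (μ.prod (μ.prod μ))) F) + b * ((μ.prod (μ.prod (μ.prod ν))) F) := by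
    conv_lhs => rw [hS]
    rw [prodMix ha hb μ μ ν, prodMix ha hb, prodMix ha hb]
    simp [Measure.add_apply, Measure.smul_apply, smul_eq_mul]
  -- assemble
  rw [top, split2, split3, split4]
  have goal_eq :
      a^4 * ((μ.prod (μ.prod (μ.prod μ))) F)
        + a^3 * b * ((μ.prod (μ.prod (μ.prod ν))) F)
        + a^3 * b * ((μ.prod (μ.prod (ν.prod μ))) F)
        + a^3 * b * ((μ.prod (ν.prod (μ.prod μ))) F)
        + a^3 * b * ((ν.prod (μ.prod (μ.prod μ))) F)
      = a * (a * (a * (a * ((μ.prod (μ.prod (μ.prod μ))) F)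
              + b * ((μ.prod (μ.prod (μ.prod ν))) F))
            + b * (a * ((μ.prod (μ.prod (ν.prod μ))) F)))
          + b * ((a*a) * ((μ.prod (ν.prod (μ.prod μ))) F)))
        + b * ((a*(a*a)) * ((ν.prod (μ.prod (μ.prod μ))) F)) := by ring
  rw [goal_eq]
  gcongr

end Helpers

/-- **Euler–Lagrange inequality for local maxima of `G_r`.** Fix `r ∈ [0,1]` and let
`G_r(λ) = (λ⊗λ⊗λ⊗λ)(F_r)` where `F_r = quadSetLE r`. If a Borel probability measure `μ` on
the unit circle is a local maximum of `G_r` along mixtures `(1-ε)μ + εν`, then for every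
Borel probability measure `ν`, `(ν⊗μ⊗μ⊗μ)(F_r) ≤ G_r(μ)`. -/
theorem local_max_quad_inequality (r : ℝ) (hr0 : 0 ≤ r) (hr1 : r ≤ 1)
    (μ : Measure unitCircle) [IsProbabilityMeasure μ]
    (hlocal : ∃ ε₀ : ℝ, 0 < ε₀ ∧
      ∀ ε : ℝ, 0 < ε → ε < ε₀ →
        ∀ (ν : Measure unitCircle), IsProbabilityMeasure ν →
          probLE (ENNReal.ofReal (1 - ε) • μ + ENNReal.ofReal ε • ν) r ≤ probLE μ r) :
    ∀ (ν : Measure unitCircle), IsProbabilityMeasure ν →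
      (ν.prod (μ.prod (μ.prod μ))) (quadSetLE r) ≤ probLE μ r := by
  obtain ⟨ε₀, hε₀, hloc⟩ := hlocal
  intro ν hν
  -- symmetry of `chordLine`
  have hcc : ∀ x y : Plane, chordLine x y = chordLine y x := by
    intro x y
    unfold chordLine
    rcases eq_or_ne x y with h | h
    · subst h; rfl
    · rw [if_neg h, if_neg (Ne.symm h), Set.pair_comm]
  -- invariance of the quadruple set
  have hs12 : (swap12E ↥unitCircle (↥unitCircle × ↥unitCircle)) ⁻¹' (quadSetLE r)
      = quadSetLE r := by
    ext ⟨x1, x2, x3, x4⟩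
    constructor <;> (rintro ⟨p, hp, h1, h2⟩; exact ⟨p, hp, (hcc _ _) ▸ h1, h2⟩)
  have hs34 : (swap34E ↥unitCircle) ⁻¹' (quadSetLE r) = quadSetLE r := by
    ext ⟨x1, x2, x3, x4⟩
    constructor <;> (rintro ⟨p, hp, h1, h2⟩; exact ⟨p, hp, h1, (hcc _ _) ▸ h2⟩)
  have hpair : (pairSwapE ↥unitCircle) ⁻¹' (quadSetLE r) = quadSetLE r := by
    ext ⟨x1, x2, x3, x4⟩
    constructor <;> (rintro ⟨p, hp, h1, h2⟩; exact ⟨p, hp, h2, h1⟩)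
  -- the four "one ν" terms agree
  have hA2 : (μ.prod (ν.prod (μ.prod μ))) (quadSetLE r)
      = (ν.prod (μ.prod (μ.prod μ))) (quadSetLE r) := by
    have mp := swap12_measurePreserving ν μ (μ.prod μ)
    rw [← mp.map_eq, MeasurableEquiv.map_apply, hs12]
  have hA3 : (μ.prod (μ.prod (ν.prod μ))) (quadSetLE r)
      = (ν.prod (μ.prod (μ.prod μ))) (quadSetLE r) := by
    have mp := pairSwap_measurePreserving ν μ μ μ
    rw [← mp.map_eq, MeasurableEquiv.map_apply, hpair]
  have hA4 : (μ.prod (μ.prod (μ.prod ν))) (quadSetLE r)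
      = (ν.prod (μ.prod (μ.prod μ))) (quadSetLE r) := by
    have mp := swap34_measurePreserving μ μ ν μ
    rw [← mp.map_eq, MeasurableEquiv.map_apply, hs34, hA3]
  set A := (ν.prod (μ.prod (μ.prod μ))) (quadSetLE r) with hA
  set M := probLE μ r with hM
  have hA1 : A ≤ 1 := prob_le_one
  have hM1 : M ≤ 1 := prob_le_one
  have hMne : M ≠ ∞ := (lt_of_le_of_lt hM1 ENNReal.one_lt_top).ne
  -- key inequality for small ε
  have key : ∀ ε : ℝ, 0 < ε → ε ≤ 1/2 → ε < ε₀ →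
      ENNReal.ofReal ((1-ε)^3) * A ≤ M := by
    intro ε h1 h2 h3
    have h0 : (0:ℝ) ≤ 1 - ε := by linarith
    set a := ENNReal.ofReal (1-ε) with ha
    set b := ENNReal.ofReal ε with hb
    have ha' : a ≠ ∞ := ENNReal.ofReal_ne_top
    have hb' : b ≠ ∞ := ENNReal.ofReal_ne_top
    have expand := key_ineq μ ν (quadSetLE r) ha' hb'
    have hup : ((a • μ + b • ν).prod
        ((a • μ + b • ν).prod ((a • μ + b • ν).prod (a • μ + b • ν)))) (quadSetLE r) ≤ M :=
      hloc ε h1 h3 ν hν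
    rw [hA2, hA3, hA4] at expand
    rw [← hA, show (μ.prod (μ.prod (μ.prod μ))) (quadSetLE r) = M from rfl] at expand
    have main : a^4 * M + (a^3*b*A + a^3*b*A + a^3*b*A + a^3*b*A) ≤ M := by
      calc a^4 * M + (a^3*b*A + a^3*b*A + a^3*b*A + a^3*b*A)
          = a^4 * M + a^3*b*A + a^3*b*A + a^3*b*A + a^3*b*A := by ring
        _ ≤ _ := le_trans expand hup
    -- rewrite M = a^4 M + (1 - a^4) M
    have ha4le : a^4 ≤ 1 := by
      rw [ha, ← ENNReal.ofReal_one]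
      rw [← ENNReal.ofReal_pow h0]
      exact ENNReal.ofReal_le_ofReal (pow_le_one₀ h0 (by linarith))
    have hsplit : M = a^4 * M + (1 - a^4) * M := by
      rw [← add_mul, add_tsub_cancel_of_le ha4le, one_mul]
    have main2 : a^4 * M + (a^3*b*A + a^3*b*A + a^3*b*A + a^3*b*A)
        ≤ a^4 * M + (1 - a^4) * M := by
      rw [← hsplit]; exact main
    have hcancel : a^3*b*A + a^3*b*A + a^3*b*A + a^3*b*A ≤ (1 - a^4) * M :=
      (ENNReal.add_le_add_iff_left
        (ENNReal.mul_ne_top (ENNReal.pow_ne_top ha') hMne)).mp main2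
    -- convert to real scalars
    have lhs_eq : a^3*b*A + a^3*b*A + a^3*b*A + a^3*b*A
        = ENNReal.ofReal (4*ε) * (ENNReal.ofReal ((1-ε)^3) * A) := by
      have e1 : ENNReal.ofReal ((1-ε)^3) * ENNReal.ofReal ε
          = ENNReal.ofReal ((1-ε)^3 * ε) :=
        (ENNReal.ofReal_mul (by positivity)).symm
      have e2 : (4:ℝ≥0∞) * ENNReal.ofReal ((1-ε)^3 * ε)
          = ENNReal.ofReal (4 * ((1-ε)^3 * ε)) := by
        rw [ENNReal.ofReal_mul (by norm_num : (0:ℝ) ≤ 4)]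
        norm_num
      have e3 : ENNReal.ofReal (4*ε) * ENNReal.ofReal ((1-ε)^3)
          = ENNReal.ofReal (4*ε*(1-ε)^3) :=
        (ENNReal.ofReal_mul (by positivity)).symm
      have h43 : (4:ℝ≥0∞) * (a^3*b) = ENNReal.ofReal (4*ε) * ENNReal.ofReal ((1-ε)^3) := by
        rw [ha, hb, ← ENNReal.ofReal_pow h0, e1, e2, e3]
        congr 1
        ring
      calc a^3*b*A + a^3*b*A + a^3*b*A + a^3*b*A = (4*(a^3*b))*A := by ring
        _ = (ENNReal.ofReal (4*ε) * ENNReal.ofReal ((1-ε)^3)) * A := by rw [h43]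
        _ = ENNReal.ofReal (4*ε) * (ENNReal.ofReal ((1-ε)^3) * A) := by rw [mul_assoc]
    have rhs_le : (1 - a^4) * M ≤ ENNReal.ofReal (4*ε) * M := by
      refine mul_le_mul_left ?_ M
      rw [ha, ← ENNReal.ofReal_pow h0, ← ENNReal.ofReal_one,
        ← ENNReal.ofReal_sub _ (by positivity)]
      refine ENNReal.ofReal_le_ofReal ?_
      have h4 : (0:ℝ) ≤ ε^2 * ((1-ε)^2 + 2*(1-ε) + 3) := by positivity
      nlinarith [h4]
    have final : ENNReal.ofReal (4*ε) * (ENNReal.ofReal ((1-ε)^3) * A)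
        ≤ ENNReal.ofReal (4*ε) * M := by
      rw [← lhs_eq]; exact le_trans hcancel rhs_le
    exact (ENNReal.mul_le_mul_iff_right
      (by simp [ENNReal.ofReal_eq_zero]; linarith) ENNReal.ofReal_ne_top).mp final
  -- pass to the limit ε → 0
  refine ENNReal.le_of_forall_pos_le_add fun η hη hMlt => ?_
  set δ : ℝ := min ((η:ℝ)/3) (min (1/2) (ε₀/2)) with hδ
  have hδpos : 0 < δ := by
    apply lt_min (by positivity)
    exact lt_min (by norm_num) (by positivity)
  have hδhalf : δ ≤ 1/2 := le_trans (min_le_right _ _) (min_le_left _ _)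
  have hδε₀ : δ < ε₀ := lt_of_le_of_lt (le_trans (min_le_right _ _) (min_le_right _ _))
    (by linarith)
  have hkey := key δ hδpos hδhalf hδε₀
  have hδ0 : (0:ℝ) ≤ 1 - δ := by linarith
  have hle1 : ENNReal.ofReal ((1-δ)^3) ≤ 1 := by
    rw [← ENNReal.ofReal_one]
    exact ENNReal.ofReal_le_ofReal (pow_le_one₀ hδ0 (by linarith))
  have hsplitA : A = ENNReal.ofReal ((1-δ)^3) * A + (1 - ENNReal.ofReal ((1-δ)^3)) * A := by
    rw [← add_mul, add_tsub_cancel_of_le hle1, one_mul]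
  have htail : (1 - ENNReal.ofReal ((1-δ)^3)) * A ≤ ENNReal.ofReal (3*δ) := by
    calc (1 - ENNReal.ofReal ((1-δ)^3)) * A ≤ (1 - ENNReal.ofReal ((1-δ)^3)) * 1 :=
        mul_le_mul_right hA1 _
      _ = 1 - ENNReal.ofReal ((1-δ)^3) := mul_one _
      _ ≤ ENNReal.ofReal (3*δ) := by
          rw [← ENNReal.ofReal_one, ← ENNReal.ofReal_sub _ (by positivity)]
          refine ENNReal.ofReal_le_ofReal ?_
          nlinarith [sq_nonneg δ, mul_nonneg hδpos.le (sq_nonneg δ)]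
  have h3δ : ENNReal.ofReal (3*δ) ≤ (η : ℝ≥0∞) := by
    have : (3:ℝ)*δ ≤ (η:ℝ) := by
      have := min_le_left ((η:ℝ)/3) (min (1/2) (ε₀/2))
      linarith [this]
    calc ENNReal.ofReal (3*δ) ≤ ENNReal.ofReal (η:ℝ) := ENNReal.ofReal_le_ofReal this
      _ = (η : ℝ≥0∞) := ENNReal.ofReal_coe_nnreal
  calc A = ENNReal.ofReal ((1-δ)^3) * A + (1 - ENNReal.ofReal ((1-δ)^3)) * A := hsplitA
    _ ≤ M + ENNReal.ofReal (3*δ) := add_le_add hkey htail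
    _ ≤ M + (η : ℝ≥0∞) := add_le_add le_rfl h3δ

end
end

section
/- For every Borel probability measure μ on S¹, ∫_{S¹} ∫_{S¹} (‖x + y‖₂ / 2) dμ(x) dμ(y) ≥ 1/2 (equivalently, for X, Y independent with law μ, the expected distance from the line aff(X,Y) to the origin is at least 1/2). Moreover, equality holds if and only if μ = (1/2)(δ_p + δ_{−p}) for some p ∈ S¹. -/
open MeasureTheory Real
open scoped ENNReal

noncomputable section

/-! ### Auxiliary lemmas -/

instance : CompactSpace unitCircle := by unfold unitCircle; infer_instance

lemma uc_norm (x : unitCircle) : ‖(x:Plane)‖ = 1 := by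
  have := x.2; simpa [unitCircle, mem_sphere_iff_norm] using this

lemma uc_le (x y : unitCircle) :
    (1 + (inner ℝ (x:Plane) (y:Plane) : ℝ)) / 2 ≤ ‖(x:Plane) + (y:Plane)‖ / 2 := by
  have h2 : ‖(x:Plane) + (y:Plane)‖ ^ 2 = 2 + 2 * (inner ℝ (x:Plane) (y:Plane) : ℝ) := by
    rw [norm_add_sq_real, uc_norm, uc_norm]; ring
  have ht : ‖(x:Plane) + (y:Plane)‖ ≤ 2 := by
    calc ‖(x:Plane) + (y:Plane)‖ ≤ ‖(x:Plane)‖ + ‖(y:Plane)‖ := norm_add_le _ _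
    _ = 2 := by rw [uc_norm, uc_norm]; norm_num
  nlinarith [norm_nonneg ((x:Plane) + (y:Plane))]

lemma uc_eq_cases (x y : unitCircle)
    (h : ‖(x:Plane) + (y:Plane)‖ / 2 = (1 + (inner ℝ (x:Plane) (y:Plane) : ℝ)) / 2) :
    (y:Plane) = (x:Plane) ∨ (y:Plane) = -(x:Plane) := by
  have h2 : ‖(x:Plane) + (y:Plane)‖ ^ 2 = 2 + 2 * (inner ℝ (x:Plane) (y:Plane) : ℝ) := by
    rw [norm_add_sq_real, uc_norm, uc_norm]; ring
  set t := ‖(x:Plane) + (y:Plane)‖ with ht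
  have h0 : t * (t - 2) = 0 := by nlinarith
  rcases mul_eq_zero.1 h0 with h' | h'
  · right
    have h0 : (x:Plane) + (y:Plane) = 0 := by rwa [← norm_eq_zero]
    exact (neg_eq_of_add_eq_zero_right h0).symm
  · left
    have hs : (inner ℝ (x:Plane) (y:Plane) : ℝ) = 1 := by nlinarith
    exact ((inner_eq_one_iff_of_norm_eq_one (𝕜 := ℝ) (uc_norm x) (uc_norm y)).1 hs).symm

lemma integrable_dirac' {E : Type*} [NormedAddCommGroup E] {f : unitCircle → E}
    (hf : Continuous f) (a : unitCircle) : Integrable f (Measure.dirac a) :=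
  Continuous.integrable_of_hasCompactSupport hf (HasCompactSupport.of_compactSpace _)

lemma integral_half_diracs (p q : unitCircle) {f : unitCircle → ℝ} (hf : Continuous f) :
    ∫ x, f x ∂((2⁻¹ : ℝ≥0∞) • Measure.dirac p + (2⁻¹ : ℝ≥0∞) • Measure.dirac q)
      = (f p + f q) / 2 := by
  rw [integral_add_measure ((integrable_dirac' hf p).smul_measure (by simp))
      ((integrable_dirac' hf q).smul_measure (by simp)),
    integral_smul_measure, integral_smul_measure, integral_dirac, integral_dirac]
  simp [smul_eq_mul]
  ring

lemma measure_two_point {α : Type*} [MeasurableSpace α] [MeasurableSingletonClass α]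
    (μ : Measure α) (p q : α) (hpq : p ≠ q) (h : μ ({p, q}ᶜ) = 0) :
    μ = μ {p} • Measure.dirac p + μ {q} • Measure.dirac q := by
  ext s hs
  have hmeas : MeasurableSet ({p, q} : Set α) :=
    (measurableSet_singleton p).union (measurableSet_singleton q)
  have hdiff : μ (s \ {p, q}) = 0 :=
    measure_mono_null (Set.diff_subset_compl _ _) h
  have hsplit : μ s = μ (s ∩ {p, q}) := by
    rw [← measure_inter_add_diff s hmeas, hdiff, add_zero]
  rw [hsplit]
  simp only [Measure.add_apply, Measure.smul_apply, Measure.dirac_apply' _ hs, smul_eq_mul]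
  by_cases hp : p ∈ s <;> by_cases hq : q ∈ s
  · have : s ∩ {p, q} = {p, q} := by
      ext z; simp only [Set.mem_inter_iff, Set.mem_insert_iff, Set.mem_singleton_iff]
      constructor
      · tauto
      · rintro (rfl | rfl) <;> simp [hp, hq]
    rw [this, Set.insert_eq, measure_union (by simpa using hpq) (measurableSet_singleton q)]
    simp [Set.indicator_of_mem, hp, hq]
  · have : s ∩ {p, q} = {p} := by
      ext z; simp only [Set.mem_inter_iff, Set.mem_insert_iff, Set.mem_singleton_iff]
      constructor
      · rintro ⟨hz, rfl | rfl⟩ <;> simp_all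
      · rintro rfl; simp [hp]
    rw [this]
    simp [Set.indicator_of_mem, Set.indicator_of_notMem, hp, hq]
  · have : s ∩ {p, q} = {q} := by
      ext z; simp only [Set.mem_inter_iff, Set.mem_insert_iff, Set.mem_singleton_iff]
      constructor
      · rintro ⟨hz, rfl | rfl⟩ <;> simp_all
      · rintro rfl; simp [hq]
    rw [this]
    simp [Set.indicator_of_mem, Set.indicator_of_notMem, hp, hq]
  · have : s ∩ {p, q} = ∅ := by
      apply Set.eq_empty_iff_forall_notMem.2
      rintro z ⟨hz, rfl | rfl⟩ <;> simp_all [Set.mem_insert_iff]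
    rw [this]
    simp [Set.indicator_of_notMem, hp, hq]

section aux
variable (μ : Measure unitCircle) [IsProbabilityMeasure μ]

lemma int_coe : Integrable (fun x : unitCircle => (x : Plane)) μ :=
  Continuous.integrable_of_hasCompactSupport continuous_subtype_val
    (HasCompactSupport.of_compactSpace _)

lemma int_inner (x : Plane) : Integrable (fun y : unitCircle => (inner ℝ x (y:Plane) : ℝ)) μ :=
  Continuous.integrable_of_hasCompactSupport
    (continuous_const.inner continuous_subtype_val)
    (HasCompactSupport.of_compactSpace _)

lemma int_f : Integrable (fun p : unitCircle × unitCircle => ‖(p.1:Plane) + (p.2:Plane)‖/2)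
    (μ.prod μ) :=
  Continuous.integrable_of_hasCompactSupport
    (by fun_prop) (HasCompactSupport.of_compactSpace _)

lemma int_g : Integrable
    (fun p : unitCircle × unitCircle => (1 + (inner ℝ (p.1:Plane) (p.2:Plane) : ℝ))/2)
    (μ.prod μ) :=
  Continuous.integrable_of_hasCompactSupport
    ((continuous_const.add ((continuous_subtype_val.comp continuous_fst).inner
      (continuous_subtype_val.comp continuous_snd))).div_const 2)
    (HasCompactSupport.of_compactSpace _)

lemma g_int_eq :
    ∫ p : unitCircle × unitCircle, (1 + (inner ℝ (p.1:Plane) (p.2:Plane) : ℝ))/2 ∂(μ.prod μ)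
      = 1/2 + ‖∫ x, (x:Plane) ∂μ‖^2/2 := by
  set b : Plane := ∫ x, (x:Plane) ∂μ with hb
  rw [integral_prod _ (int_g μ)]
  have hin : ∀ x : Plane, ∫ y : unitCircle, (inner ℝ x (y:Plane) : ℝ) ∂μ = (inner ℝ x b : ℝ) :=
    fun x => integral_inner (int_coe μ) x
  have inner_step : ∀ x : unitCircle,
      (∫ y, (1 + (inner ℝ (x:Plane) (y:Plane) : ℝ))/2 ∂μ) = (1 + (inner ℝ (x:Plane) b : ℝ))/2 := by
    intro x
    rw [integral_div, integral_add (integrable_const _) (int_inner μ (x:Plane)),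
      integral_const, hin (x:Plane), probReal_univ]
    norm_num
  rw [integral_congr_ae (Filter.Eventually.of_forall inner_step)]
  have hcomm : ∀ x : unitCircle, (inner ℝ (x:Plane) b : ℝ) = (inner ℝ b (x:Plane) : ℝ) :=
    fun x => real_inner_comm _ _
  rw [integral_congr_ae (Filter.Eventually.of_forall (fun x => by rw [hcomm x]))]
  rw [integral_div, integral_add (integrable_const _) (int_inner μ b), integral_const, hin b,
    real_inner_self_eq_norm_sq, probReal_univ]
  norm_num
  ring

end aux


lemma backward_eq (p q : unitCircle) (hq : (q : Plane) = -(p : Plane)) :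
    (∫ x, ∫ y, ‖(x : Plane) + (y : Plane)‖ / 2
        ∂((2⁻¹ : ℝ≥0∞) • Measure.dirac p + (2⁻¹ : ℝ≥0∞) • Measure.dirac q)
        ∂((2⁻¹ : ℝ≥0∞) • Measure.dirac p + (2⁻¹ : ℝ≥0∞) • Measure.dirac q)) = 1 / 2 := by
  have hinner : ∀ x : unitCircle,
      (∫ y, ‖(x:Plane) + (y:Plane)‖/2
        ∂((2⁻¹ : ℝ≥0∞) • Measure.dirac p + (2⁻¹ : ℝ≥0∞) • Measure.dirac q))
      = (‖(x:Plane) + (p:Plane)‖/2 + ‖(x:Plane) + (q:Plane)‖/2)/2 := by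
    intro x
    exact integral_half_diracs p q (by fun_prop)
  rw [integral_congr_ae (Filter.Eventually.of_forall hinner),
    integral_half_diracs p q (by fun_prop)]
  have h2 : ‖(p:Plane) + (p:Plane)‖ = 2 := by
    have h' : (p:Plane) + (p:Plane) = (2:ℝ) • (p:Plane) := (two_smul ℝ _).symm
    rw [h', norm_smul, uc_norm]; simp
  have hq2 : ‖(q:Plane) + (q:Plane)‖ = 2 := by
    have h' : (q:Plane) + (q:Plane) = (2:ℝ) • (q:Plane) := (two_smul ℝ _).symm
    rw [h', norm_smul, uc_norm]; simp
  have hpq0 : ‖(p:Plane) + (q:Plane)‖ = 0 := by rw [hq]; simp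
  have hqp0 : ‖(q:Plane) + (p:Plane)‖ = 0 := by rw [hq]; simp
  rw [h2, hq2, hpq0, hqp0]
  norm_num

/-- **Minimal expected distance of a random chord to the origin.** For `X, Y` independent with
law `μ` on the unit circle, the expected distance of the line `aff(X,Y)` to the origin, namely
`∫∫ ‖x+y‖/2 dμ(x) dμ(y)`, is at least `1/2`; equality holds if and only if
`μ = (1/2)(δ_p + δ_{-p})` for some `p ∈ S¹`. -/
theorem expected_chord_distance_ge_half (μ : Measure unitCircle) [IsProbabilityMeasure μ] :
    (1 / 2 : ℝ) ≤ ∫ x, ∫ y, ‖(x : Plane) + (y : Plane)‖ / 2 ∂μ ∂μ ∧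
    ((∫ x, ∫ y, ‖(x : Plane) + (y : Plane)‖ / 2 ∂μ ∂μ) = 1 / 2 ↔
      ∃ p q : unitCircle, (q : Plane) = -(p : Plane) ∧
        μ = (2⁻¹ : ℝ≥0∞) • Measure.dirac p + (2⁻¹ : ℝ≥0∞) • Measure.dirac q) := by
  set b : Plane := ∫ x, (x:Plane) ∂μ with hb
  have hiter : (∫ x, ∫ y, ‖(x : Plane) + (y : Plane)‖ / 2 ∂μ ∂μ) =
      ∫ p : unitCircle × unitCircle, ‖(p.1:Plane) + (p.2:Plane)‖/2 ∂(μ.prod μ) :=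
    (integral_prod _ (int_f μ)).symm
  have hnn : (0 : unitCircle × unitCircle → ℝ) ≤ (fun p : unitCircle × unitCircle =>
      (‖(p.1:Plane) + (p.2:Plane)‖/2 - (1 + (inner ℝ (p.1:Plane) (p.2:Plane) : ℝ))/2)) :=
    fun p => sub_nonneg.2 (uc_le p.1 p.2)
  have hint : Integrable (fun p : unitCircle × unitCircle =>
      (‖(p.1:Plane) + (p.2:Plane)‖/2 - (1 + (inner ℝ (p.1:Plane) (p.2:Plane) : ℝ))/2))
      (μ.prod μ) := (int_f μ).sub (int_g μ)
  set D : ℝ := ∫ p : unitCircle × unitCircle,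
      (‖(p.1:Plane) + (p.2:Plane)‖/2 - (1 + (inner ℝ (p.1:Plane) (p.2:Plane) : ℝ))/2)
      ∂(μ.prod μ) with hD
  have hD0 : 0 ≤ D := integral_nonneg hnn
  have hsum : (∫ p : unitCircle × unitCircle, ‖(p.1:Plane) + (p.2:Plane)‖/2 ∂(μ.prod μ))
      = D + (1/2 + ‖b‖^2/2) := by
    rw [hD, integral_sub (int_f μ) (int_g μ), g_int_eq μ, ← hb]
    ring
  constructor
  · rw [hiter, hsum]; nlinarith [sq_nonneg ‖b‖]
  constructor
  · -- forward direction
    intro h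
    rw [hiter, hsum] at h
    have hDz : D = 0 ∧ ‖b‖^2 = 0 := by constructor <;> nlinarith [sq_nonneg ‖b‖]
    have hbz : b = 0 := by
      have h' := hDz.2
      rwa [pow_eq_zero_iff (two_ne_zero), norm_eq_zero] at h'
    have hae : (fun p : unitCircle × unitCircle =>
        (‖(p.1:Plane) + (p.2:Plane)‖/2 - (1 + (inner ℝ (p.1:Plane) (p.2:Plane) : ℝ))/2))
        =ᵐ[μ.prod μ] 0 := by
      refine (integral_eq_zero_iff_of_nonneg hnn hint).1 ?_
      rw [← hD]; exact hDz.1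
    have hae' : ∀ᵐ p : unitCircle × unitCircle ∂(μ.prod μ),
        (p.2:Plane) = (p.1:Plane) ∨ (p.2:Plane) = -(p.1:Plane) := by
      filter_upwards [hae] with p hp
      exact uc_eq_cases p.1 p.2 (sub_eq_zero.1 hp)
    set S : Set (unitCircle × unitCircle) :=
      {p | ¬ ((p.2:Plane) = (p.1:Plane) ∨ (p.2:Plane) = -(p.1:Plane))} with hSdef
    have hSm : MeasurableSet S := by
      have hclosed : IsClosed {p : unitCircle × unitCircle |
          (p.2:Plane) = (p.1:Plane) ∨ (p.2:Plane) = -(p.1:Plane)} :=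
        (isClosed_eq (continuous_subtype_val.comp continuous_snd)
            (continuous_subtype_val.comp continuous_fst)).union
          (isClosed_eq (continuous_subtype_val.comp continuous_snd)
            (continuous_subtype_val.comp continuous_fst).neg)
      exact hclosed.measurableSet.compl
    have hS0 : (μ.prod μ) S = 0 := by
      rw [Filter.eventually_iff, mem_ae_iff] at hae'
      exact hae'
    have hslice := (Measure.measure_prod_null hSm).1 hS0
    haveI : (ae μ).NeBot := ae_neBot.2 (IsProbabilityMeasure.ne_zero μ)
    obtain ⟨p, hp⟩ := hslice.exists
    have hqmem : -(p:Plane) ∈ unitCircle := by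
      simp only [unitCircle, mem_sphere_iff_norm, sub_zero, norm_neg]
      exact uc_norm p
    set q : unitCircle := ⟨-(p:Plane), hqmem⟩ with hqdef
    have hqc : (q : Plane) = -(p:Plane) := rfl
    have hpne : p ≠ q := by
      intro hval
      have heq : (p:Plane) = -(p:Plane) := by rw [← hqc, hval]
      have h2 : (2:ℝ) • (p:Plane) = 0 := by
        rw [two_smul]; nth_rewrite 2 [heq]; simp
      have hz : (p:Plane) = 0 := by
        rcases smul_eq_zero.1 h2 with h' | h'
        · norm_num at h'
        · exact h'
      have hn := uc_norm p
      rw [hz] at hn; simp at hn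
    have hcompl : μ ({p, q}ᶜ) = 0 := by
      refine measure_mono_null ?_ hp
      intro y hy
      simp only [Set.mem_compl_iff, Set.mem_insert_iff, Set.mem_singleton_iff] at hy
      push_neg at hy
      show (p, y) ∈ S
      simp only [hSdef, Set.mem_setOf_eq]
      rintro (h' | h')
      · exact hy.1 (Subtype.ext h')
      · exact hy.2 (Subtype.ext (h'.trans hqc.symm))
    have μdecomp := measure_two_point μ p q hpne hcompl
    have hbeq : b = (μ {p}).toReal • (p:Plane) + (μ {q}).toReal • (q:Plane) := by
      have h' := congrArg (fun ν : Measure unitCircle => ∫ x : unitCircle, (x:Plane) ∂ν) μdecomp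
      rw [hb, h',
        integral_add_measure
          ((integrable_dirac' continuous_subtype_val p).smul_measure (measure_ne_top μ _))
          ((integrable_dirac' continuous_subtype_val q).smul_measure (measure_ne_top μ _)),
        integral_smul_measure, integral_smul_measure, integral_dirac, integral_dirac]
    have hcoeff : (μ {p}).toReal = (μ {q}).toReal := by
      have h0 : ((μ {p}).toReal - (μ {q}).toReal) • (p:Plane) = 0 := by
        rw [sub_smul, ← hbz, hbeq, hqc, smul_neg]
        abel
      rcases smul_eq_zero.1 h0 with h' | h'
      · linarith [sub_eq_zero.1 h']
      · exfalso
        have hn := uc_norm p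
        rw [h'] at hn; simp at hn
    have hsum1 : μ {p} + μ {q} = 1 := by
      have h' := congrArg (fun ν : Measure unitCircle => ν Set.univ) μdecomp
      simp only [Measure.add_apply, Measure.smul_apply, smul_eq_mul,
        Measure.dirac_apply' _ MeasurableSet.univ, Set.indicator_of_mem (Set.mem_univ _),
        Pi.one_apply, mul_one, measure_univ] at h'
      exact h'.symm
    have hfin : μ {p} ≠ ⊤ := measure_ne_top μ _
    have hfin' : μ {q} ≠ ⊤ := measure_ne_top μ _
    have htr : (μ {p}).toReal = 1/2 := by
      have hadd : (μ {p}).toReal + (μ {q}).toReal = 1 := by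
        rw [← ENNReal.toReal_add hfin hfin', hsum1]; simp
      linarith [hcoeff]
    have hμp : μ {p} = 2⁻¹ := by
      refine (ENNReal.toReal_eq_toReal_iff' hfin (by simp)).1 ?_
      rw [htr]
      norm_num
    have hμq : μ {q} = 2⁻¹ := by
      refine (ENNReal.toReal_eq_toReal_iff' hfin' (by simp)).1 ?_
      rw [← hcoeff, htr]
      norm_num
    exact ⟨p, q, hqc, by rw [μdecomp, hμp, hμq]⟩
  · -- backward direction
    rintro ⟨p, q, hq, hμ⟩
    rw [hμ]
    exact backward_eq p q hq

end
end
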